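/- arXiv:1401.2335 — 4 statements merged into one kernel-verified Lean document; each statement's English description precedes it below -/
import Mathlib

section
/- For every n ≥ 0, the sets Col_n(q) for q in {1, …, 2^n} are pairwise distinct: if 1 ≤ q < r ≤ 2^n then Col_n(q) ≠ Col_n(r). Moreover, for n ≥ 1 and every q ≤ 2^{n-1}, one has Col_n(q) = Col_n(q + 2^{n-1}) ∪ {q}, and q does not belong to Col_n(q + 2^{n-1}). -/
/-- `op` is the Laver table operation on `{1, …, 2^n}`: it maps the set to itself,
satisfies `x * 1 = x + 1` for `x < 2^n`, `2^n * 1 = 1`, and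
`x * (y * 1) = (x * y) * (x * 1)`. -/
def IsLaverOp (n : ℕ) (op : ℕ → ℕ → ℕ) : Prop :=
  (∀ x y, 1 ≤ x → x ≤ 2 ^ n → 1 ≤ y → y ≤ 2 ^ n → 1 ≤ op x y ∧ op x y ≤ 2 ^ n) ∧
  (∀ x, 1 ≤ x → x < 2 ^ n → op x 1 = x + 1) ∧
  (op (2 ^ n) 1 = 1) ∧
  (∀ x y, 1 ≤ x → x ≤ 2 ^ n → 1 ≤ y → y ≤ 2 ^ n → op x (op y 1) = op (op x y) (op x 1))

/-- The `q`-th column of the Laver table: the set of values `p *_n q` for `1 ≤ p ≤ 2^n`. -/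
def laverCol (n : ℕ) (op : ℕ → ℕ → ℕ) (q : ℕ) : Set ℕ :=
  {r | ∃ p, 1 ≤ p ∧ p ≤ 2 ^ n ∧ op p q = r}

namespace Laver


/-- reduction to `[1, m]`: representative of `z` mod `m`. -/
def phi (m z : ℕ) : ℕ := (z - 1) % m + 1

/-- Laver table with fuel `k`: valid for rows `x` with `N - x ≤ k`. -/
def A (N : ℕ) : ℕ → ℕ → ℕ → ℕ
  | 0, _, y => y
  | (k+1), x, y => if N ≤ x then y else (fun t => A N k t (x+1))^[y - 1] (x + 1)

/-- the `N = 2^n` Laver table operation. -/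
def lav (N x y : ℕ) : ℕ := A N N x y

lemma A_top {N : ℕ} (k x y : ℕ) (h : N ≤ x) : A N k x y = y := by
  cases k with
  | zero => rfl
  | succ k => simp [A, h]

lemma A_range {N : ℕ} : ∀ k x y, x < N → N - x ≤ k → 1 ≤ y →
    x < A N k x y ∧ A N k x y ≤ N := by
  intro k
  induction k with
  | zero => intro x y hx hk _; omega
  | succ k ih =>
    intro x y hx hk hy
    have hnx : ¬ N ≤ x := not_le.2 hx
    rw [A, if_neg hnx]
    set g : ℕ → ℕ := fun t => A N k t (x+1) with hg
    have key : ∀ j, x < g^[j] (x+1) ∧ g^[j] (x+1) ≤ N := by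
      intro j
      induction j with
      | zero =>
        simp only [Function.iterate_zero, id]
        omega
      | succ j ihj =>
        rw [Function.iterate_succ_apply']
        rcases ihj with ⟨h1, h2⟩
        rcases eq_or_lt_of_le h2 with he | hlt
        · rw [hg]; simp only []
          rw [A_top k _ _ (le_of_eq he.symm)]
          exact ⟨Nat.lt_succ_self x, hx⟩
        · have := ih (g^[j] (x+1)) (x+1) hlt (by omega) (by omega)
          exact ⟨lt_trans h1 this.1, this.2⟩
    exact key (y - 1)

lemma A_stable {N : ℕ} : ∀ k x y, x < N → N - x ≤ k →
    A N (k+1) x y = A N k x y := by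
  intro k
  induction k with
  | zero => intro x y hx hk; omega
  | succ k ih =>
    intro x y hx hk
    have hnx : ¬ N ≤ x := not_le.2 hx
    rw [A, A, if_neg hnx, if_neg hnx]
    set g1 : ℕ → ℕ := fun t => A N (k+1) t (x+1) with hg1
    set g2 : ℕ → ℕ := fun t => A N k t (x+1) with hg2
    have key : ∀ j, g1^[j] (x+1) = g2^[j] (x+1) ∧ x < g2^[j] (x+1) ∧ g2^[j] (x+1) ≤ N := by
      intro j
      induction j with
      | zero => exact ⟨rfl, Nat.lt_succ_self x, hx⟩
      | succ j ihj =>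
        rw [Function.iterate_succ_apply', Function.iterate_succ_apply']
        rcases ihj with ⟨he, h1, h2⟩
        rw [he]
        set t := g2^[j] (x+1) with ht
        rcases eq_or_lt_of_le h2 with hE | hlt
        · constructor
          · rw [hg1, hg2]; simp only []
            rw [A_top (k+1) _ _ (le_of_eq hE.symm), A_top k _ _ (le_of_eq hE.symm)]
          · rw [hg2]; simp only []
            rw [A_top k _ _ (le_of_eq hE.symm)]
            exact ⟨Nat.lt_succ_self x, hx⟩
        · have hs := ih t (x+1) hlt (by omega)
          have hr := A_range k t (x+1) hlt (by omega) (by omega)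
          exact ⟨hs, lt_trans h1 hr.1, hr.2⟩
    exact (key (y-1)).1

lemma A_of_le {N : ℕ} (k k' x y : ℕ) (hx : x < N) (hk : N - x ≤ k) (hkk : k ≤ k') :
    A N k' x y = A N k x y := by
  induction k' with
  | zero => omega
  | succ k' ih =>
    rcases Nat.lt_or_ge k (k'+1) with h | h
    · have : k ≤ k' := by omega
      rw [A_stable k' x y hx (le_trans hk this), ih this]
    · have : k = k' + 1 := le_antisymm hkk h
      rw [this]

lemma lav_id {N x : ℕ} (h : N ≤ x) (y : ℕ) : lav N x y = y := A_top N x y h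

lemma lav_range {N x y : ℕ} (hx : x < N) (hy : 1 ≤ y) :
    x < lav N x y ∧ lav N x y ≤ N :=
  A_range N x y hx (Nat.sub_le N x) hy

lemma lav_one {N x : ℕ} (hx : x < N) : lav N x 1 = x + 1 := by
  have hN : 1 ≤ N := by omega
  obtain ⟨K, rfl⟩ : ∃ K, N = K + 1 := ⟨N - 1, by omega⟩
  unfold lav
  rw [A, if_neg (not_le.2 hx)]
  rfl

lemma lav_succ {N x y : ℕ} (hx : x < N) (hy : 1 ≤ y) :
    lav N x (y + 1) = lav N (lav N x y) (x + 1) := by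
  obtain ⟨K, hK⟩ : ∃ K, N = K + 1 := ⟨N - 1, by omega⟩
  subst hK
  have hnx : ¬ K + 1 ≤ x := not_le.2 hx
  show A (K+1) (K+1) x (y+1) = A (K+1) (K+1) (A (K+1) (K+1) x y) (x+1)
  rw [A, if_neg hnx]
  conv_lhs => rw [show y + 1 - 1 = (y - 1) + 1 by omega, Function.iterate_succ_apply']
  have hxy : A (K+1) (K+1) x y = (fun t => A (K+1) K t (x+1))^[y-1] (x+1) := by
    rw [A, if_neg hnx]
  rw [← hxy]
  set t := A (K+1) (K+1) x y with ht
  have hr : x < t ∧ t ≤ K + 1 := lav_range hx hy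
  rcases eq_or_lt_of_le hr.2 with hE | hlt
  · rw [A_top K _ _ (le_of_eq hE.symm), A_top (K+1) _ _ (le_of_eq hE.symm)]
  · exact (A_of_le K (K+1) t (x+1) hlt (by omega) (by omega)).symm




section PhiLemmas

lemma phi_pos (m z : ℕ) : 1 ≤ phi m z := Nat.succ_le_succ (Nat.zero_le _)

lemma phi_le {m : ℕ} (hm : 1 ≤ m) (z : ℕ) : phi m z ≤ m :=
  Nat.succ_le_of_lt (Nat.mod_lt _ (by omega))

lemma phi_eq_self {m z : ℕ} (h1 : 1 ≤ z) (h2 : z ≤ m) : phi m z = z := by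
  unfold phi
  rw [Nat.mod_eq_of_lt (by omega)]
  omega

lemma phi_add {m z : ℕ} (h1 : 1 ≤ z) : phi m (z + m) = phi m z := by
  unfold phi
  rw [show z + m - 1 = (z - 1) + m by omega, Nat.add_mod_right]

lemma phi_of_lt {m z : ℕ} (h1 : m < z) (h2 : z ≤ 2 * m) : phi m z = z - m := by
  unfold phi
  rw [show z - 1 = (z - m - 1) + m by omega, Nat.add_mod_right,
    Nat.mod_eq_of_lt (by omega)]
  omega

lemma phi_phi {d m z : ℕ} (h : d ∣ m) : phi d (phi m z) = phi d z := by
  unfold phi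
  rw [Nat.add_sub_cancel, Nat.mod_mod_of_dvd _ h]

lemma phi_mod {m y z : ℕ} (h : (y - 1) % m = (z - 1) % m) : phi m y = phi m z := by
  unfold phi; omega

lemma phi_eq_top_iff {m z : ℕ} (hm : 1 ≤ m) (hz : 1 ≤ z) :
    phi m z = m ↔ m ∣ z := by
  constructor
  · intro h
    have h1 := Nat.div_add_mod (z - 1) m
    have h2 : (z - 1) % m = m - 1 := by unfold phi at h; omega
    refine ⟨(z - 1) / m + 1, ?_⟩
    rw [Nat.mul_add, Nat.mul_one]
    omega
  · rintro ⟨c, rfl⟩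
    have hc : 1 ≤ c := by
      rcases Nat.eq_zero_or_pos c with h | h
      · subst h; simp at hz
      · exact h
    obtain ⟨c', rfl⟩ : ∃ c', c = c' + 1 := ⟨c - 1, by omega⟩
    unfold phi
    rw [show m * (c' + 1) - 1 = (m - 1) + c' * m by
      rw [Nat.mul_add, Nat.mul_one, Nat.mul_comm]; omega]
    rw [Nat.add_mul_mod_self_right, Nat.mod_eq_of_lt (by omega)]
    omega

lemma phi_range {m z : ℕ} (hm : 1 ≤ m) (hz : 1 ≤ z) :
    (phi m z = z ∧ z ≤ m) ∨ (phi m z + m ≤ z) := by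
  rcases le_or_gt z m with h | h
  · exact Or.inl ⟨phi_eq_self hz h, h⟩
  · right
    have h1 := Nat.div_add_mod (z - 1) m
    have h2 : 1 ≤ (z - 1) / m := by
      rw [Nat.le_div_iff_mul_le (by omega)]
      omega
    unfold phi
    have : m * 1 ≤ m * ((z-1)/m) := Nat.mul_le_mul_left m h2
    omega

/-- if two values of `[1, 2m]` have the same `phi`, bigger = smaller + m -/
lemma phi_inj {m q r : ℕ} (hm : 1 ≤ m) (h1 : 1 ≤ q) (h2 : q < r) (h3 : r ≤ 2 * m)
    (h : phi m q = phi m r) : r = q + m := by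
  have hd : (r - 1) % m = (q - 1) % m := by unfold phi at h; omega
  have e1 := Nat.div_add_mod (r - 1) m
  have e2 := Nat.div_add_mod (q - 1) m
  have l1 : (r - 1) / m < 2 := by
    rw [Nat.div_lt_iff_lt_mul (by omega)]; omega
  have l2 : (q - 1) / m < 2 := by
    rw [Nat.div_lt_iff_lt_mul (by omega)]; omega
  interval_cases h1 : (r - 1) / m <;> interval_cases h2 : (q - 1) / m <;> omega

end PhiLemmas


section Per

attribute [local instance] Classical.propDecidable

lemma hit_exists' {N x : ℕ} (hx : x < N) :
    ∃ y, 0 < y ∧ y ≤ N - x ∧ lav N x y = N := by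
  have key : ∀ j, 1 ≤ j → (∃ y, 0 < y ∧ y ≤ j ∧ lav N x y = N) ∨ x + j ≤ lav N x j := by
    intro j
    induction j with
    | zero => omega
    | succ j ih =>
      intro _
      rcases Nat.eq_zero_or_pos j with hj | hj
      · subst hj
        right; rw [lav_one hx]
      · rcases ih hj with ⟨y, hy⟩ | hge
        · exact Or.inl ⟨y, hy.1, by omega, hy.2.2⟩
        · rcases eq_or_lt_of_le (lav_range hx hj).2 with hE | hlt
          · exact Or.inl ⟨j, hj, by omega, hE⟩
          · right
            rw [lav_succ hx hj]
            have := (lav_range hlt (by omega : (1:ℕ) ≤ x + 1)).1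
            omega
  have hNx : 1 ≤ N - x := by omega
  rcases key (N - x) hNx with ⟨y, hy⟩ | hge
  · exact ⟨y, hy⟩
  · have hle := (lav_range hx hNx).2
    exact ⟨N - x, hNx, le_refl _, by omega⟩

lemma hit_exists {N x : ℕ} (hx : x < N) : ∃ y, 0 < y ∧ lav N x y = N := by
  obtain ⟨y, h1, _, h3⟩ := hit_exists' hx
  exact ⟨y, h1, h3⟩

noncomputable def per (N x : ℕ) : ℕ :=
  if h : ∃ y, 0 < y ∧ lav N x y = N then Nat.find h else 0

lemma per_spec {N x : ℕ} (hx : x < N) :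
    0 < per N x ∧ lav N x (per N x) = N := by
  have h := hit_exists hx
  unfold per
  rw [dif_pos h]
  exact Nat.find_spec h

lemma per_pos {N x : ℕ} (hx : x < N) : 0 < per N x := (per_spec hx).1

lemma lav_per {N x : ℕ} (hx : x < N) : lav N x (per N x) = N := (per_spec hx).2

lemma per_min {N x y : ℕ} (hx : x < N) (h1 : 0 < y) (h2 : y < per N x) :
    lav N x y ≠ N := by
  have h := hit_exists hx
  intro hc
  have := Nat.find_min h (show y < Nat.find h by
    unfold per at h2; rwa [dif_pos h] at h2)
  exact this ⟨h1, hc⟩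

lemma lav_period {N x : ℕ} (hx : x < N) :
    ∀ y, 1 ≤ y → lav N x (y + per N x) = lav N x y := by
  intro y hy
  induction y with
  | zero => omega
  | succ y ih =>
    rcases Nat.eq_zero_or_pos y with hy0 | hy0
    · subst hy0
      have hper := per_pos hx
      rw [show 0 + 1 + per N x = per N x + 1 by omega,
        lav_succ hx (per_pos hx), lav_per hx, lav_id (le_refl N), lav_one hx]
    · rw [show y + 1 + per N x = (y + per N x) + 1 by omega,
        lav_succ hx (by omega : 1 ≤ y + per N x), ih hy0, ← lav_succ hx hy0]

lemma lav_period_mul {N x : ℕ} (hx : x < N) :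
    ∀ k y, 1 ≤ y → lav N x (y + k * per N x) = lav N x y := by
  intro k
  induction k with
  | zero => intro y hy; simp
  | succ k ih =>
    intro y hy
    rw [show y + (k+1) * per N x = (y + k * per N x) + per N x by ring,
      lav_period hx _ (by omega), ih y hy]

lemma lav_phi_per {N x y : ℕ} (hx : x < N) (hy : 1 ≤ y) :
    lav N x y = lav N x (phi (per N x) y) := by
  have hper := per_pos hx
  have h1 := Nat.div_add_mod (y - 1) (per N x)
  have he : y = phi (per N x) y + ((y-1) / per N x) * per N x := by
    unfold phi
    rw [Nat.mul_comm]
    omega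
  conv_lhs => rw [he]
  rw [lav_period_mul hx _ _ (phi_pos _ _)]

lemma hit_iff {N x y : ℕ} (hx : x < N) (hy : 1 ≤ y) :
    lav N x y = N ↔ per N x ∣ y := by
  have hper := per_pos hx
  constructor
  · intro h
    rw [lav_phi_per hx hy] at h
    have hle := phi_le hper y
    rcases eq_or_lt_of_le hle with hE | hlt
    · exact (phi_eq_top_iff hper hy).1 hE
    · exact absurd h (per_min hx (phi_pos _ _) hlt)
  · intro h
    rw [lav_phi_per hx hy, (phi_eq_top_iff hper hy).2 h]
    exact lav_per hx

/-- values in the same congruence class mod a multiple of the period agree -/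
lemma lav_eq_of_period_dvd {N x y d : ℕ} (hx : x < N) (hy : 1 ≤ y)
    (hd : per N x ∣ d) : lav N x (y + d) = lav N x y := by
  obtain ⟨c, rfl⟩ := hd
  rw [show y + per N x * c = y + c * per N x by ring]
  exact lav_period_mul hx c y hy

end Per

section Helpers

lemma per_le {N x : ℕ} (hx : x < N) : per N x ≤ N - x := by
  obtain ⟨y, h1, h2, h3⟩ := hit_exists' hx
  have h := hit_exists hx
  unfold per
  rw [dif_pos h]
  exact le_trans (Nat.find_min' h ⟨h1, h3⟩) h2

lemma phi_succ_of_lt {m z : ℕ} (hz : 1 ≤ z) (h : phi m z < m) :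
    phi m (z + 1) = phi m z + 1 := by
  have e := Nat.div_add_mod (z - 1) m
  rw [Nat.mul_comm] at e
  set r := (z - 1) % m with hr
  set q := (z - 1) / m with hq
  have hrm : r + 1 < m := by unfold phi at h; omega
  have hz1 : z + 1 - 1 = r + 1 + q * m := by omega
  unfold phi
  rw [hz1, Nat.add_mul_mod_self_right, Nat.mod_eq_of_lt hrm]

lemma phi_succ_of_top {m z : ℕ} (hm : 1 ≤ m) (hz : 1 ≤ z) (h : phi m z = m) :
    phi m (z + 1) = 1 := by
  obtain ⟨c, hc⟩ := (phi_eq_top_iff hm hz).1 h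
  unfold phi
  rw [show z + 1 - 1 = z by omega, hc, Nat.mul_mod_right]

lemma phi_one_of_dvd {d z : ℕ} (h : d ∣ z - 1) : phi d z = 1 := by
  obtain ⟨c, hc⟩ := h
  unfold phi
  rw [hc, Nat.mul_mod_right]

lemma phi_fiber {m v w : ℕ} (h1 : 1 ≤ v) (h2 : v ≤ 2 * m) (h : phi m v = w) :
    v = w ∨ v = w + m := by
  rcases le_or_gt v m with hv | hv
  · left; rw [← h, phi_eq_self h1 hv]
  · right; rw [← h, phi_of_lt hv h2]; omega

lemma pow2_dvd_imp {d n : ℕ} (h : d ∣ 2 ^ n) : ∃ k, k ≤ n ∧ d = 2 ^ k := by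
  obtain ⟨k, hk, he⟩ := (Nat.dvd_prime_pow Nat.prime_two).mp h
  exact ⟨k, hk, he⟩

lemma pow2_dvd_half {d n : ℕ} (hn : 1 ≤ n) (h : d ∣ 2 ^ n) (hne : d ≠ 2 ^ n) :
    d ∣ 2 ^ (n - 1) := by
  obtain ⟨k, hk, rfl⟩ := pow2_dvd_imp h
  have : k ≠ n := fun hc => hne (by rw [hc])
  exact pow_dvd_pow 2 (by omega)

lemma two_pow_eq {n : ℕ} (hn : 1 ≤ n) : 2 ^ n = 2 * 2 ^ (n - 1) := by
  conv_lhs => rw [show n = (n - 1) + 1 by omega]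
  rw [pow_succ, Nat.mul_comm]

lemma half_dvd {n : ℕ} (hn : 1 ≤ n) : 2 ^ (n - 1) ∣ 2 ^ n :=
  pow_dvd_pow 2 (by omega)

end Helpers

section Props

def Hom (n : ℕ) : Prop := ∀ x, 1 ≤ x → x ≤ 2^n → ∀ y, 1 ≤ y →
  phi (2^(n-1)) (lav (2^n) x y) = lav (2^(n-1)) (phi (2^(n-1)) x) (phi (2^(n-1)) y)
def RowH (n : ℕ) : Prop := ∀ y, 1 ≤ y →
  lav (2^n) (2^(n-1)) y = phi (2^(n-1)) y + 2^(n-1)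
def UE (n : ℕ) : Prop := ∀ x, 1 ≤ x → x < 2^(n-1) → ∀ y, 1 ≤ y →
  lav (2^n) (x + 2^(n-1)) y = lav (2^(n-1)) x y + 2^(n-1)
def Per2Pi (n : ℕ) : Prop := ∀ x, 1 ≤ x → x < 2^(n-1) →
  per (2^n) x ∣ 2 * per (2^(n-1)) x
def PerDiv (n : ℕ) : Prop := ∀ x, 1 ≤ x → x < 2^n → per (2^n) x ∣ 2^(n-1)
def T1 (n : ℕ) : Prop := ∀ x, 1 ≤ x → x ≤ 2^n → lav (2^n) x (2^n) = 2^n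
def HomIter (n : ℕ) : Prop := ∀ j, j ≤ n → ∀ x, 1 ≤ x → x ≤ 2^n → ∀ y, 1 ≤ y →
  phi (2^j) (lav (2^n) x y) = lav (2^j) (phi (2^j) x) (phi (2^j) y)
def W (n : ℕ) : Prop := ∀ x d, 1 ≤ x → x < 2^n → d ∣ 2^n → 2^n < x + 2*d →
  per (2^n) x ∣ 2*d
def W' (n : ℕ) : Prop := ∀ x d, 1 ≤ x → x < 2^(n-1) → d ∣ 2^(n-1) →
  2^(n-1) < x + 2*d → per (2^n) x ∣ 2*d
def SP (n : ℕ) : Prop := ∀ d z s t, d ∣ 2^n → d ∣ z - 1 → s + 1 < d → 1 ≤ z →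
  z ≤ 2^n → 1 ≤ t → t ≤ 2^n → lav (2^n) t z = 2^n - s → t = 2^n - 1 - s
def MP (n : ℕ) : Prop := ∀ p s, 1 ≤ p → p < 2^n → s < Nat.gcd p (2^n) →
  lav (2^n) p (2^(n-1) - s) = 2^n - s
def FixP (n : ℕ) : Prop := ∀ p q, 1 ≤ p → p ≤ 2^n → 1 ≤ q → q ≤ 2^n →
  (lav (2^n) p q = q ↔ 2^n - q < Nat.gcd p (2^n))
def LCol (n q : ℕ) : Set ℕ := {r | ∃ p, 1 ≤ p ∧ p ≤ 2^n ∧ lav (2^n) p q = r}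
def Distinct (n : ℕ) : Prop := ∀ q r, 1 ≤ q → q < r → r ≤ 2^n →
  LCol n q ≠ LCol n r

structure PKG (n : ℕ) : Prop where
  t1 : T1 n
  rowh : 1 ≤ n → RowH n
  ue : 1 ≤ n → UE n
  perdiv : 1 ≤ n → PerDiv n
  homiter : HomIter n
  w : W n
  s : SP n
  m : 1 ≤ n → MP n
  fixi : FixP n
  distinct : Distinct n

end Props

section HomStep

lemma hom_step {n : ℕ} (hn : 1 ≤ n) (P : PKG (n-1)) : Hom n := by
  intro x hx1 hxN y hy
  set N := 2^n with hN
  set h := 2^(n-1) with hh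
  have hNh : N = 2 * h := two_pow_eq hn
  have hh1 : 1 ≤ h := Nat.one_le_two_pow
  -- strong statement with fuel on N - x
  suffices H : ∀ k x, 1 ≤ x → x ≤ N → N - x ≤ k → ∀ y, 1 ≤ y →
      phi h (lav N x y) = lav h (phi h x) (phi h y) by
    exact H N x hx1 hxN (by omega) y hy
  clear hx1 hxN hy x y
  intro k
  induction k with
  | zero =>
    intro x hx1 hxN hk y hy
    have hxN' : x = N := by omega
    subst hxN'
    have hpN : phi h N = h := (phi_eq_top_iff hh1 Nat.one_le_two_pow).2 ⟨2, by omega⟩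
    rw [lav_id (le_refl N), hpN, lav_id (le_refl h)]
  | succ k ih =>
    intro x hx1 hxN hk y hy
    rcases eq_or_lt_of_le hxN with hxN' | hxlt
    · subst hxN'
      have hpN : phi h N = h := (phi_eq_top_iff hh1 Nat.one_le_two_pow).2 ⟨2, by omega⟩
      rw [lav_id (le_refl N), hpN, lav_id (le_refl h)]
    · -- x < N
      induction y with
      | zero => omega
      | succ y ihy =>
        have hpx1 : 1 ≤ phi h x := phi_pos _ _
        have hpxh : phi h x ≤ h := phi_le hh1 x
        rcases Nat.eq_zero_or_pos y with hy0 | hy0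
        · -- y = 1
          subst hy0
          rw [lav_one hxlt]
          rw [show phi h (0+1) = 1 from phi_eq_self (le_refl 1) hh1]
          rcases eq_or_lt_of_le hpxh with hE | hlt
          · -- phi h x = h, so x = h
            have : x = h ∨ x = 2 * h := by
              have := phi_fiber hx1 (by omega) hE
              omega
            have hxh : x = h := by omega
            rw [hE, lav_id (le_refl h), hxh, phi_succ_of_top hh1 (by omega)
              (by rw [phi_eq_self hh1 (le_refl h)])]
          · rw [lav_one hlt, phi_succ_of_lt hx1 hlt]
        · -- y ≥ 1 step
          have hrange := lav_range hxlt hy0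
          set t := lav N x y with ht
          have step : lav N x (y + 1) = lav N t (x+1) := lav_succ hxlt hy0
          rw [step]
          have houter : phi h (lav N t (x+1)) = lav h (phi h t) (phi h (x+1)) :=
            ih t (by omega) hrange.2 (by omega) (x+1) (by omega)
          rw [houter, ihy hy0]
          have hpy1 : 1 ≤ phi h y := phi_pos _ _
          have hpyh : phi h y ≤ h := phi_le hh1 y
          rcases eq_or_lt_of_le hpxh with hxE | hxlt2
          · -- phi h x = h hence x = h
            have hxh : x = h := by
              have := phi_fiber hx1 (by omega) hxE
              omega
            rw [hxE, lav_id (le_refl h), lav_id (le_refl h)]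
            have hpx1' : phi h (x+1) = 1 := by
              rw [hxh]
              exact phi_succ_of_top hh1 (by omega) (phi_eq_self hh1 (le_refl h))
            rw [hpx1']
            rcases eq_or_lt_of_le hpyh with hyE | hylt
            · rw [hyE, lav_id (le_refl h), phi_succ_of_top hh1 hy0 hyE]
            · rw [lav_one hylt, phi_succ_of_lt hy0 hylt]
          · -- phi h x < h
            have hpxs : phi h (x+1) = phi h x + 1 := phi_succ_of_lt hx1 hxlt2
            rw [hpxs]
            rcases eq_or_lt_of_le hpyh with hyE | hylt
            · -- phi h y = h
              rw [hyE, phi_succ_of_top hh1 hy0 hyE]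
              rw [P.t1 (phi h x) hpx1 hpxh, lav_id (le_refl h), lav_one hxlt2]
            · rw [phi_succ_of_lt hy0 hylt,
                lav_succ hxlt2 hpy1]

end HomStep

section StepLemmas

lemma lav_phi_mod {N x m y : ℕ} (hx : x < N) (hdvd : per N x ∣ m) (hy : 1 ≤ y) :
    lav N x y = lav N x (phi m y) := by
  rcases Nat.eq_zero_or_pos m with hm | hm
  · subst hm; unfold phi
    rw [Nat.mod_zero, show y - 1 + 1 = y by omega]
  have e := Nat.div_add_mod (y - 1) m
  rw [Nat.mul_comm] at e
  have he : y = phi m y + ((y - 1) / m) * m := by unfold phi; omega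
  conv_lhs => rw [he]
  exact lav_eq_of_period_dvd hx (phi_pos _ _) (Dvd.dvd.mul_left hdvd _)

lemma hom_small {n : ℕ} (hom : Hom n) {x y : ℕ} (hx1 : 1 ≤ x) (hx : x ≤ 2^(n-1))
    (hy1 : 1 ≤ y) (hyh : y ≤ 2^(n-1)) :
    phi (2^(n-1)) (lav (2^n) x y) = lav (2^(n-1)) x y := by
  have hhN : (2:ℕ)^(n-1) ≤ 2^n := Nat.pow_le_pow_right (by omega) (by omega)
  rw [hom x hx1 (le_trans hx hhN) y hy1, phi_eq_self hx1 hx, phi_eq_self hy1 hyh]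

lemma rowh_step {n : ℕ} (hn : 1 ≤ n) (hom : Hom n) : RowH n := by
  intro y hy
  set N := 2^n with hN
  set h := 2^(n-1) with hh
  have hNh : N = 2 * h := two_pow_eq hn
  have hh1 : 1 ≤ h := Nat.one_le_two_pow
  have hhN : h < N := by omega
  induction y with
  | zero => omega
  | succ y ihy =>
    rcases Nat.eq_zero_or_pos y with hy0 | hy0
    · subst hy0
      rw [lav_one hhN, phi_eq_self (le_refl 1) hh1]
      omega
    · have hc := ihy hy0
      have step : lav N h (y + 1) = lav N (lav N h y) (h + 1) := lav_succ hhN hy0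
      have hpy1 : 1 ≤ phi h y := phi_pos _ _
      have hpyh : phi h y ≤ h := phi_le hh1 y
      rcases eq_or_lt_of_le hpyh with hyE | hylt
      · -- phi h y = h, previous value is N
        rw [step, hc, hyE, show h + h = N by omega, lav_id (le_refl N),
          phi_succ_of_top hh1 hy0 hyE]
        omega
      · -- phi h y < h
        have hcN : lav N h y < N := by omega
        have hch : h < lav N h y := by omega
        rw [step]
        set v := lav N (lav N h y) (h + 1) with hv
        have hvr := lav_range hcN (by omega : 1 ≤ h + 1)
        have hphiv : phi h v = phi h y + 1 := by
          rw [hv, hom (lav N h y) (by omega) (by omega) (h+1) (by omega)]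
          have h1 : phi h (lav N h y) = phi h y := by
            rw [hc, phi_add hpy1, phi_eq_self hpy1 hpyh]
          have h2 : phi h (h + 1) = 1 := by
            rw [phi_of_lt (by omega) (by omega)]; omega
          rw [h1, h2, lav_one hylt]
        have := phi_fiber (by omega : 1 ≤ v) (by omega : v ≤ 2 * h) hphiv
        rw [phi_succ_of_lt hy0 hylt]
        omega

lemma ue_step {n : ℕ} (hn : 1 ≤ n) (hom : Hom n) : UE n := by
  intro x hx1 hxh y hy
  set N := 2^n with hN
  set h := 2^(n-1) with hh
  have hNh : N = 2 * h := two_pow_eq hn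
  have hh1 : 1 ≤ h := Nat.one_le_two_pow
  have hxN : x + h < N := by omega
  induction y with
  | zero => omega
  | succ y ihy =>
    rcases Nat.eq_zero_or_pos y with hy0 | hy0
    · subst hy0
      rw [lav_one hxN, lav_one (by omega : x < h)]
      omega
    · have hc := ihy hy0
      have hbr := lav_range (show x < h by omega) hy0
      set b := lav h x y with hb
      have step : lav N (x + h) (y + 1) = lav N (lav N (x+h) y) (x + h + 1) :=
        lav_succ hxN hy0
      have steph : lav h x (y + 1) = lav h (lav h x y) (x + 1) :=
        lav_succ (by omega : x < h) hy0
      rcases eq_or_lt_of_le hbr.2 with hbE | hblt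
      · -- b = h
        rw [step, hc, hbE, show h + h = N by omega, lav_id (le_refl N),
          steph, ← hb, hbE, lav_id (le_refl h)]
        omega
      · -- b < h
        have hcN : lav N (x+h) y < N := by omega
        rw [step, hc]
        set v := lav N (b + h) (x + h + 1) with hv
        have hvr := lav_range (show b + h < N by omega) (by omega : 1 ≤ x + h + 1)
        have hphiv : phi h v = lav h b (x + 1) := by
          rw [hv, hom (b + h) (by omega) (by omega) (x + h + 1) (by omega)]
          have h1 : phi h (b + h) = b := by
            rw [phi_add (by omega), phi_eq_self (by omega) (by omega)]
          have h2 : phi h (x + h + 1) = x + 1 := by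
            rw [phi_of_lt (by omega) (by omega)]; omega
          rw [h1, h2]
        have hb'r := lav_range hblt (by omega : 1 ≤ x + 1)
        have := phi_fiber (by omega : 1 ≤ v) (by omega : v ≤ 2 * h) hphiv
        rw [steph, ← hb]
        omega

/-- upper rows have the same period as the corresponding lower-level row -/
lemma per_ue {n : ℕ} (hn : 1 ≤ n) (ue : UE n) :
    ∀ x, 2^(n-1) < x → x < 2^n → per (2^n) x = per (2^(n-1)) (x - 2^(n-1)) := by
  intro x hhx hxN
  have hNh : 2^n = 2 * 2^(n-1) := two_pow_eq hn
  have hh1 : 1 ≤ 2^(n-1) := Nat.one_le_two_pow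
  have hx' : x - 2^(n-1) < 2^(n-1) := by omega
  have hx'1 : 1 ≤ x - 2^(n-1) := by omega
  have hxe : (x - 2^(n-1)) + 2^(n-1) = x := by omega
  have hA : lav (2^n) x (per (2^(n-1)) (x - 2^(n-1))) = 2^n := by
    have := ue (x - 2^(n-1)) hx'1 hx' (per (2^(n-1)) (x - 2^(n-1))) (per_pos hx')
    rw [hxe] at this
    rw [this, lav_per hx']
    omega
  have hB : lav (2^(n-1)) (x - 2^(n-1)) (per (2^n) x) = 2^(n-1) := by
    have := ue (x - 2^(n-1)) hx'1 hx' (per (2^n) x) (per_pos hxN)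
    rw [hxe] at this
    rw [lav_per hxN] at this
    omega
  exact Nat.dvd_antisymm
    ((hit_iff hxN (per_pos hx')).1 hA)
    ((hit_iff hx' (per_pos hxN)).1 hB)

lemma per2pi_step {n : ℕ} (hn : 1 ≤ n) (hom : Hom n) (rowh : RowH n) :
    Per2Pi n := by
  intro x hx1 hxh
  set N := 2^n with hN
  set h := 2^(n-1) with hh
  have hNh : N = 2 * h := two_pow_eq hn
  have hh1 : 1 ≤ h := Nat.one_le_two_pow
  have hxN : x < N := by omega
  set pi := per h x with hpi
  have hpi1 : 0 < pi := per_pos hxh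
  have hpile : pi ≤ h - x := per_le hxh
  have hbpi : lav h x pi = h := lav_per hxh
  have haphi : phi h (lav N x pi) = h := by
    rw [hom_small hom hx1 (by omega) hpi1 (by omega), hbpi]
  have har := lav_range hxN hpi1
  have hfib := phi_fiber (by omega : 1 ≤ lav N x pi) (by omega) haphi
  rcases hfib with hfa | hfa
  · -- a_pi = h : period doubles
    have walk : ∀ j, 1 ≤ j → j ≤ pi →
        lav N x (pi + j) = phi h (lav N x j) + h := by
      intro j hj1
      induction j with
      | zero => omega
      | succ j ihj =>
        intro hjle
        rcases Nat.eq_zero_or_pos j with hj0 | hj0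
        · subst hj0
          rw [lav_succ hxN hpi1, hfa, rowh (x+1) (by omega), lav_one hxN,
            phi_eq_self (by omega) (by omega)]
        · have hw := ihj (by omega) (by omega)
          have hbj : lav h x j ≠ h := by
            intro hEq
            have hdvd := (hit_iff hxh hj0).1 hEq
            have := Nat.le_of_dvd hj0 hdvd
            omega
          have hphiaj : phi h (lav N x j) = lav h x j :=
            hom_small hom hx1 (by omega) hj0 (by omega)
          have hbjle : lav h x j ≤ h := (lav_range hxh hj0).2
          have hpp1 := phi_pos h (lav N x j)
          have hm : h < lav N x (pi + j) := by omega
          have hmN : lav N x (pi + j) < N := by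
            rw [hw, hphiaj]; omega
          have step : lav N x (pi + (j+1)) = lav N (lav N x (pi + j)) (x + 1) := by
            rw [show pi + (j + 1) = (pi + j) + 1 by omega]
            exact lav_succ hxN (by omega)
          have stepj : lav N x (j+1) = lav N (lav N x j) (x + 1) := lav_succ hxN hj0
          set v := lav N (lav N x (pi + j)) (x + 1) with hv
          have hvr := lav_range hmN (by omega : 1 ≤ x + 1)
          have hphim : phi h (lav N x (pi + j)) = lav h x j := by
            rw [hw, hphiaj, phi_add (by omega), phi_eq_self (by omega) hbjle]
          have haj := lav_range hxN hj0
          have hphiv : phi h v = phi h (lav N x (j+1)) := by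
            rw [hv, hom (lav N x (pi+j)) (le_trans hh1 (le_of_lt hm))
                (le_of_lt hmN) (x+1) (by omega),
              hphim, stepj,
              hom (lav N x j) (le_trans hx1 (le_of_lt haj.1)) haj.2 (x+1) (by omega),
              hphiaj]
          have hphile : phi h (lav N x (j+1)) ≤ h := phi_le hh1 _
          have := phi_fiber (by omega : 1 ≤ v) (by omega : v ≤ 2*h) hphiv
          rw [step]
          omega
    have h2pi : lav N x (2 * pi) = N := by
      have hfin := walk pi hpi1 (le_refl pi)
      rw [hfa, phi_eq_self hh1 (le_refl h)] at hfin
      rw [two_mul, hfin]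
      omega
    exact (hit_iff hxN (by omega)).1 h2pi
  · -- a_pi = N : period stays
    have : per N x ∣ pi := (hit_iff hxN hpi1).1 (by omega)
    exact Dvd.dvd.mul_left this 2

end StepLemmas

section StepLemmas2

lemma perdiv_step {n : ℕ} (hn : 1 ≤ n) (P : PKG (n-1)) (ue : UE n)
    (rowh : RowH n) (per2pi : Per2Pi n) : PerDiv n := by
  intro x hx1 hxN
  have hNh : 2^n = 2 * 2^(n-1) := two_pow_eq hn
  have hh1 : 1 ≤ (2:ℕ)^(n-1) := Nat.one_le_two_pow
  rcases lt_trichotomy x (2^(n-1)) with hlt | heq | hgt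
  · -- x < h : use per2pi and P.perdiv
    rcases Nat.lt_or_ge n 2 with hn2 | hn2
    · have hn1 : n = 1 := by omega
      subst hn1
      simp at hlt
      omega
    · have h1 := per2pi x hx1 hlt
      have h2 : per (2^(n-1)) x ∣ 2^(n-1-1) := P.perdiv (by omega) x hx1 hlt
      have h3 : (2:ℕ) * 2^(n-1-1) = 2^(n-1) := (two_pow_eq (by omega)).symm
      calc per (2^n) x ∣ 2 * per (2^(n-1)) x := h1
        _ ∣ 2 * 2^(n-1-1) := Nat.mul_dvd_mul_left 2 h2
        _ = 2^(n-1) := h3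
  · subst heq
    have hfin : lav (2^n) (2^(n-1)) (2^(n-1)) = 2^n := by
      rw [rowh (2^(n-1)) hh1, phi_eq_self hh1 (le_refl _)]
      omega
    exact (hit_iff hxN hh1).1 hfin
  · rw [per_ue hn ue x hgt hxN]
    rcases Nat.lt_or_ge n 2 with hn2 | hn2
    · have hn1 : n = 1 := by omega
      subst hn1
      simp at hgt hxN
      omega
    · have h2 : per (2^(n-1)) (x - 2^(n-1)) ∣ 2^(n-1-1) :=
        P.perdiv (by omega) _ (by omega) (by omega)
      exact dvd_trans h2 (pow_dvd_pow 2 (by omega))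

lemma t1_step {n : ℕ} (hn : 1 ≤ n) (perdiv : PerDiv n) : T1 n := by
  intro x hx1 hxN
  rcases eq_or_lt_of_le hxN with hE | hlt
  · rw [hE, lav_id (le_refl _)]
  · exact (hit_iff hlt Nat.one_le_two_pow).2
      (dvd_trans (perdiv x hx1 hlt) (half_dvd hn))

lemma homiter_step {n : ℕ} (hn : 1 ≤ n) (P : PKG (n-1)) (hom : Hom n)
    (perdiv : PerDiv n) : HomIter n := by
  intro j hj x hx1 hxN y hy
  rcases eq_or_lt_of_le hj with hE | hjlt
  · subst hE
    have hN1 : 1 ≤ (2:ℕ)^j := Nat.one_le_two_pow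
    rcases eq_or_lt_of_le hxN with hxE | hxlt
    · rw [hxE, lav_id (le_refl _), (phi_eq_top_iff hN1 hN1).2 ⟨1, by omega⟩,
        lav_id (le_refl _)]
    · have hr := lav_range hxlt hy
      rw [phi_eq_self (by omega) hr.2, phi_eq_self hx1 (le_of_lt hxlt)]
      exact lav_phi_mod hxlt
        (dvd_trans (perdiv x hx1 hxlt) (half_dvd hn)) hy
  · have hjn : j ≤ n - 1 := by omega
    have hdj : (2:ℕ)^j ∣ 2^(n-1) := pow_dvd_pow 2 hjn
    have hph1 : 1 ≤ phi (2^(n-1)) x := phi_pos _ _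
    have hphh : phi (2^(n-1)) x ≤ 2^(n-1) := phi_le Nat.one_le_two_pow x
    rw [← phi_phi hdj, hom x hx1 hxN y hy,
      P.homiter j hjn (phi (2^(n-1)) x) hph1 hphh (phi (2^(n-1)) y) (phi_pos _ _),
      phi_phi hdj, phi_phi hdj]

lemma w'_step {n : ℕ} (hn : 1 ≤ n) (P : PKG (n-1)) (hom : Hom n)
    (per2pi : Per2Pi n) : W' n := by
  intro x d hx1 hxh hdh hbig
  have hNh : 2^n = 2 * 2^(n-1) := two_pow_eq hn
  have hh1 : 1 ≤ (2:ℕ)^(n-1) := Nat.one_le_two_pow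
  have hxN : x < 2^n := by omega
  have hd1 : 1 ≤ d := Nat.pos_of_dvd_of_pos hdh (by omega)
  have hpid : per (2^(n-1)) x ∣ 2*d := P.w x d hx1 hxh hdh hbig
  have hpi1 : 0 < per (2^(n-1)) x := per_pos hxh
  have hpile : per (2^(n-1)) x ≤ 2^(n-1) - x := per_le hxh
  rcases le_or_gt (x + per (2^(n-1)) x) (2^(n-1)) with hcase | hcase
  · -- small pi : period at level n at most doubles
    have hpi2n : per (2^(n-1)) x ∣ 2^n := by
      rw [hNh]
      exact dvd_trans hpid (Nat.mul_dvd_mul_left 2 hdh)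
    obtain ⟨a, ha, hea⟩ := pow2_dvd_imp hpi2n
    obtain ⟨c, hc, hec⟩ := pow2_dvd_imp hdh
    have hlt2d : per (2^(n-1)) x < 2 * d := by omega
    have hac : a < c + 1 := by
      have h2 : (2:ℕ) * d = 2^(c+1) := by rw [hec, pow_succ, Nat.mul_comm]
      rw [hea] at hlt2d
      rw [h2] at hlt2d
      exact (Nat.pow_lt_pow_iff_right (by omega)).1 hlt2d
    have hpd : per (2^(n-1)) x ∣ d := by
      rw [hea, hec]
      exact pow_dvd_pow 2 (by omega)
    exact dvd_trans (per2pi x hx1 hxh) (Nat.mul_dvd_mul_left 2 hpd)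
  · -- big pi : strictly increasing row forces hit of 2^n at pi
    have grow : ∀ j, 1 ≤ j → j ≤ per (2^(n-1)) x → x + j ≤ lav (2^n) x j := by
      intro j
      induction j with
      | zero => omega
      | succ j ihj =>
        intro _ hjle
        rcases Nat.eq_zero_or_pos j with hj0 | hj0
        · subst hj0
          rw [lav_one hxN]
        · have hgj := ihj hj0 (by omega)
          have hajN : lav (2^n) x j ≠ 2^n := by
            intro hEq
            have hphiaj : phi (2^(n-1)) (lav (2^n) x j) = lav (2^(n-1)) x j :=
              hom_small hom hx1 (by omega) hj0 (by omega)
            rw [hEq, (phi_eq_top_iff hh1 (by omega)).2 ⟨2, by omega⟩] at hphiaj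
            have hdvd := (hit_iff hxh hj0).1 hphiaj.symm
            have := Nat.le_of_dvd hj0 hdvd
            omega
          have hajr := lav_range hxN hj0
          have hlt : lav (2^n) x j < 2^n := by
            rcases eq_or_lt_of_le hajr.2 with hE | hE
            · exact absurd hE hajN
            · exact hE
          rw [lav_succ hxN hj0]
          have := (lav_range hlt (by omega : 1 ≤ x + 1)).1
          omega
    have hgrow := grow _ hpi1 (le_refl _)
    have hphi : phi (2^(n-1)) (lav (2^n) x (per (2^(n-1)) x)) = 2^(n-1) := by
      rw [hom_small hom hx1 (by omega) hpi1 (by omega), lav_per hxh]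
    have hr := lav_range hxN hpi1
    have := phi_fiber (by omega : 1 ≤ lav (2^n) x (per (2^(n-1)) x))
      (by omega : lav (2^n) x (per (2^(n-1)) x) ≤ 2 * 2^(n-1)) hphi
    have hhit : lav (2^n) x (per (2^(n-1)) x) = 2^n := by omega
    exact dvd_trans ((hit_iff hxN hpi1).1 hhit) hpid

lemma w_step {n : ℕ} (hn : 1 ≤ n) (P : PKG (n-1)) (ue : UE n)
    (perdiv : PerDiv n) (w' : W' n) : W n := by
  intro x d hx1 hxN hdN hbig
  have hNh : 2^n = 2 * 2^(n-1) := two_pow_eq hn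
  have hh1 : 1 ≤ (2:ℕ)^(n-1) := Nat.one_le_two_pow
  rcases eq_or_ne d (2^n) with hdE | hdne
  · -- d = 2^n
    subst hdE
    exact dvd_trans (dvd_trans (perdiv x hx1 hxN) (half_dvd hn)) ⟨2, by ring⟩
  · have hdh : d ∣ 2^(n-1) := pow2_dvd_half hn hdN hdne
    have hd1 : 1 ≤ d := Nat.pos_of_dvd_of_pos hdh (by omega)
    rcases lt_trichotomy x (2^(n-1)) with hlt | heq | hgt
    · exact w' x d hx1 hlt hdh (by omega)
    · -- x = h : then d = h
      subst heq
      obtain ⟨e, he⟩ := hdh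
      have hde : d = 2^(n-1) := by
        rcases e with _ | _ | e
        · omega
        · omega
        · have h2 : d * 2 ≤ d * (e + 1 + 1) := Nat.mul_le_mul_left d (by omega)
          omega
      exact dvd_trans (perdiv _ hx1 hxN) (by rw [hde]; exact ⟨2, by ring⟩)
    · rw [per_ue hn ue x hgt hxN]
      exact P.w (x - 2^(n-1)) d (by omega) (by omega) hdh (by omega)

end StepLemmas2

section StepLemmas3

lemma s_step {n : ℕ} (hn : 1 ≤ n) (P : PKG (n-1)) (hom : Hom n) (w' : W' n) :
    SP n := by
  intro d z s t hdN hdz1 hsd hz1 hzN ht1 htN heq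
  have hNh : 2^n = 2 * 2^(n-1) := two_pow_eq hn
  have hh1 : 1 ≤ (2:ℕ)^(n-1) := Nat.one_le_two_pow
  have hd2 : 2 ≤ d := by omega
  have hdleN : d ≤ 2^n := Nat.le_of_dvd (by positivity) hdN
  rcases eq_or_lt_of_le hz1 with hzE | hz2
  · -- z = 1
    rcases eq_or_lt_of_le htN with htE | htlt
    · rw [htE, lav_id (le_refl _), ← hzE] at heq
      omega
    · rw [← hzE, lav_one htlt] at heq
      omega
  · -- z ≥ 2
    have hdz : d ≤ z - 1 := Nat.le_of_dvd (by omega) hdz1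
    have hdne : d ≠ 2^n := by omega
    have hdh : d ∣ 2^(n-1) := pow2_dvd_half hn hdN hdne
    have hdleh : d ≤ 2^(n-1) := Nat.le_of_dvd (by omega) hdh
    have hsle : s ≤ 2^(n-1) - 2 := by omega
    rcases eq_or_lt_of_le htN with htE | htlt
    · -- t = 2^n : impossible
      exfalso
      rw [htE, lav_id (le_refl _)] at heq
      have hsub : d ∣ 2^n - (z - 1) := Nat.dvd_sub hdN hdz1
      have : 2^n - (z-1) = s + 1 := by omega
      rw [this] at hsub
      have := Nat.le_of_dvd (by omega) hsub
      omega
    · -- t < 2^n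
      have hphiz1 : d ∣ phi (2^(n-1)) z - 1 := by
        unfold phi
        rw [Nat.add_sub_cancel]
        exact (Nat.dvd_mod_iff hdh).2 hdz1
      have hvphi : phi (2^(n-1)) (lav (2^n) t z) =
          lav (2^(n-1)) (phi (2^(n-1)) t) (phi (2^(n-1)) z) :=
        hom t ht1 (le_of_lt htlt) z hz1
      rw [heq, phi_of_lt (by omega) (by omega)] at hvphi
      have hPs := P.s d (phi (2^(n-1)) z) s (phi (2^(n-1)) t) hdh hphiz1 hsd
        (phi_pos _ _) (phi_le hh1 _) (phi_pos _ _) (phi_le hh1 _)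
        (by rw [← hvphi]; omega)
      -- hPs : phi h t = 2^(n-1) - 1 - s
      have hfib := phi_fiber ht1 (by omega : t ≤ 2 * 2^(n-1)) hPs
      rcases hfib with hfa | hfa
      · -- t = h - 1 - s : excluded via w'
        exfalso
        obtain ⟨c, hc, hec⟩ := pow2_dvd_imp hdh
        have hc1 : 1 ≤ c := by
          rcases Nat.eq_zero_or_pos c with h0 | h0
          · subst h0; simp at hec; omega
          · exact h0
        have hdsplit : d = 2 * 2^(c-1) := by
          rw [hec, ← two_pow_eq hc1]
        have hperd : per (2^n) t ∣ d := by
          rw [hdsplit]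
          exact w' t (2^(c-1)) (by omega) (by omega)
            (pow_dvd_pow 2 (by omega)) (by omega)
        have hval : lav (2^n) t z = t + 1 := by
          rw [lav_phi_mod (by omega : t < 2^n) hperd hz1, phi_one_of_dvd hdz1,
            lav_one (by omega)]
        rw [heq] at hval
        omega
      · omega

/-- the gcd with `2^n` divides the half, and transfers to the reduction -/
lemma gcd_facts {n p : ℕ} (hn : 1 ≤ n) (hp1 : 1 ≤ p) (hpN : p < 2^n)
    (hph : p ≠ 2^(n-1)) :
    Nat.gcd p (2^n) ∣ 2^(n-1) ∧ Nat.gcd p (2^n) ≠ 2^(n-1) ∧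
    Nat.gcd (phi (2^(n-1)) p) (2^(n-1)) = Nat.gcd p (2^n) := by
  have hNh : 2^n = 2 * 2^(n-1) := two_pow_eq hn
  have hh1 : 1 ≤ (2:ℕ)^(n-1) := Nat.one_le_two_pow
  have hgp : Nat.gcd p (2^n) ∣ p := Nat.gcd_dvd_left _ _
  have hgN : Nat.gcd p (2^n) ∣ 2^n := Nat.gcd_dvd_right _ _
  have hgle : Nat.gcd p (2^n) ≤ p := Nat.le_of_dvd (by omega) hgp
  have hgne2 : Nat.gcd p (2^n) ≠ 2^n := by omega
  have hgh : Nat.gcd p (2^n) ∣ 2^(n-1) := pow2_dvd_half hn hgN hgne2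
  have hgneh : Nat.gcd p (2^n) ≠ 2^(n-1) := by
    intro hE
    rw [hE] at hgp
    obtain ⟨e, he⟩ := hgp
    rcases e with _ | _ | e
    · omega
    · omega
    · have h2 : 2^(n-1) * 2 ≤ 2^(n-1) * (e + 1 + 1) :=
        Nat.mul_le_mul_left _ (by omega)
      omega
  refine ⟨hgh, hgneh, ?_⟩
  rcases lt_trichotomy p (2^(n-1)) with hlt | heq | hgt
  · rw [phi_eq_self hp1 (le_of_lt hlt)]
    exact Nat.dvd_antisymm
      (Nat.dvd_gcd (Nat.gcd_dvd_left _ _)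
        (dvd_trans (Nat.gcd_dvd_right _ _) (half_dvd hn)))
      (Nat.dvd_gcd hgp hgh)
  · exact absurd heq hph
  · rw [phi_of_lt hgt (by omega)]
    refine Nat.dvd_antisymm ?_ (Nat.dvd_gcd (Nat.dvd_sub hgp hgh) hgh)
    have h1 : Nat.gcd (p - 2^(n-1)) (2^(n-1)) ∣ p := by
      have := Nat.dvd_add (Nat.gcd_dvd_left (p - 2^(n-1)) (2^(n-1)))
        (Nat.gcd_dvd_right (p - 2^(n-1)) (2^(n-1)))
      rw [show p - 2^(n-1) + 2^(n-1) = p by omega] at this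
      exact this
    exact Nat.dvd_gcd h1
      (dvd_trans (Nat.gcd_dvd_right _ _) (half_dvd hn))

lemma m_step {n : ℕ} (hn : 1 ≤ n) (IH : ∀ m, m < n → PKG m)
    (homiter : HomIter n) (rowh : RowH n) (sp : SP n) (perdiv : PerDiv n) :
    MP n := by
  intro p s hp1 hpN hsg
  have hNh : 2^n = 2 * 2^(n-1) := two_pow_eq hn
  have hh1 : 1 ≤ (2:ℕ)^(n-1) := Nat.one_le_two_pow
  have hgp : Nat.gcd p (2^n) ∣ p := Nat.gcd_dvd_left _ _
  have hgpos : 0 < Nat.gcd p (2^n) := Nat.gcd_pos_of_pos_left _ (by omega)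
  rcases eq_or_ne p (2^(n-1)) with hpE | hpne
  · -- p = h : the shift row
    subst hpE
    have hg : Nat.gcd (2^(n-1)) (2^n) = 2^(n-1) := Nat.gcd_eq_left (half_dvd hn)
    rw [hg] at hsg
    rw [rowh (2^(n-1) - s) (by omega), phi_eq_self (by omega) (by omega)]
    omega
  · obtain ⟨hgh, hgneh, _⟩ := gcd_facts hn hp1 hpN hpne
    have hn2 : 2 ≤ n := by
      rcases Nat.lt_or_ge n 2 with hlt2 | hge
      · exfalso
        have hn1 : n = 1 := by omega
        subst hn1
        have h1 : (2:ℕ)^(1-1) = 1 := by norm_num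
        rw [h1] at hgh hgneh
        exact hgneh (Nat.dvd_one.mp hgh)
      · exact hge
    obtain ⟨k, hk, hgk⟩ := pow2_dvd_imp hgh
    have hkn : k ≤ n - 2 := by
      rcases eq_or_lt_of_le hk with hE | hlt
      · exfalso; exact hgneh (by rw [hgk, hE])
      · omega
    have hglth : Nat.gcd p (2^n) ≤ 2^(n-2) := by
      rw [hgk]; exact Nat.pow_le_pow_right (by omega) hkn
    have h2g : (2:ℕ)^(k+1) = 2 * Nat.gcd p (2^n) := by
      rw [hgk, pow_succ, Nat.mul_comm]
    -- phi (2*g) p = g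
    have hodd : ¬ (2 * Nat.gcd p (2^n) ∣ p) := by
      intro hc
      have h2g2n : 2 * Nat.gcd p (2^n) ∣ 2^n := by
        rw [← h2g]
        exact pow_dvd_pow 2 (by omega)
      have hdd := Nat.dvd_gcd hc h2g2n
      have := Nat.le_of_dvd (by omega) hdd
      omega
    have hphi2g : phi (2 * Nat.gcd p (2^n)) p = Nat.gcd p (2^n) := by
      obtain ⟨e, he⟩ := hgp
      have hne2 : ¬ (2 ∣ e) := by
        rintro ⟨e', hee'⟩
        refine hodd ⟨e', ?_⟩
        conv_lhs => rw [he, hee']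
        ring
      have he2 : e % 2 = 1 := by
        rcases Nat.mod_two_eq_zero_or_one e with h0 | h1
        · exact absurd (Nat.dvd_of_mod_eq_zero h0) hne2
        · exact h1
      obtain ⟨e', hee⟩ : ∃ e', e = 2 * e' + 1 := ⟨e / 2, by omega⟩
      have hp' : p = Nat.gcd p (2^n) + e' * (2 * Nat.gcd p (2^n)) := by
        conv_lhs => rw [he, hee]
        ring
      unfold phi
      rw [show p - 1 = (Nat.gcd p (2^n) - 1) + e' * (2 * Nat.gcd p (2^n)) by omega,
        Nat.add_mul_mod_self_right, Nat.mod_eq_of_lt (by omega)]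
      omega
    -- g divides the period
    have hper1 : 0 < per (2^n) p := per_pos hpN
    have hgdvdper : Nat.gcd p (2^n) ∣ per (2^n) p := by
      have hhit : lav (2^n) p (per (2^n) p) = 2^n := lav_per hpN
      have hred := homiter (k+1) (by omega) p hp1 (le_of_lt hpN)
        (per (2^n) p) hper1
      rw [hhit] at hred
      have htop : phi (2^(k+1)) (2^n) = 2^(k+1) :=
        (phi_eq_top_iff Nat.one_le_two_pow Nat.one_le_two_pow).2
          (pow_dvd_pow 2 (by omega))
      have hphip : phi (2^(k+1)) p = 2^k := by
        rw [h2g, hphi2g, hgk]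
      rw [htop, hphip] at hred
      -- use rowh at level k+1
      have Pk := IH (k+1) (by omega)
      have hrowk := Pk.rowh (by omega) (phi (2^(k+1)) (per (2^n) p)) (phi_pos _ _)
      rw [show k + 1 - 1 = k from rfl] at hrowk
      rw [hrowk, phi_phi (pow_dvd_pow 2 (by omega : k ≤ k+1))] at hred
      -- hred : 2^(k+1) = phi (2^k) (per ..) + 2^k
      have : phi (2^k) (per (2^n) p) = 2^k := by
        have h21 : (2:ℕ)^(k+1) = 2 * 2^k := by rw [pow_succ, Nat.mul_comm]
        omega
      rw [hgk]
      exact (phi_eq_top_iff Nat.one_le_two_pow hper1).1 this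
    have hgleper : Nat.gcd p (2^n) ≤ per (2^n) p :=
      Nat.le_of_dvd hper1 hgdvdper
    -- downward chain from the period position
    have chain : ∀ s', s' < Nat.gcd p (2^n) →
        lav (2^n) p (per (2^n) p - s') = 2^n - s' := by
      intro s'
      induction s' with
      | zero =>
        intro _
        rw [Nat.sub_zero, Nat.sub_zero]
        exact lav_per hpN
      | succ s' ihs =>
        intro hlt'
        have hprev := ihs (by omega)
        have harg : per (2^n) p - s' = (per (2^n) p - (s'+1)) + 1 := by omega
        rw [harg, lav_succ hpN (by omega)] at hprev
        have hrange := lav_range hpN (show 1 ≤ per (2^n) p - (s'+1) by omega)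
        have := sp (Nat.gcd p (2^n)) (p+1) s'
          (lav (2^n) p (per (2^n) p - (s'+1)))
          (Nat.gcd_dvd_right _ _) (by rw [Nat.add_sub_cancel]; exact hgp)
          hlt' (by omega) (by omega) (by omega) hrange.2 hprev
        omega
    have hchain := chain s hsg
    -- transport to position h - s by periodicity
    have hperh : per (2^n) p ∣ 2^(n-1) := perdiv p hp1 hpN
    have hperleh : per (2^n) p ≤ 2^(n-1) := Nat.le_of_dvd (by omega) hperh
    have hdvdrest : per (2^n) p ∣ 2^(n-1) - per (2^n) p :=
      Nat.dvd_sub hperh (dvd_refl _)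
    have := lav_eq_of_period_dvd hpN
      (show 1 ≤ per (2^n) p - s by omega) hdvdrest
    rw [show per (2^n) p - s + (2^(n-1) - per (2^n) p) = 2^(n-1) - s by omega,
      hchain] at this
    exact this

end StepLemmas3

section StepLemmas4

lemma fix_step {n : ℕ} (hn : 1 ≤ n) (P : PKG (n-1)) (hom : Hom n)
    (rowh : RowH n) (mp : MP n) (perdiv : PerDiv n) : FixP n := by
  intro p q hp1 hpN hq1 hqN
  have hNh : 2^n = 2 * 2^(n-1) := two_pow_eq hn
  have hh1 : 1 ≤ (2:ℕ)^(n-1) := Nat.one_le_two_pow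
  rcases eq_or_lt_of_le hpN with hpE | hplt
  · -- p = 2^n : identity row
    subst hpE
    rw [lav_id (le_refl _), Nat.gcd_self]
    constructor
    · intro _; omega
    · intro _; rfl
  · rcases eq_or_ne p (2^(n-1)) with hpE | hpne
    · -- p = h : shift row
      subst hpE
      have hg : Nat.gcd (2^(n-1)) (2^n) = 2^(n-1) := Nat.gcd_eq_left (half_dvd hn)
      rw [rowh q hq1, hg]
      constructor
      · intro hEq
        rcases le_or_gt q (2^(n-1)) with hle | hlt
        · rw [phi_eq_self hq1 hle] at hEq; omega
        · omega
      · intro hlt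
        have hqh : 2^(n-1) < q := by omega
        rw [phi_of_lt hqh (by omega)]
        omega
    · -- generic p
      obtain ⟨hgh, hgneh, hgphi⟩ := gcd_facts hn hp1 hplt hpne
      have hgleh : Nat.gcd p (2^n) ≤ 2^(n-1) := Nat.le_of_dvd (by omega) hgh
      constructor
      · intro hEq
        rcases le_or_gt q (2^(n-1)) with hle | hlt
        · -- q in lower half: contradiction via mp
          exfalso
          have hphi := hom p hp1 (le_of_lt hplt) q hq1
          rw [hEq, phi_eq_self hq1 hle] at hphi
          have hfix := (P.fixi (phi (2^(n-1)) p) q (phi_pos _ _)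
            (phi_le hh1 _) hq1 hle).1 hphi.symm
          rw [hgphi] at hfix
          have hmp := mp p (2^(n-1) - q) hp1 hplt (by omega)
          rw [show 2^(n-1) - (2^(n-1) - q) = q by omega] at hmp
          rw [hEq] at hmp
          omega
        · -- q in upper half
          have hqq : lav (2^n) p (q - 2^(n-1)) = lav (2^n) p q := by
            have := lav_eq_of_period_dvd hplt (show 1 ≤ q - 2^(n-1) by omega)
              (perdiv p hp1 hplt)
            rw [show q - 2^(n-1) + 2^(n-1) = q by omega] at this
            exact this.symm
          have hphi := hom p hp1 (le_of_lt hplt) (q - 2^(n-1)) (by omega)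
          have hq'1 : 1 ≤ q - 2^(n-1) := by omega
          have hq'h : q - 2^(n-1) ≤ 2^(n-1) := by omega
          rw [hqq, hEq, phi_of_lt hlt (by omega),
            phi_eq_self hq'1 hq'h] at hphi
          have hfix := (P.fixi (phi (2^(n-1)) p) (q - 2^(n-1)) (phi_pos _ _)
            (phi_le hh1 _) (by omega) (by omega)).1 hphi.symm
          rw [hgphi] at hfix
          omega
      · intro hlt
        have hqh : 2^(n-1) < q := by omega
        have hmp := mp p (2^n - q) hp1 hplt hlt
        rw [show 2^(n-1) - (2^n - q) = q - 2^(n-1) by omega,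
          show 2^n - (2^n - q) = q by omega] at hmp
        have := lav_eq_of_period_dvd hplt (show 1 ≤ q - 2^(n-1) by omega)
          (perdiv p hp1 hplt)
        rw [show q - 2^(n-1) + 2^(n-1) = q by omega, hmp] at this
        exact this

lemma distinct_step {n : ℕ} (hn : 1 ≤ n) (P : PKG (n-1)) (hom : Hom n)
    (fixi : FixP n) (perdiv : PerDiv n) : Distinct n := by
  intro q r hq1 hqr hrN hcol
  have hNh : 2^n = 2 * 2^(n-1) := two_pow_eq hn
  have hh1 : 1 ≤ (2:ℕ)^(n-1) := Nat.one_le_two_pow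
  have hqN : q ≤ 2^n := by omega
  rcases eq_or_ne (phi (2^(n-1)) q) (phi (2^(n-1)) r) with hE | hne
  · -- r = q + h
    have hr : r = q + 2^(n-1) := phi_inj hh1 hq1 hqr (by omega) hE
    have hqh : q ≤ 2^(n-1) := by omega
    have hq_mem : q ∈ LCol n q :=
      ⟨2^n, Nat.one_le_two_pow, le_refl _, lav_id (le_refl _) q⟩
    rw [hcol] at hq_mem
    obtain ⟨p, hp1, hpN, hpq⟩ := hq_mem
    rcases eq_or_lt_of_le hpN with hpE | hplt
    · rw [hpE, lav_id (le_refl _)] at hpq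
      omega
    · rw [hr] at hpq
      have hper := lav_eq_of_period_dvd hplt hq1 (perdiv p hp1 hplt)
      rw [hper] at hpq
      have hfix := (fixi p q hp1 hpN hq1 hqN).1 hpq
      have hgp : Nat.gcd p (2^n) ∣ p := Nat.gcd_dvd_left _ _
      have hgle : Nat.gcd p (2^n) ≤ p := Nat.le_of_dvd (by omega) hgp
      have hgne : Nat.gcd p (2^n) ≠ 2^n := by omega
      have hgh : Nat.gcd p (2^n) ∣ 2^(n-1) :=
        pow2_dvd_half hn (Nat.gcd_dvd_right _ _) hgne
      have := Nat.le_of_dvd (by omega) hgh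
      omega
  · -- project to level n-1
    have key : ∀ a b, 1 ≤ a → a ≤ 2^n → 1 ≤ b → b ≤ 2^n →
        LCol n a = LCol n b →
        LCol (n-1) (phi (2^(n-1)) a) ⊆ LCol (n-1) (phi (2^(n-1)) b) := by
      intro a b ha1 haN hb1 hbN hab v hv
      obtain ⟨p', hp'1, hp'h, hp'v⟩ := hv
      have hmem : lav (2^n) p' a ∈ LCol n a :=
        ⟨p', hp'1, by omega, rfl⟩
      rw [hab] at hmem
      obtain ⟨p'', hp''1, hp''N, hp''e⟩ := hmem
      refine ⟨phi (2^(n-1)) p'', phi_pos _ _, phi_le hh1 _, ?_⟩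
      have h1 : phi (2^(n-1)) (lav (2^n) p' a) = lav (2^(n-1)) p' (phi (2^(n-1)) a) := by
        rw [hom p' hp'1 (by omega) a ha1, phi_eq_self hp'1 hp'h]
      have h2 : phi (2^(n-1)) (lav (2^n) p'' b) = lav (2^(n-1)) (phi (2^(n-1)) p'') (phi (2^(n-1)) b) :=
        hom p'' hp''1 hp''N b hb1
      rw [← h2, hp''e, h1, hp'v]
    have hproj1 := key q r hq1 hqN (by omega) hrN hcol
    have hproj2 := key r q (by omega) hrN hq1 hqN hcol.symm
    have hproj : LCol (n-1) (phi (2^(n-1)) q) = LCol (n-1) (phi (2^(n-1)) r) :=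
      Set.Subset.antisymm hproj1 hproj2
    rcases lt_trichotomy (phi (2^(n-1)) q) (phi (2^(n-1)) r) with h1 | h1 | h1
    · exact P.distinct _ _ (phi_pos _ _) h1 (phi_le hh1 _) hproj
    · exact hne h1
    · exact P.distinct _ _ (phi_pos _ _) h1 (phi_le hh1 _) hproj.symm

lemma pkg0 : PKG 0 := by
  have hN : (2:ℕ)^0 = 1 := by norm_num
  refine ⟨?_, ?_, ?_, ?_, ?_, ?_, ?_, ?_, ?_, ?_⟩
  · intro x hx1 hxN
    rw [hN] at hxN ⊢
    rw [lav_id hx1]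
  · intro h; omega
  · intro h; omega
  · intro h; omega
  · intro j hj x hx1 hxN y hy
    have hj0 : j = 0 := by omega
    subst hj0
    have hphi1 : ∀ z, phi (2^0) z = 1 := by
      intro z
      unfold phi
      rw [hN, Nat.mod_one]
    rw [hphi1, hphi1, hphi1, hN, lav_id (le_refl 1)]
  · intro x d hx1 hxN _ _
    rw [hN] at hxN
    omega
  · intro d z s t hdN _ hsd _ _ _ _ _
    rw [hN] at hdN
    have := Nat.dvd_one.mp hdN
    omega
  · intro h; omega
  · intro p q hp1 hpN hq1 hqN
    rw [hN] at hpN hqN ⊢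
    have hp : p = 1 := by omega
    have hq : q = 1 := by omega
    subst hp; subst hq
    rw [lav_id (le_refl 1)]
    simp
  · intro q r hq1 hqr hrN
    rw [hN] at hrN
    omega

theorem pkg : ∀ n, PKG n := by
  intro n
  induction n using Nat.strong_induction_on with
  | _ n IH =>
    rcases Nat.eq_zero_or_pos n with hn0 | hn
    · subst hn0; exact pkg0
    · have P : PKG (n-1) := IH (n-1) (by omega)
      have hom : Hom n := hom_step hn P
      have rowh : RowH n := rowh_step hn hom
      have ue : UE n := ue_step hn hom
      have per2pi : Per2Pi n := per2pi_step hn hom rowh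
      have perdiv : PerDiv n := perdiv_step hn P ue rowh per2pi
      have t1 : T1 n := t1_step hn perdiv
      have homiter : HomIter n := homiter_step hn P hom perdiv
      have w' : W' n := w'_step hn P hom per2pi
      have w : W n := w_step hn P ue perdiv w'
      have sp : SP n := s_step hn P hom w'
      have mp : MP n := m_step hn (fun m hm => IH m hm) homiter rowh sp perdiv
      have fixi : FixP n := fix_step hn P hom rowh mp perdiv
      have distinct : Distinct n := distinct_step hn P hom fixi perdiv
      exact ⟨t1, fun _ => rowh, fun _ => ue, fun _ => perdiv, homiter, w, sp,
        fun _ => mp, fixi, distinct⟩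

end StepLemmas4

end Laver

section Final

theorem op_eq_lav {n : ℕ} {op : ℕ → ℕ → ℕ} (h : IsLaverOp n op) :
    ∀ x, 1 ≤ x → x ≤ 2^n → ∀ y, 1 ≤ y → y ≤ 2^n →
    op x y = Laver.lav (2^n) x y := by
  obtain ⟨hrange, hsucc1, htop1, hdistr⟩ := h
  have hN1 : 1 ≤ (2:ℕ)^n := Nat.one_le_two_pow
  -- identity row
  have topEq : ∀ y, 1 ≤ y → y ≤ 2^n → op (2^n) y = y := by
    intro y
    induction y with
    | zero => omega
    | succ y ihy =>
      intro _ hyN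
      rcases Nat.eq_zero_or_pos y with hy0 | hy0
      · subst hy0; exact htop1
      · have hylt : y < 2^n := by omega
        have h1 : op y 1 = y + 1 := hsucc1 y hy0 hylt
        have h2 := hdistr (2^n) y Nat.one_le_two_pow (le_refl _) hy0 (by omega)
        rw [h1, ihy hy0 (by omega), htop1, h1] at h2
        exact h2
  suffices H : ∀ k x, 1 ≤ x → x ≤ 2^n → 2^n - x ≤ k → ∀ y, 1 ≤ y → y ≤ 2^n →
      op x y = Laver.lav (2^n) x y by
    intro x hx1 hxN y hy1 hyN
    exact H (2^n) x hx1 hxN (by omega) y hy1 hyN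
  intro k
  induction k with
  | zero =>
    intro x hx1 hxN hk y hy1 hyN
    have hxE : x = 2^n := by omega
    subst hxE
    rw [topEq y hy1 hyN, Laver.lav_id (le_refl _)]
  | succ k ihk =>
    intro x hx1 hxN hk y hy1 hyN
    rcases eq_or_lt_of_le hxN with hxE | hxlt
    · subst hxE
      rw [topEq y hy1 hyN, Laver.lav_id (le_refl _)]
    · induction y with
      | zero => omega
      | succ y ihy =>
        rcases Nat.eq_zero_or_pos y with hy0 | hy0
        · subst hy0
          rw [hsucc1 x hx1 hxlt, Laver.lav_one hxlt]
        · have hylt : y < 2^n := by omega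
          have h1 : op y 1 = y + 1 := hsucc1 y hy0 hylt
          have h2 := hdistr x y hx1 hxN hy0 (by omega)
          rw [h1, ihy hy0 (by omega), hsucc1 x hx1 hxlt] at h2
          have hr := Laver.lav_range hxlt hy0
          rw [ihk (Laver.lav (2^n) x y) (by omega) hr.2 (by omega) (x+1)
            (by omega) (by omega)] at h2
          rw [h2, Laver.lav_succ hxlt hy0]

theorem laverCol_eq_LCol {n : ℕ} {op : ℕ → ℕ → ℕ} (h : IsLaverOp n op)
    {q : ℕ} (hq1 : 1 ≤ q) (hqN : q ≤ 2^n) :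
    laverCol n op q = Laver.LCol n q := by
  ext v
  constructor
  · rintro ⟨p, hp1, hpN, rfl⟩
    exact ⟨p, hp1, hpN, (op_eq_lav h p hp1 hpN q hq1 hqN).symm⟩
  · rintro ⟨p, hp1, hpN, rfl⟩
    exact ⟨p, hp1, hpN, op_eq_lav h p hp1 hpN q hq1 hqN⟩

end Final

/-- The columns of `A_n` are pairwise distinct; moreover, for `n ≥ 1` and
`q ≤ 2^(n-1)`, the column of `q` is the disjoint union of the column of
`q + 2^(n-1)` and `{q}`. -/
theorem laver_columns_distinct (n : ℕ) (op : ℕ → ℕ → ℕ) (h : IsLaverOp n op) :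
    (∀ q r, 1 ≤ q → q < r → r ≤ 2 ^ n → laverCol n op q ≠ laverCol n op r) ∧
    (1 ≤ n → ∀ q, 1 ≤ q → q ≤ 2 ^ (n - 1) →
      laverCol n op q = laverCol n op (q + 2 ^ (n - 1)) ∪ {q} ∧
      q ∉ laverCol n op (q + 2 ^ (n - 1))) := by
  have PK := Laver.pkg n
  constructor
  · intro q r hq1 hqr hrN
    rw [laverCol_eq_LCol h hq1 (by omega), laverCol_eq_LCol h (by omega) hrN]
    exact PK.distinct q r hq1 hqr hrN
  · intro hn q hq1 hqh
    have hNh : 2^n = 2 * 2^(n-1) := Laver.two_pow_eq hn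
    have hh1 : 1 ≤ (2:ℕ)^(n-1) := Nat.one_le_two_pow
    have hqN : q ≤ 2^n := by omega
    have hqhN : q + 2^(n-1) ≤ 2^n := by omega
    rw [laverCol_eq_LCol h hq1 hqN, laverCol_eq_LCol h (by omega) hqhN]
    have perdiv := PK.perdiv hn
    have rowh := PK.rowh hn
    constructor
    · ext v
      constructor
      · rintro ⟨p, hp1, hpN, rfl⟩
        rcases eq_or_lt_of_le hpN with hpE | hplt
        · right
          rw [hpE, Laver.lav_id (le_refl _)]
          rfl
        · left
          refine ⟨p, hp1, hpN, ?_⟩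
          exact Laver.lav_eq_of_period_dvd hplt hq1 (perdiv p hp1 hplt)
      · rintro (⟨p, hp1, hpN, rfl⟩ | hv)
        · rcases eq_or_lt_of_le hpN with hpE | hplt
          · refine ⟨2^(n-1), hh1, by omega, ?_⟩
            rw [hpE, Laver.lav_id (le_refl _), rowh q hq1,
              Laver.phi_eq_self hq1 hqh]
          · refine ⟨p, hp1, hpN, ?_⟩
            exact (Laver.lav_eq_of_period_dvd hplt hq1 (perdiv p hp1 hplt)).symm
        · have hv' : v = q := hv
          exact ⟨2^n, Nat.one_le_two_pow, le_refl _, by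
            rw [Laver.lav_id (le_refl _)]; exact hv'.symm⟩
    · rintro ⟨p, hp1, hpN, hpq⟩
      rcases eq_or_lt_of_le hpN with hpE | hplt
      · rw [hpE, Laver.lav_id (le_refl _)] at hpq
        omega
      · rw [Laver.lav_eq_of_period_dvd hplt hq1 (perdiv p hp1 hplt)] at hpq
        have hfix := (PK.fixi p q hp1 hpN hq1 hqN).1 hpq
        have hgp : Nat.gcd p (2^n) ∣ p := Nat.gcd_dvd_left _ _
        have hgle : Nat.gcd p (2^n) ≤ p := Nat.le_of_dvd (by omega) hgp
        have hgne : Nat.gcd p (2^n) ≠ 2^n := by omega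
        have hgh : Nat.gcd p (2^n) ∣ 2^(n-1) :=
          Laver.pow2_dvd_half hn (Nat.gcd_dvd_right _ _) hgne
        have := Nat.le_of_dvd (by omega) hgh
        omega
end

section
/- For every n ≥ 0, there exists a unique binary operation ∘ on {1, …, 2^n} satisfying (x ∘ y) *_n z = x *_n (y *_n z) for all x, y, z in {1, …, 2^n}, namely the operation ∘_n defined by p ∘_n q = p *_n (q + 1) − 1 for q < 2^n and p ∘_n 2^n = p. The operation ∘_n is associative, and 2^n is a two-sided neutral element for it. -/
section Aux

variable {n : ℕ} {op : ℕ → ℕ → ℕ}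

lemma lav_id (h : IsLaverOp n op) : ∀ y, 1 ≤ y → y ≤ 2 ^ n → op (2 ^ n) y = y := by
  obtain ⟨h1, h2, h3, h4⟩ := h
  intro y
  induction y using Nat.strong_induction_on with
  | _ y ih =>
    intro hy1 hy2
    rcases eq_or_lt_of_le hy1 with hy | hy
    · rw [← hy]; exact h3
    · have hw1 : 1 ≤ y - 1 := by omega
      have hw2 : y - 1 < 2 ^ n := by omega
      have e1 : op (y - 1) 1 = y := by rw [h2 (y - 1) hw1 hw2]; omega
      have key := h4 (2 ^ n) (y - 1) Nat.one_le_two_pow le_rfl hw1 (le_of_lt hw2)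
      rw [e1, h3] at key
      rw [key, ih (y - 1) (by omega) hw1 (le_of_lt hw2), e1]

lemma lav_lt (h : IsLaverOp n op) :
    ∀ x, 1 ≤ x → x < 2 ^ n → ∀ y, 1 ≤ y → y ≤ 2 ^ n → x < op x y := by
  have hid := lav_id h
  obtain ⟨h1, h2, h3, h4⟩ := h
  have main : ∀ k x, 2 ^ n - x ≤ k → 1 ≤ x → x < 2 ^ n →
      ∀ y, 1 ≤ y → y ≤ 2 ^ n → x < op x y := by
    intro k
    induction k using Nat.strong_induction_on with
    | _ k ihk =>
      intro x hxk hx1 hx2 y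
      induction y using Nat.strong_induction_on with
      | _ y ihy =>
        intro hy1 hy2
        rcases eq_or_lt_of_le hy1 with hy | hy
        · rw [← hy, h2 x hx1 hx2]; omega
        · have hw1 : 1 ≤ y - 1 := by omega
          have hw2 : y - 1 < 2 ^ n := by omega
          have e1 : op (y - 1) 1 = y := by rw [h2 (y - 1) hw1 hw2]; omega
          have e4 := h4 x (y - 1) hx1 (le_of_lt hx2) hw1 (le_of_lt hw2)
          rw [e1, h2 x hx1 hx2] at e4
          -- e4 : op x y = op (op x (y-1)) (x+1)
          have hd := ihy (y - 1) (by omega) hw1 (le_of_lt hw2)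
          have hdr := h1 x (y - 1) hx1 (le_of_lt hx2) hw1 (le_of_lt hw2)
          rcases eq_or_lt_of_le hdr.2 with hdN | hdN
          · rw [e4, hdN, hid (x + 1) (by omega) (by omega)]; omega
          · have step := ihk (2 ^ n - op x (y - 1)) (by omega) (op x (y - 1)) le_rfl
              hdr.1 hdN (x + 1) (by omega) (by omega)
            omega
  intro x hx1 hx2
  exact main (2 ^ n - x) x le_rfl hx1 hx2

lemma lav_top (h : IsLaverOp n op) :
    ∀ x, 1 ≤ x → x ≤ 2 ^ n → op x (2 ^ n) = 2 ^ n := by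
  have hid := lav_id h
  have hlt := lav_lt h
  obtain ⟨h1, h2, h3, h4⟩ := h
  intro x hx1 hx2
  rcases eq_or_lt_of_le hx2 with hxN | hxN
  · rw [hxN]; exact hid (2 ^ n) Nat.one_le_two_pow le_rfl
  · have key := h4 x (2 ^ n) hx1 (le_of_lt hxN) Nat.one_le_two_pow le_rfl
    rw [h3, h2 x hx1 hxN] at key
    -- key : op x 1 = op (op x (2^n)) (x+1), with op x 1 rewritten? careful
    have he := h1 x (2 ^ n) hx1 (le_of_lt hxN) Nat.one_le_two_pow le_rfl
    have hxe := hlt x hx1 hxN (2 ^ n) Nat.one_le_two_pow le_rfl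
    by_contra hne
    have heN : op x (2 ^ n) < 2 ^ n := lt_of_le_of_ne he.2 hne
    have := hlt (op x (2 ^ n)) he.1 heN (x + 1) (by omega) (by omega)
    omega

lemma lav_ld (h : IsLaverOp n op) :
    ∀ x y z, 1 ≤ x → x ≤ 2 ^ n → 1 ≤ y → y ≤ 2 ^ n → 1 ≤ z → z ≤ 2 ^ n →
      op x (op y z) = op (op x y) (op x z) := by
  have hid := lav_id h
  have hlt := lav_lt h
  have htop := lav_top h
  obtain ⟨h1, h2, h3, h4⟩ := h
  have main : ∀ k x, 2 ^ n - x ≤ k → 1 ≤ x → x ≤ 2 ^ n →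
      ∀ j y, 2 ^ n - y ≤ j → 1 ≤ y → y ≤ 2 ^ n →
      ∀ z, 1 ≤ z → z ≤ 2 ^ n → op x (op y z) = op (op x y) (op x z) := by
    intro k
    induction k using Nat.strong_induction_on with
    | _ k ihk =>
      intro x hxk hx1 hx2
      rcases eq_or_lt_of_le hx2 with hxN | hxN
      · intro j y hyj hy1 hy2 z hz1 hz2
        subst hxN
        have hyz := h1 y z hy1 hy2 hz1 hz2
        rw [hid y hy1 hy2, hid z hz1 hz2, hid (op y z) hyz.1 hyz.2]
      · intro j
        induction j using Nat.strong_induction_on with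
        | _ j ihj =>
          intro y hyj hy1 hy2
          rcases eq_or_lt_of_le hy2 with hyN | hyN
          · intro z hz1 hz2
            subst hyN
            have hxz := h1 x z hx1 (le_of_lt hxN) hz1 hz2
            rw [hid z hz1 hz2, htop x hx1 (le_of_lt hxN),
              hid (op x z) hxz.1 hxz.2]
          · intro z
            induction z using Nat.strong_induction_on with
            | _ z ihz =>
              intro hz1 hz2
              rcases eq_or_lt_of_le hz1 with hz | hz
              · rw [← hz]
                exact h4 x y hx1 (le_of_lt hxN) hy1 (le_of_lt hyN)
              · -- z ≥ 2
                have hx2' : x ≤ 2 ^ n := le_of_lt hxN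
                have hy2' : y ≤ 2 ^ n := le_of_lt hyN
                have hw1 : 1 ≤ z - 1 := by omega
                have hw2 : z - 1 < 2 ^ n := by omega
                have ew : op (z - 1) 1 = z := by rw [h2 (z - 1) hw1 hw2]; omega
                have ha := h1 y (z - 1) hy1 hy2' hw1 (le_of_lt hw2)
                have hay := hlt y hy1 hyN (z - 1) hw1 (le_of_lt hw2)
                have hu := h1 x y hx1 hx2' hy1 hy2'
                have hxu := hlt x hx1 hxN y hy1 hy2'
                have hv := h1 x (z - 1) hx1 hx2' hw1 (le_of_lt hw2)
                have et : op x 1 = x + 1 := h2 x hx1 hxN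
                have es : op y 1 = y + 1 := h2 y hy1 hyN
                have e1 : op y z = op (op y (z - 1)) (y + 1) := by
                  have e := h4 y (z - 1) hy1 hy2' hw1 (le_of_lt hw2)
                  rw [ew, es] at e; exact e
                have e2 : op x z = op (op x (z - 1)) (x + 1) := by
                  have e := h4 x (z - 1) hx1 hx2' hw1 (le_of_lt hw2)
                  rw [ew, et] at e; exact e
                have e3 : op x (op y (z - 1)) = op (op x y) (op x (z - 1)) :=
                  ihz (z - 1) (by omega) hw1 (le_of_lt hw2)
                have e4 : op x (y + 1) = op (op x y) (x + 1) := by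
                  have e := h4 x y hx1 hx2' hy1 hy2'
                  rw [es, et] at e; exact e
                have e5 : op (op x y) (op (op x (z - 1)) (x + 1)) =
                    op (op (op x y) (op x (z - 1))) (op (op x y) (x + 1)) :=
                  ihk (2 ^ n - op x y) (by omega) (op x y) le_rfl hu.1 hu.2
                    (2 ^ n) (op x (z - 1)) (by omega) hv.1 hv.2
                    (x + 1) (by omega) (by omega)
                have e6 : op x (op (op y (z - 1)) (y + 1)) =
                    op (op x (op y (z - 1))) (op x (y + 1)) :=
                  ihj (2 ^ n - op y (z - 1)) (by omega) (op y (z - 1)) le_rfl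
                    ha.1 ha.2 (y + 1) (by omega) (by omega)
                calc op x (op y z) = op x (op (op y (z - 1)) (y + 1)) := by rw [e1]
                  _ = op (op x (op y (z - 1))) (op x (y + 1)) := e6
                  _ = op (op (op x y) (op x (z - 1))) (op (op x y) (x + 1)) := by
                      rw [e3, e4]
                  _ = op (op x y) (op (op x (z - 1)) (x + 1)) := e5.symm
                  _ = op (op x y) (op x z) := by rw [← e2]
  intro x y z hx1 hx2 hy1 hy2 hz1 hz2
  exact main (2 ^ n - x) x le_rfl hx1 hx2 (2 ^ n - y) y le_rfl hy1 hy2 z hz1 hz2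

lemma lav_inj (h : IsLaverOp n op) :
    ∀ a b, 1 ≤ a → a ≤ 2 ^ n → 1 ≤ b → b ≤ 2 ^ n → op a 1 = op b 1 → a = b := by
  obtain ⟨h1, h2, h3, h4⟩ := h
  intro a b ha1 ha2 hb1 hb2 hab
  rcases eq_or_lt_of_le ha2 with haN | haN <;> rcases eq_or_lt_of_le hb2 with hbN | hbN
  · omega
  · rw [haN, h3, h2 b hb1 hbN] at hab; omega
  · rw [hbN, h3, h2 a ha1 haN] at hab; omega
  · rw [h2 a ha1 haN, h2 b hb1 hbN] at hab; omega

end Aux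

/-- There is a unique binary operation `∘` on `{1, …, 2^n}` with
`(x ∘ y) *_n z = x *_n (y *_n z)`, namely `p ∘_n q = p *_n (q+1) − 1` for `q < 2^n`
and `p ∘_n 2^n = p`; it is associative with two-sided neutral element `2^n`. -/
theorem laver_composition (n : ℕ) (op : ℕ → ℕ → ℕ) (h : IsLaverOp n op)
    (comp : ℕ → ℕ → ℕ)
    (hcomp : ∀ p q, 1 ≤ p → p ≤ 2 ^ n → 1 ≤ q → q ≤ 2 ^ n →
      comp p q = if q = 2 ^ n then p else op p (q + 1) - 1) :
    (∀ p q, 1 ≤ p → p ≤ 2 ^ n → 1 ≤ q → q ≤ 2 ^ n →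
      1 ≤ comp p q ∧ comp p q ≤ 2 ^ n) ∧
    (∀ x y z, 1 ≤ x → x ≤ 2 ^ n → 1 ≤ y → y ≤ 2 ^ n → 1 ≤ z → z ≤ 2 ^ n →
      op (comp x y) z = op x (op y z)) ∧
    (∀ comp' : ℕ → ℕ → ℕ,
      (∀ p q, 1 ≤ p → p ≤ 2 ^ n → 1 ≤ q → q ≤ 2 ^ n →
        1 ≤ comp' p q ∧ comp' p q ≤ 2 ^ n) →
      (∀ x y z, 1 ≤ x → x ≤ 2 ^ n → 1 ≤ y → y ≤ 2 ^ n → 1 ≤ z → z ≤ 2 ^ n →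
        op (comp' x y) z = op x (op y z)) →
      ∀ x y, 1 ≤ x → x ≤ 2 ^ n → 1 ≤ y → y ≤ 2 ^ n → comp' x y = comp x y) ∧
    (∀ x y z, 1 ≤ x → x ≤ 2 ^ n → 1 ≤ y → y ≤ 2 ^ n → 1 ≤ z → z ≤ 2 ^ n →
      comp (comp x y) z = comp x (comp y z)) ∧
    (∀ x, 1 ≤ x → x ≤ 2 ^ n → comp x (2 ^ n) = x ∧ comp (2 ^ n) x = x) := by
  have hid := lav_id h
  have hlt := lav_lt h
  have htop := lav_top h
  have hld := lav_ld h
  have hinj := lav_inj h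
  obtain ⟨h1, h2, h3, h4⟩ := h
  -- op p (q+1) ≥ 2 for q < 2^n
  have hge2 : ∀ p q, 1 ≤ p → p ≤ 2 ^ n → 1 ≤ q → q < 2 ^ n → 2 ≤ op p (q + 1) := by
    intro p q hp1 hp2 hq1 hq2
    rcases eq_or_lt_of_le hp2 with hpN | hpN
    · rw [hpN, hid (q + 1) (by omega) (by omega)]; omega
    · have := hlt p hp1 hpN (q + 1) (by omega) (by omega)
      omega
  have hbound : ∀ p q, 1 ≤ p → p ≤ 2 ^ n → 1 ≤ q → q ≤ 2 ^ n →
      1 ≤ comp p q ∧ comp p q ≤ 2 ^ n := by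
    intro p q hp1 hp2 hq1 hq2
    rw [hcomp p q hp1 hp2 hq1 hq2]
    rcases eq_or_lt_of_le hq2 with hqN | hqN
    · rw [if_pos hqN]; exact ⟨hp1, hp2⟩
    · rw [if_neg (by omega)]
      have := hge2 p q hp1 hp2 hq1 hqN
      have := h1 p (q + 1) hp1 hp2 (by omega) (by omega)
      omega
  have hhom : ∀ x y z, 1 ≤ x → x ≤ 2 ^ n → 1 ≤ y → y ≤ 2 ^ n → 1 ≤ z → z ≤ 2 ^ n →
      op (comp x y) z = op x (op y z) := by
    intro x y z hx1 hx2 hy1 hy2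
    rcases eq_or_lt_of_le hy2 with hyN | hyN
    · intro hz1 hz2
      rw [hcomp x y hx1 hx2 hy1 hy2, if_pos hyN, hyN, hid z hz1 hz2]
    · have hc : comp x y = op x (y + 1) - 1 := by
        rw [hcomp x y hx1 hx2 hy1 hy2, if_neg (by omega)]
      have hcy := hge2 x y hx1 hx2 hy1 hyN
      have hcy2 := h1 x (y + 1) hx1 hx2 (by omega) (by omega)
      have hc1 : 1 ≤ comp x y := by omega
      have hc2 : comp x y < 2 ^ n := by omega
      have hcs : op (comp x y) 1 = op x (y + 1) := by
        rw [h2 (comp x y) hc1 hc2, hc]; omega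
      have es : op y 1 = y + 1 := h2 y hy1 hyN
      induction z using Nat.strong_induction_on with
      | _ z ihz =>
        intro hz1 hz2
        rcases eq_or_lt_of_le hz1 with hz | hz
        · rw [← hz, hcs, es]
        · have hw1 : 1 ≤ z - 1 := by omega
          have hw2 : z - 1 < 2 ^ n := by omega
          have ew : op (z - 1) 1 = z := by rw [h2 (z - 1) hw1 hw2]; omega
          have hyw := h1 y (z - 1) hy1 (le_of_lt hyN) hw1 (le_of_lt hw2)
          have hy1b := h1 y 1 hy1 (le_of_lt hyN) le_rfl Nat.one_le_two_pow
          calc op (comp x y) z = op (comp x y) (op (z - 1) 1) := by rw [ew]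
            _ = op (op (comp x y) (z - 1)) (op (comp x y) 1) :=
                h4 (comp x y) (z - 1) hc1 (le_of_lt hc2) hw1 (le_of_lt hw2)
            _ = op (op x (op y (z - 1))) (op x (op y 1)) := by
                rw [ihz (z - 1) (by omega) hw1 (le_of_lt hw2), hcs, es]
            _ = op x (op (op y (z - 1)) (op y 1)) :=
                (hld x (op y (z - 1)) (op y 1) hx1 hx2 hyw.1 hyw.2 hy1b.1 hy1b.2).symm
            _ = op x (op y (op (z - 1) 1)) := by
                rw [h4 y (z - 1) hy1 (le_of_lt hyN) hw1 (le_of_lt hw2)]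
            _ = op x (op y z) := by rw [ew]
  refine ⟨hbound, hhom, ?_, ?_, ?_⟩
  · intro comp' hb' hh' x y hx1 hx2 hy1 hy2
    have hz1 := h1 y 1 hy1 hy2 le_rfl Nat.one_le_two_pow
    have e1 := hh' x y 1 hx1 hx2 hy1 hy2 le_rfl Nat.one_le_two_pow
    have e2 := hhom x y 1 hx1 hx2 hy1 hy2 le_rfl Nat.one_le_two_pow
    have hb1 := hb' x y hx1 hx2 hy1 hy2
    have hb2 := hbound x y hx1 hx2 hy1 hy2
    exact hinj (comp' x y) (comp x y) hb1.1 hb1.2 hb2.1 hb2.2 (e1.trans e2.symm)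
  · intro x y z hx1 hx2 hy1 hy2 hz1 hz2
    have hxy := hbound x y hx1 hx2 hy1 hy2
    have hyz := hbound y z hy1 hy2 hz1 hz2
    have hl := hbound (comp x y) z hxy.1 hxy.2 hz1 hz2
    have hr := hbound x (comp y z) hx1 hx2 hyz.1 hyz.2
    have hz1b := h1 z 1 hz1 hz2 le_rfl Nat.one_le_two_pow
    apply hinj _ _ hl.1 hl.2 hr.1 hr.2
    calc op (comp (comp x y) z) 1
        = op (comp x y) (op z 1) := hhom (comp x y) z 1 hxy.1 hxy.2 hz1 hz2 le_rfl Nat.one_le_two_pow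
      _ = op x (op y (op z 1)) := hhom x y (op z 1) hx1 hx2 hy1 hy2 hz1b.1 hz1b.2
      _ = op x (op (comp y z) 1) := by
          rw [hhom y z 1 hy1 hy2 hz1 hz2 le_rfl Nat.one_le_two_pow]
      _ = op (comp x (comp y z)) 1 :=
          (hhom x (comp y z) 1 hx1 hx2 hyz.1 hyz.2 le_rfl Nat.one_le_two_pow).symm
  · intro x hx1 hx2
    constructor
    · rw [hcomp x (2 ^ n) hx1 hx2 Nat.one_le_two_pow le_rfl, if_pos rfl]
    · rcases eq_or_lt_of_le hx2 with hxN | hxN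
      · rw [hxN, hcomp (2 ^ n) (2 ^ n) Nat.one_le_two_pow le_rfl Nat.one_le_two_pow le_rfl,
          if_pos rfl]
      · rw [hcomp (2 ^ n) x Nat.one_le_two_pow le_rfl hx1 hx2, if_neg (by omega),
          hid (x + 1) (by omega) (by omega)]
        omega
end

section
/- For every n ≥ 0, the binary relation ⊑_n on {1, …, 2^n} defined by q ⊑_n r if and only if there exists p in {1, …, 2^n} with p *_n q = r is a partial ordering (reflexive, antisymmetric, and transitive); moreover, 1 ⊑_n p and p ⊑_n 2^n hold for every p in {1, …, 2^n}. -/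
def laverTab (n : ℕ) : ℕ → ℕ → ℕ
  | x, y =>
    if _h : 2 ^ n ≤ x then y
    else
      match y with
      | 0 => 0
      | 1 => x + 1
      | (y' + 2) => laverTab n (max (laverTab n x (y' + 1)) (x + 1)) (x + 1)
  termination_by x y => (2 ^ n - x, y)
  decreasing_by
  · exact Prod.Lex.right _ (by omega)
  · exact Prod.Lex.left _ _ (by omega)

theorem laverTab_top {n x : ℕ} (h : 2 ^ n ≤ x) (y : ℕ) : laverTab n x y = y := by
  rw [laverTab.eq_def]; simp [h]

theorem laverTab_one {n x : ℕ} (h : x < 2 ^ n) : laverTab n x 1 = x + 1 := by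
  rw [laverTab.eq_def]; simp [Nat.not_le.mpr h]

theorem laverTab_two {n x : ℕ} (h : x < 2 ^ n) (y : ℕ) :
    laverTab n x (y + 2) = laverTab n (max (laverTab n x (y + 1)) (x + 1)) (x + 1) := by
  conv_lhs => rw [laverTab.eq_def]
  simp [Nat.not_le.mpr h]

/-- downward induction below a bound -/
theorem downward_ind {N : ℕ} {P : ℕ → Prop} (htop : ∀ x, N ≤ x → P x)
    (hstep : ∀ x, x < N → (∀ z, x < z → P z) → P x) : ∀ x, P x := by
  have key : ∀ k x, N ≤ x + k → P x := by
    intro k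
    induction k with
    | zero => exact fun x h => htop x (by omega)
    | succ k ih =>
      intro x hx
      by_cases h2 : N ≤ x
      · exact htop _ h2
      · exact hstep x (by omega) (fun z hz => ih z (by omega))
  intro x
  exact key (N - x) x (by omega)

section Basic

variable {n : ℕ}

local notation "NN" => 2 ^ n

/-- closure and row-increase (Lemma A) -/
theorem laverTab_mem : ∀ x, 1 ≤ x → x ≤ NN → ∀ y, 1 ≤ y → y ≤ NN →
    (1 ≤ laverTab n x y ∧ laverTab n x y ≤ NN ∧ (x < NN → x < laverTab n x y)) := by
  refine downward_ind (N := 2 ^ n) ?_ ?_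
  · intro x hN h1 hx y hy1 hyN
    rw [laverTab_top hN]
    exact ⟨hy1, hyN, by omega⟩
  · intro x hxN IH h1 hx y hy1 hyN
    induction y with
    | zero => omega
    | succ y ihy =>
      rcases Nat.eq_or_lt_of_le hy1 with h | h
      · rw [← h, laverTab_one hxN]; omega
      · -- y ≥ 1, so y+1 = y'+2
        obtain ⟨y', rfl⟩ : ∃ y', y = y' + 1 := ⟨y - 1, by omega⟩
        have hy : 1 ≤ y' + 1 := by omega
        obtain ⟨hz1, hzN, hzgt⟩ := ihy hy (by omega)
        have hzx : x < laverTab n x (y' + 1) := hzgt hxN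
        rw [laverTab_two hxN]
        rw [max_eq_left (by omega)]
        set z := laverTab n x (y' + 1) with hzdef
        rcases Nat.eq_or_lt_of_le hzN with hzN' | hzN'
        · rw [hzN', laverTab_top (le_refl _)]
          omega
        · obtain ⟨a1, a2, a3⟩ := IH z hzx (by omega) (by omega) (x + 1) (by omega) (by omega)
          exact ⟨a1, a2, fun _ => by have := a3 hzN'; omega⟩

theorem laverTab_le {x y : ℕ} (h1 : 1 ≤ x) (hx : x ≤ NN) (hy1 : 1 ≤ y) (hyN : y ≤ NN) :
    laverTab n x y ≤ NN := (laverTab_mem x h1 hx y hy1 hyN).2.1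

theorem laverTab_pos {x y : ℕ} (h1 : 1 ≤ x) (hx : x ≤ NN) (hy1 : 1 ≤ y) (hyN : y ≤ NN) :
    1 ≤ laverTab n x y := (laverTab_mem x h1 hx y hy1 hyN).1

theorem laverTab_gt {x y : ℕ} (h1 : 1 ≤ x) (hx : x < NN) (hy1 : 1 ≤ y) (hyN : y ≤ NN) :
    x < laverTab n x y := (laverTab_mem x h1 (le_of_lt hx) y hy1 hyN).2.2 hx

/-- the clean successor recursion -/
theorem laverTab_succ {x y : ℕ} (h1 : 1 ≤ x) (hx : x < NN) (hy1 : 1 ≤ y) (hyN : y ≤ NN) :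
    laverTab n x (y + 1) = laverTab n (laverTab n x y) (x + 1) := by
  obtain ⟨y', rfl⟩ : ∃ y', y = y' + 1 := ⟨y - 1, by omega⟩
  rw [laverTab_two hx, max_eq_left]
  have := laverTab_gt h1 hx hy1 hyN
  omega

end Basic

/-! ### mod' arithmetic -/

/-- `lm y m` is the representative of `y` in `[1, m]` modulo `m`. -/
def lm (y m : ℕ) : ℕ := (y - 1) % m + 1

theorem lm_pos (y m : ℕ) : 1 ≤ lm y m := by simp [lm]

theorem lm_le {m : ℕ} (hm : 1 ≤ m) (y : ℕ) : lm y m ≤ m := by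
  have := Nat.mod_lt (y - 1) (show 0 < m by omega)
  simp only [lm]; omega

theorem lm_eq_self {y m : ℕ} (h1 : 1 ≤ y) (h2 : y ≤ m) : lm y m = y := by
  simp only [lm]
  rw [Nat.mod_eq_of_lt (by omega)]
  omega

theorem lm_add {y m : ℕ} (h1 : 1 ≤ y) : lm (y + m) m = lm y m := by
  simp only [lm]
  rw [show y + m - 1 = (y - 1) + m by omega, Nat.add_mod_right]

theorem lm_eq_iff_dvd {y m : ℕ} (h1 : 1 ≤ y) (hm : 1 ≤ m) : lm y m = m ↔ m ∣ y := by
  simp only [lm]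
  have h2 := Nat.mod_add_div (y - 1) m
  constructor
  · intro h
    refine ⟨(y - 1) / m + 1, ?_⟩
    rw [Nat.mul_add, Nat.mul_one]
    omega
  · rintro ⟨c, rfl⟩
    have hc : 1 ≤ c := by
      rcases Nat.eq_zero_or_pos c with rfl | h
      · simp at h1
      · exact h
    obtain ⟨c', rfl⟩ : ∃ c', c = c' + 1 := ⟨c - 1, by omega⟩
    rw [Nat.mul_succ]
    rw [show m * c' + m - 1 = m - 1 + m * c' by omega]
    rw [Nat.add_mul_mod_self_left, Nat.mod_eq_of_lt (by omega)]
    omega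

theorem lm_dvd_iff {y m d : ℕ} (h1 : 1 ≤ y) (hm : 1 ≤ m) (hd : d ∣ m) :
    d ∣ lm y m ↔ d ∣ y := by
  simp only [lm]
  have h2 := Nat.mod_add_div (y - 1) m
  constructor
  · intro h
    have hy : y = ((y - 1) % m + 1) + m * ((y - 1) / m) := by omega
    rw [hy]
    exact dvd_add h (hd.mul_right _)
  · intro h
    have hy : (y - 1) % m + 1 = y - m * ((y - 1) / m) := by omega
    rw [hy]
    exact Nat.dvd_sub h (hd.mul_right _)

/-- divisor of a power of two that is at most `2^j` divides `2^j` -/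
theorem dvd_pow2_of_le {a k j : ℕ} (hd : a ∣ 2 ^ k) (hle : a ≤ 2 ^ j) : a ∣ 2 ^ j := by
  obtain ⟨i, hik, rfl⟩ := (Nat.dvd_prime_pow Nat.prime_two).mp hd
  exact pow_dvd_pow 2 ((Nat.pow_le_pow_iff_right (by norm_num : 1 < 2)).mp hle)

/-! ### the period of a row -/

section Pi

variable {n : ℕ}

theorem laverTab_pi_ex (n x : ℕ) :
    ∃ y, 1 ≤ y ∧ y ≤ 2 ^ n ∧ (1 ≤ x ∧ x ≤ 2 ^ n → laverTab n x y = 2 ^ n) := by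
  by_cases hdom : 1 ≤ x ∧ x ≤ 2 ^ n
  · obtain ⟨h1, hx⟩ := hdom
    rcases Nat.eq_or_lt_of_le hx with h | h
    · exact ⟨2 ^ n, Nat.one_le_two_pow, le_refl _, fun _ => by rw [h, laverTab_top (le_refl _)]⟩
    · -- x < 2^n
      have key : ∀ y, 1 ≤ y → y ≤ 2 ^ n →
          (∃ y', 1 ≤ y' ∧ y' ≤ y ∧ laverTab n x y' = 2 ^ n) ∨ x + y ≤ laverTab n x y := by
        intro y
        induction y with
        | zero => omega
        | succ y ihy =>
          intro _ hyN
          rcases Nat.eq_zero_or_pos y with rfl | hy1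
          · rw [laverTab_one h]; right; omega
          · rcases ihy hy1 (by omega) with ⟨y', a, b, c⟩ | hge
            · exact Or.inl ⟨y', a, by omega, c⟩
            · set z := laverTab n x y with hz
              have hzN : z ≤ 2 ^ n := laverTab_le h1 (by omega) hy1 (by omega)
              rcases Nat.eq_or_lt_of_le hzN with hzeq | hzlt
              · exact Or.inl ⟨y, hy1, by omega, hzeq⟩
              · right
                rw [laverTab_succ h1 h hy1 (by omega)]
                have hgt := laverTab_gt (n := n) (x := laverTab n x y) (y := x + 1)
                  (by omega) hzlt (by omega) (by omega)
                omega
      rcases key (2 ^ n) Nat.one_le_two_pow (le_refl _) with ⟨y', a, b, c⟩ | hge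
      · exact ⟨y', a, b, fun _ => c⟩
      · exfalso
        have := laverTab_le h1 hx Nat.one_le_two_pow (le_refl _)
        omega
  · exact ⟨1, le_refl _, Nat.one_le_two_pow, fun h => absurd h hdom⟩

/-- the period of row `x` -/
def laverPi (n x : ℕ) : ℕ := Nat.find (laverTab_pi_ex n x)

theorem laverPi_pos (n x : ℕ) : 1 ≤ laverPi n x := (Nat.find_spec (laverTab_pi_ex n x)).1

theorem laverPi_le (n x : ℕ) : laverPi n x ≤ 2 ^ n := (Nat.find_spec (laverTab_pi_ex n x)).2.1

theorem laverPi_spec {x : ℕ} (h1 : 1 ≤ x) (hx : x ≤ 2 ^ n) :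
    laverTab n x (laverPi n x) = 2 ^ n := (Nat.find_spec (laverTab_pi_ex n x)).2.2 ⟨h1, hx⟩

theorem laverPi_min {x y : ℕ} (h1 : 1 ≤ x) (hx : x ≤ 2 ^ n) (hy1 : 1 ≤ y)
    (hy : y < laverPi n x) : laverTab n x y ≠ 2 ^ n := by
  intro hcon
  have := Nat.find_min (laverTab_pi_ex n x) hy
  push_neg at this
  have hyN : y ≤ 2 ^ n := by have := laverPi_le n x; omega
  have h4 := this hy1 hyN
  rw [hcon] at h4
  exact h4.2 rfl

theorem laverPi_eq {x y₀ : ℕ} (h1 : 1 ≤ x) (hx : x ≤ 2 ^ n) (hy1 : 1 ≤ y₀) (hyN : y₀ ≤ 2 ^ n)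
    (hval : laverTab n x y₀ = 2 ^ n) (hmin : ∀ y, 1 ≤ y → y < y₀ → laverTab n x y ≠ 2 ^ n) :
    laverPi n x = y₀ := by
  have hle : laverPi n x ≤ y₀ := Nat.find_le ⟨hy1, hyN, fun _ => hval⟩
  rcases Nat.eq_or_lt_of_le hle with h | h
  · exact h
  · exact absurd (laverPi_spec h1 hx) (hmin _ (laverPi_pos n x) h)

theorem laverPi_topRow (n : ℕ) : laverPi n (2 ^ n) = 2 ^ n := by
  refine laverPi_eq Nat.one_le_two_pow (le_refl _) Nat.one_le_two_pow (le_refl _)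
    (laverTab_top (le_refl _) _) (fun y hy1 hy => ?_)
  rw [laverTab_top (le_refl _)]
  omega

theorem laverPi_lt_top {x : ℕ} (h1 : 1 ≤ x) (hx : x ≤ 2 ^ n) {y : ℕ} (hy1 : 1 ≤ y)
    (hy : y < laverPi n x) : laverTab n x y < 2 ^ n := by
  have := laverTab_le (n := n) h1 hx hy1 (by have := laverPi_le n x; omega)
  have := laverPi_min h1 hx hy1 hy
  omega

/-- strict increase along the first period -/
theorem laverTab_strict {x : ℕ} (h1 : 1 ≤ x) (hx : x < 2 ^ n) :
    ∀ y₂, y₂ ≤ laverPi n x → ∀ y₁, 1 ≤ y₁ → y₁ < y₂ → laverTab n x y₁ < laverTab n x y₂ := by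
  intro y₂
  induction y₂ with
  | zero => omega
  | succ y₂ ihy =>
    intro hy2 y₁ hy11 hy12
    have hy21 : 1 ≤ y₂ := by omega
    have hpiN := laverPi_le n x
    have hstep : laverTab n x y₂ < laverTab n x (y₂ + 1) := by
      rw [laverTab_succ h1 hx hy21 (by omega)]
      have hzlt : laverTab n x y₂ < 2 ^ n := laverPi_lt_top h1 (by omega) hy21 (by omega)
      exact laverTab_gt (laverTab_pos h1 (by omega) hy21 (by omega)) hzlt (by omega) (by omega)
    rcases Nat.eq_or_lt_of_le (Nat.lt_succ_iff.mp hy12) with rfl | h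
    · omega
    · have := ihy (by omega) y₁ hy11 h
      omega

/-- values along the first period dominate `x + y` -/
theorem laverTab_lower {x : ℕ} (h1 : 1 ≤ x) (hx : x < 2 ^ n) :
    ∀ y, 1 ≤ y → y ≤ laverPi n x → x + y ≤ laverTab n x y := by
  intro y
  induction y with
  | zero => omega
  | succ y ihy =>
    intro _ hy2
    rcases Nat.eq_zero_or_pos y with rfl | hy1
    · rw [laverTab_one hx]
    · have := ihy hy1 (by omega)
      have := laverTab_strict h1 hx (y + 1) hy2 y hy1 (by omega)
      omega

theorem laverPi_bound {x : ℕ} (h1 : 1 ≤ x) (hx : x < 2 ^ n) : laverPi n x ≤ 2 ^ n - x := by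
  have := laverTab_lower h1 hx (laverPi n x) (laverPi_pos n x) (le_refl _)
  rw [laverPi_spec h1 (by omega)] at this
  omega

/-- periodicity -/
theorem laverTab_period {x : ℕ} (h1 : 1 ≤ x) (hx : x ≤ 2 ^ n) :
    ∀ y, 1 ≤ y → y + laverPi n x ≤ 2 ^ n → laverTab n x (y + laverPi n x) = laverTab n x y := by
  rcases Nat.eq_or_lt_of_le hx with rfl | hxlt
  · intro y hy1 hy2
    have := laverPi_topRow n
    omega
  · intro y
    induction y with
    | zero => omega
    | succ y ihy =>
      intro _ hy2
      have hpi1 := laverPi_pos n x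
      rcases Nat.eq_zero_or_pos y with rfl | hy1
      · rw [show 0 + 1 + laverPi n x = laverPi n x + 1 by omega,
          laverTab_succ h1 hxlt (laverPi_pos n x) (by omega),
          laverPi_spec h1 hx, laverTab_top (le_refl _), laverTab_one hxlt]
      · rw [show y + 1 + laverPi n x = (y + laverPi n x) + 1 by omega,
          laverTab_succ h1 hxlt (by omega) (by omega),
          ihy hy1 (by omega),
          ← laverTab_succ h1 hxlt hy1 (by omega)]

/-- reduction of the position modulo the period -/
theorem laverTab_reduce {x : ℕ} (h1 : 1 ≤ x) (hx : x ≤ 2 ^ n) :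
    ∀ y, 1 ≤ y → y ≤ 2 ^ n → laverTab n x y = laverTab n x (lm y (laverPi n x)) := by
  intro y
  induction y using Nat.strong_induction_on with
  | _ y ihy =>
    intro hy1 hyN
    by_cases h : y ≤ laverPi n x
    · rw [lm_eq_self hy1 h]
    · push_neg at h
      have hpi1 := laverPi_pos n x
      have e1 : laverTab n x y = laverTab n x (y - laverPi n x) := by
        have := laverTab_period h1 hx (y - laverPi n x) (by omega) (by omega)
        rw [show y - laverPi n x + laverPi n x = y by omega] at this
        exact this
      rw [e1, ihy (y - laverPi n x) (by omega) (by omega) (by omega)]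
      congr 1
      have := lm_add (y := y - laverPi n x) (m := laverPi n x) (by omega)
      rw [show y - laverPi n x + laverPi n x = y by omega] at this
      exact this.symm

/-- positions that are multiples of the period give the top value -/
theorem laverTab_mult {x y : ℕ} (h1 : 1 ≤ x) (hx : x ≤ 2 ^ n) (hy1 : 1 ≤ y) (hyN : y ≤ 2 ^ n)
    (hdvd : laverPi n x ∣ y) : laverTab n x y = 2 ^ n := by
  rw [laverTab_reduce h1 hx y hy1 hyN,
    (lm_eq_iff_dvd hy1 (laverPi_pos n x)).mpr hdvd]
  exact laverPi_spec h1 hx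

/-- the top value appears exactly at multiples of the period -/
theorem laverTab_top_iff {x y : ℕ} (h1 : 1 ≤ x) (hx : x ≤ 2 ^ n) (hy1 : 1 ≤ y) (hyN : y ≤ 2 ^ n) :
    laverTab n x y = 2 ^ n ↔ laverPi n x ∣ y := by
  constructor
  · intro h
    rw [laverTab_reduce h1 hx y hy1 hyN] at h
    have hlm1 := lm_pos y (laverPi n x)
    have hlm2 := lm_le (laverPi_pos n x) y
    rcases Nat.eq_or_lt_of_le hlm2 with he | hlt
    · exact (lm_eq_iff_dvd hy1 (laverPi_pos n x)).mp he
    · exact absurd h (laverPi_min h1 hx hlm1 hlt)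
  · exact laverTab_mult h1 hx hy1 hyN

end Pi

/-! ### uniqueness: anything satisfying the defining recursion equals `laverTab` -/

section Uniq

variable {n : ℕ} {f : ℕ → ℕ → ℕ}

theorem laverTab_uniq
    (h1 : ∀ x, 1 ≤ x → x < 2 ^ n → f x 1 = x + 1)
    (h2 : ∀ y, 1 ≤ y → y ≤ 2 ^ n → f (2 ^ n) y = y)
    (h3 : ∀ x y, 1 ≤ x → x < 2 ^ n → 1 ≤ y → y < 2 ^ n → f x (y + 1) = f (f x y) (x + 1))
    (h4 : ∀ x y, 1 ≤ x → x ≤ 2 ^ n → 1 ≤ y → y ≤ 2 ^ n →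
      (1 ≤ f x y ∧ f x y ≤ 2 ^ n ∧ (x < 2 ^ n → x < f x y))) :
    ∀ x, 1 ≤ x → x ≤ 2 ^ n → ∀ y, 1 ≤ y → y ≤ 2 ^ n → f x y = laverTab n x y := by
  refine downward_ind (N := 2 ^ n) ?_ ?_
  · intro x hN hx1 hxN y hy1 hyN
    have hxe : x = 2 ^ n := by omega
    subst hxe
    rw [h2 y hy1 hyN, laverTab_top (le_refl _)]
  · intro x hxN IH hx1 hx2 y hy1 hyN
    induction y with
    | zero => omega
    | succ y ihy =>
      rcases Nat.eq_zero_or_pos y with rfl | hy0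
      · rw [h1 x hx1 hxN, laverTab_one hxN]
      · have hz := ihy hy0 (by omega)
        have hmem := h4 x y hx1 hx2 hy0 (by omega)
        have hzgt : x < f x y := hmem.2.2 hxN
        rw [h3 x y hx1 hxN hy0 (by omega), hz]
        rw [laverTab_succ hx1 hxN hy0 (by omega)]
        have hgt : x < laverTab n x y := by rw [← hz]; exact hzgt
        exact IH (laverTab n x y) hgt (by omega) (by rw [← hz]; exact hmem.2.1)
          (x + 1) (by omega) (by omega)

end Uniq

/-! ### basic consequences of the `IsLaverOp` axioms for an abstract operation -/

section AbstractOp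

variable {n : ℕ} {op : ℕ → ℕ → ℕ}

theorem op_facts
    (hmem : ∀ x y, 1 ≤ x → x ≤ 2 ^ n → 1 ≤ y → y ≤ 2 ^ n → 1 ≤ op x y ∧ op x y ≤ 2 ^ n)
    (hone : ∀ x, 1 ≤ x → x < 2 ^ n → op x 1 = x + 1)
    (htop1 : op (2 ^ n) 1 = 1)
    (hld : ∀ x y, 1 ≤ x → x ≤ 2 ^ n → 1 ≤ y → y ≤ 2 ^ n →
      op x (op y 1) = op (op x y) (op x 1)) :
    (∀ y, 1 ≤ y → y ≤ 2 ^ n → op (2 ^ n) y = y) ∧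
    (∀ x y, 1 ≤ x → x < 2 ^ n → 1 ≤ y → y < 2 ^ n → op x (y + 1) = op (op x y) (x + 1)) ∧
    (∀ x y, 1 ≤ x → x ≤ 2 ^ n → 1 ≤ y → y ≤ 2 ^ n →
      (1 ≤ op x y ∧ op x y ≤ 2 ^ n ∧ (x < 2 ^ n → x < op x y))) := by
  have htop : ∀ y, 1 ≤ y → y ≤ 2 ^ n → op (2 ^ n) y = y := by
    intro y
    induction y with
    | zero => omega
    | succ y ihy =>
      intro _ hyN
      rcases Nat.eq_zero_or_pos y with rfl | hy0
      · exact htop1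
      · have hy' : op y 1 = y + 1 := hone y hy0 (by omega)
        have := hld (2 ^ n) y (Nat.one_le_two_pow) (le_refl _) hy0 (by omega)
        rw [hy', ihy hy0 (by omega), htop1] at this
        rw [this, hone y hy0 (by omega)]
  have hrec : ∀ x y, 1 ≤ x → x < 2 ^ n → 1 ≤ y → y < 2 ^ n →
      op x (y + 1) = op (op x y) (x + 1) := by
    intro x y hx1 hxN hy1 hyN
    have := hld x y hx1 (by omega) hy1 (by omega)
    rw [hone y hy1 hyN, hone x hx1 hxN] at this
    exact this
  refine ⟨htop, hrec, ?_⟩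
  refine downward_ind (N := 2 ^ n) ?_ ?_
  · intro x hN y hx1 hx2 hy1 hyN
    have hxe : x = 2 ^ n := by omega
    subst hxe
    rw [htop y hy1 hyN]
    exact ⟨hy1, hyN, by omega⟩
  · intro x hxN IH y hx1 hx2 hy1 hyN
    induction y with
    | zero => omega
    | succ y ihy
    =>
      rcases Nat.eq_zero_or_pos y with rfl | hy0
      · rw [hone x hx1 hxN]; omega
      · obtain ⟨a1, a2, a3⟩ := ihy hy0 (by omega)
        have hzgt : x < op x y := a3 hxN
        rw [hrec x y hx1 hxN hy0 (by omega)]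
        rcases Nat.eq_or_lt_of_le a2 with hzeq | hzlt
        · rw [hzeq, htop (x + 1) (by omega) (by omega)]
          omega
        · obtain ⟨b1, b2, b3⟩ := IH (op x y) hzgt (x + 1) (by omega) (by omega) (by omega) (by omega)
          exact ⟨b1, b2, fun _ => by have := b3 hzlt; omega⟩

end AbstractOp

/-! ### more mod-representative arithmetic -/

theorem lm_one {m : ℕ} : lm 1 m = 1 := by simp [lm]

theorem lm_succ_lt {x m : ℕ} (h1 : 1 ≤ x) (h : lm x m < m) : lm (x + 1) m = lm x m + 1 := by
  have hm2 : 2 ≤ m := by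
    rcases Nat.lt_or_ge m 2 with h2 | h2
    · interval_cases m <;> simp [lm] at h ⊢
    · exact h2
  simp only [lm] at *
  rw [show x + 1 - 1 = (x - 1) + 1 by omega, Nat.add_mod, Nat.mod_eq_of_lt (show 1 < m by omega),
    Nat.mod_eq_of_lt (by omega)]

theorem lm_succ_eq {x m : ℕ} (h1 : 1 ≤ x) (h : lm x m = m) : lm (x + 1) m = 1 := by
  have hm : 1 ≤ m := by simp only [lm] at h; omega
  rcases Nat.eq_or_lt_of_le hm with rfl | hm2
  · simp [lm, Nat.mod_one]
  simp only [lm] at *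
  rw [show x + 1 - 1 = (x - 1) + 1 by omega, Nat.add_mod, Nat.mod_eq_of_lt (show 1 < m by omega)]
  rw [show (x-1) % m = m - 1 by omega]
  rw [show m - 1 + 1 = m by omega, Nat.mod_self]

theorem lm_upper {z m : ℕ} (h1 : m < z) (h2 : z ≤ 2 * m) : z = m + lm z m := by
  have hm : 1 ≤ m := by omega
  simp only [lm]
  rw [Nat.mod_eq_sub_mod (by omega), Nat.mod_eq_of_lt (by omega)]
  omega

theorem lm_cases {z m : ℕ} (h1 : 1 ≤ z) (h2 : z ≤ 2 * m) : z = lm z m ∨ z = m + lm z m := by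
  by_cases h : z ≤ m
  · exact Or.inl (lm_eq_self h1 h).symm
  · exact Or.inr (lm_upper (by omega) h2)

theorem pow_succ_two (n : ℕ) : 2 ^ (n + 1) = 2 * 2 ^ n := by rw [pow_succ]; ring

/-! ### the congruence (projection) theorem -/

section Cong

variable {n : ℕ}

theorem laverCong (hB : ∀ a, 1 ≤ a → a ≤ 2 ^ n → laverTab n a (2 ^ n) = 2 ^ n) :
    ∀ x, 1 ≤ x → x ≤ 2 ^ (n + 1) → ∀ y, 1 ≤ y → y ≤ 2 ^ (n + 1) →
      lm (laverTab (n + 1) x y) (2 ^ n) = laverTab n (lm x (2 ^ n)) (lm y (2 ^ n)) := by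
  have hNN : 2 ^ (n + 1) = 2 * 2 ^ n := pow_succ_two n
  have hM1 : 1 ≤ 2 ^ n := Nat.one_le_two_pow
  refine downward_ind (N := 2 ^ (n + 1)) ?_ ?_
  · intro x hN hx1 hx2 y hy1 hyN
    have hxe : x = 2 ^ (n + 1) := by omega
    subst hxe
    rw [laverTab_top (le_refl _)]
    have e1 : lm (2 ^ (n + 1)) (2 ^ n) = 2 ^ n := by
      rw [(lm_eq_iff_dvd (by omega) hM1)]
      exact ⟨2, by omega⟩
    rw [e1, laverTab_top (le_refl _)]
  · intro x hxN IH hx1 hx2 y hy1 hyN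
    induction y with
    | zero => omega
    | succ y ihy =>
      have hlmx1 := lm_pos x (2 ^ n)
      have hlmxle := lm_le hM1 x
      rcases Nat.eq_zero_or_pos y with rfl | hy0
      · -- y = 1
        rw [laverTab_one hxN, show (0:ℕ) + 1 = 1 from rfl, lm_one]
        rcases Nat.eq_or_lt_of_le hlmxle with he | hlt
        · -- lm x M = M, i.e. x ∈ {M, 2M}; x < 2M so x = M
          rw [lm_succ_eq hx1 he, he, laverTab_top (le_refl _)]
        · rw [lm_succ_lt hx1 hlt, laverTab_one hlt]
      · -- step y → y+1
        have hstep := laverTab_succ (n := n + 1) hx1 hxN hy0 (by omega)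
        rw [hstep]
        have hz1 : 1 ≤ laverTab (n + 1) x y := laverTab_pos hx1 (by omega) hy0 (by omega)
        have hz2 : laverTab (n + 1) x y ≤ 2 ^ (n + 1) := laverTab_le hx1 (by omega) hy0 (by omega)
        have hzgt : x < laverTab (n + 1) x y := laverTab_gt hx1 hxN hy0 (by omega)
        rw [IH _ hzgt hz1 hz2 (x + 1) (by omega) (by omega)]
        rw [ihy hy0 (by omega)]
        have hlmy1 := lm_pos y (2 ^ n)
        have hlmyle := lm_le hM1 y
        -- goal : laverTab n (laverTab n (lm x M) (lm y M)) (lm (x+1) M)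
        --      = laverTab n (lm x M) (lm (y+1) M)
        rcases Nat.eq_or_lt_of_le hlmxle with hex | hltx
        · -- lm x M = M
          rw [hex, lm_succ_eq hx1 hex, laverTab_top (le_refl _)]
          rcases Nat.eq_or_lt_of_le hlmyle with hey | hlty
          · rw [hey, lm_succ_eq hy0 hey]
          · rw [lm_succ_lt hy0 hlty, laverTab_one hlty, laverTab_top (le_refl _)]
        · -- lm x M < M
          rw [lm_succ_lt hx1 hltx]
          rcases Nat.eq_or_lt_of_le hlmyle with hey | hlty
          · -- lm y M = M
            rw [hey, lm_succ_eq hy0 hey, hB (lm x (2 ^ n)) hlmx1 (by omega),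
              laverTab_top (le_refl _), laverTab_one hltx]
          · -- lm y M < M
            rw [lm_succ_lt hy0 hlty]
            rw [← laverTab_succ hlmx1 hltx hlmy1 (le_of_lt hlty)]

end Cong

/-! ### induction package predicates -/

def PerP (n : ℕ) : Prop := ∀ z, 1 ≤ z → z ≤ 2 ^ n → laverPi n z ∣ 2 ^ n

def TopperP (n : ℕ) : Prop :=
  ∀ m j, 1 ≤ m → m < 2 ^ n → m < 2 ^ (j + 1) → laverPi n (2 ^ n - m) ∣ 2 ^ j

def FixP (n : ℕ) : Prop := ∀ p t, 1 ≤ p → p < 2 ^ n → 1 ≤ t → t ≤ 2 ^ n →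
  (laverTab n p t = t ↔ 2 ^ n - 2 ^ (padicValNat 2 p) < t)

def AsP (n : ℕ) : Prop := ∀ q r, 1 ≤ q → q ≤ 2 ^ n → 1 ≤ r → r ≤ 2 ^ n →
  (∃ a, 1 ≤ a ∧ a ≤ 2 ^ n ∧ laverTab n a q = r) →
  (∃ b, 1 ≤ b ∧ b ≤ 2 ^ n ∧ laverTab n b r = q) → q = r

theorem dvd_pow2_of_lt {a k j : ℕ} (hd : a ∣ 2 ^ k) (hle : a < 2 ^ (j + 1)) : a ∣ 2 ^ j := by
  obtain ⟨i, _, rfl⟩ := (Nat.dvd_prime_pow Nat.prime_two).mp hd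
  refine pow_dvd_pow 2 ?_
  by_contra h
  push_neg at h
  have h2 : (2:ℕ) ^ (j + 1) ≤ 2 ^ i := Nat.pow_le_pow_right (by norm_num) (by omega)
  omega

section Step

variable {n : ℕ}

theorem step_B (hPER : PerP n) : ∀ a, 1 ≤ a → a ≤ 2 ^ n → laverTab n a (2 ^ n) = 2 ^ n := fun a h1 h2 =>
  laverTab_mult h1 h2 Nat.one_le_two_pow (le_refl _) (hPER a h1 h2)

theorem step_cong (hPER : PerP n) : ∀ x, 1 ≤ x → x ≤ 2 ^ (n + 1) → ∀ y, 1 ≤ y → y ≤ 2 ^ (n + 1) →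
    lm (laverTab (n + 1) x y) (2 ^ n) = laverTab n (lm x (2 ^ n)) (lm y (2 ^ n)) :=
  laverCong (step_B hPER)

theorem step_perstep (hPER : PerP n) : ∀ z, 1 ≤ z → z < 2 ^ (n + 1) →
    (laverPi (n + 1) z = laverPi n (lm z (2 ^ n)) ∧
      laverTab (n + 1) z (laverPi n (lm z (2 ^ n))) = 2 ^ (n + 1)) ∨
    (laverPi (n + 1) z = 2 * laverPi n (lm z (2 ^ n)) ∧
      laverTab (n + 1) z (laverPi n (lm z (2 ^ n))) = 2 ^ n) := by
  intro z hz1 hzN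
  have hNN : 2 ^ (n + 1) = 2 * 2 ^ n := pow_succ_two n
  have hM1 : 1 ≤ 2 ^ n := Nat.one_le_two_pow
  set a := lm z (2 ^ n) with ha
  have ha1 : 1 ≤ a := lm_pos z (2 ^ n)
  have haM : a ≤ 2 ^ n := lm_le hM1 z
  set q := laverPi n a with hq
  have hq1 : 1 ≤ q := laverPi_pos n a
  have hqM : q ≤ 2 ^ n := laverPi_le n a
  have hqdM : q ∣ 2 ^ n := hPER a ha1 haM
  -- value at position q is M or 2M
  have hvq : laverTab (n + 1) z q = 2 ^ n ∨ laverTab (n + 1) z q = 2 ^ (n + 1) := by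
    have h1 := step_cong hPER z hz1 (by omega) q hq1 (by omega)
    rw [lm_eq_self hq1 hqM, laverPi_spec ha1 haM] at h1
    have hv1 : 1 ≤ laverTab (n + 1) z q := laverTab_pos hz1 (by omega) hq1 (by omega)
    have hv2 : laverTab (n + 1) z q ≤ 2 ^ (n + 1) := laverTab_le hz1 (by omega) hq1 (by omega)
    rcases lm_cases (m := 2 ^ n) hv1 (by omega) with h | h
    · left; omega
    · right; omega
  -- q divides the new period
  set π := laverPi (n + 1) z with hπ
  have hπ1 : 1 ≤ π := laverPi_pos _ _
  have hπN : π ≤ 2 ^ (n + 1) := laverPi_le _ _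
  have hqdπ : q ∣ π := by
    have hspec := laverPi_spec (n := n + 1) hz1 (by omega)
    have h1 := step_cong hPER z hz1 (by omega) π hπ1 (by omega)
    rw [hspec] at h1
    have e1 : lm (2 ^ (n + 1)) (2 ^ n) = 2 ^ n :=
      (lm_eq_iff_dvd (by omega) hM1).mpr ⟨2, by omega⟩
    rw [e1] at h1
    have e2 : q ∣ lm π (2 ^ n) := by
      rw [← laverTab_top_iff ha1 haM (lm_pos π _) (lm_le hM1 π)]
      exact h1.symm
    exact (lm_dvd_iff hπ1 hM1 hqdM).mp e2
  rcases hvq with hvq | hvq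
  · -- value M : doubling
    right
    refine ⟨?_, hvq⟩
    have hπq : π ≠ q := by
      intro h
      rw [← h] at hvq
      rw [laverPi_spec hz1 (by omega)] at hvq
      omega
    have hq_le : q ≤ π := Nat.le_of_dvd (by omega) hqdπ
    have h2q : 2 * q ≤ π := by
      obtain ⟨k, hk⟩ := hqdπ
      have hk0 : k ≠ 0 := by rintro rfl; omega
      have hk1 : k ≠ 1 := by rintro rfl; rw [Nat.mul_one] at hk; exact hπq hk
      have h2k : 2 ≤ k := by omega
      have := Nat.mul_le_mul_left q h2k
      omega
    by_contra hne
    have hlt : 2 * q < π := by omega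
    -- strictly between M and 2M, but congruent to 0 mod M : contradiction
    have hzlt : z < 2 ^ (n + 1) := hzN
    have hmono1 : laverTab (n + 1) z q < laverTab (n + 1) z (2 * q) :=
      laverTab_strict hz1 hzlt (2 * q) (by omega) q hq1 (by omega)
    have hmono2 : laverTab (n + 1) z (2 * q) < laverTab (n + 1) z π := by
      have := laverTab_strict hz1 hzlt π (le_refl _) (2 * q) (by omega) hlt
      exact this
    rw [laverPi_spec hz1 (by omega)] at hmono2
    have hcong := step_cong hPER z hz1 (by omega) (2 * q) (by omega) (by omega)
    have e3 : q ∣ lm (2 * q) (2 ^ n) := (lm_dvd_iff (by omega) hM1 hqdM).mpr ⟨2, by ring⟩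
    have e4 : laverTab n a (lm (2 * q) (2 ^ n)) = 2 ^ n :=
      laverTab_mult ha1 haM (lm_pos _ _) (lm_le hM1 _) e3
    rw [e4] at hcong
    have hv1 : 1 ≤ laverTab (n + 1) z (2 * q) := laverTab_pos hz1 (by omega) (by omega) (by omega)
    have hv2 : laverTab (n + 1) z (2 * q) ≤ 2 ^ (n + 1) :=
      laverTab_le hz1 (by omega) (by omega) (by omega)
    rcases lm_cases (m := 2 ^ n) hv1 (by omega : laverTab (n+1) z (2*q) ≤ 2 * 2 ^ n) with h | h <;> omega
  · -- value 2M : no doubling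
    left
    have hle : π ≤ q := Nat.find_le ⟨hq1, by omega, fun _ => hvq⟩
    have : q ≤ π := Nat.le_of_dvd (by omega) hqdπ
    exact ⟨by omega, hvq⟩

theorem step_PER (hPER : PerP n) : PerP (n + 1) := by
  intro z hz1 hzN
  have hNN : 2 ^ (n + 1) = 2 * 2 ^ n := pow_succ_two n
  rcases Nat.eq_or_lt_of_le hzN with rfl | hlt
  · rw [laverPi_topRow]
  · have ha1 : 1 ≤ lm z (2 ^ n) := lm_pos _ _
    have haM : lm z (2 ^ n) ≤ 2 ^ n := lm_le Nat.one_le_two_pow _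
    have hqd : laverPi n (lm z (2 ^ n)) ∣ 2 ^ n := hPER _ ha1 haM
    rcases step_perstep hPER z hz1 hlt with ⟨h, _⟩ | ⟨h, _⟩
    · rw [h]; exact dvd_trans hqd ⟨2, by omega⟩
    · rw [h, hNN]; exact Nat.mul_dvd_mul_left 2 hqd

theorem step_B' (hPER : PerP n) : ∀ z, 1 ≤ z → z ≤ 2 ^ (n + 1) → laverTab (n + 1) z (2 ^ (n + 1)) = 2 ^ (n + 1) :=
  fun z h1 h2 =>
    laverTab_mult h1 h2 Nat.one_le_two_pow (le_refl _) (step_PER hPER z h1 h2)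

theorem step_pi_dvd_M (hPER : PerP n) : ∀ z, 1 ≤ z → z < 2 ^ (n + 1) → laverPi (n + 1) z ∣ 2 ^ n := by
  intro z h1 h2
  refine dvd_pow2_of_lt (step_PER hPER z h1 (by omega)) ?_
  have := laverPi_bound (n := n + 1) h1 h2
  omega

theorem step_rowM (hPER : PerP n) : ∀ y, 1 ≤ y → y ≤ 2 ^ (n + 1) →
    laverTab (n + 1) (2 ^ n) y = 2 ^ n + lm y (2 ^ n) := by
  intro y hy1 hyN
  have hNN : 2 ^ (n + 1) = 2 * 2 ^ n := pow_succ_two n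
  have hM1 : 1 ≤ 2 ^ n := Nat.one_le_two_pow
  have hcong := step_cong hPER (2 ^ n) hM1 (by omega) y hy1 hyN
  rw [lm_eq_self hM1 (le_refl _), laverTab_top (le_refl _)] at hcong
  have hgt : 2 ^ n < laverTab (n + 1) (2 ^ n) y := laverTab_gt hM1 (by omega) hy1 hyN
  have hle : laverTab (n + 1) (2 ^ n) y ≤ 2 ^ (n + 1) := laverTab_le hM1 (by omega) hy1 hyN
  have := lm_upper hgt (show laverTab (n+1) (2^n) y ≤ 2 * 2 ^ n by omega)
  omega

theorem step_halfpi (hPER : PerP n) : laverPi (n + 1) (2 ^ n) = 2 ^ n := by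
  have hNN : 2 ^ (n + 1) = 2 * 2 ^ n := pow_succ_two n
  have hM1 : 1 ≤ 2 ^ n := Nat.one_le_two_pow
  refine laverPi_eq hM1 (by omega) hM1 (by omega) ?_ ?_
  · rw [step_rowM hPER (2 ^ n) hM1 (by omega), lm_eq_self hM1 (le_refl _)]
    omega
  · intro y hy1 hy2
    rw [step_rowM hPER y hy1 (by omega), lm_eq_self hy1 (by omega)]
    omega

theorem step_uiso (hPER : PerP n) : ∀ x, 1 ≤ x → x ≤ 2 ^ n → ∀ y, 1 ≤ y → y ≤ 2 ^ n →
    laverTab (n + 1) (2 ^ n + x) (2 ^ n + y) = 2 ^ n + laverTab n x y := by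
  have hNN : 2 ^ (n + 1) = 2 * 2 ^ n := pow_succ_two n
  have hM1 : 1 ≤ 2 ^ n := Nat.one_le_two_pow
  -- the shifted operation
  set f : ℕ → ℕ → ℕ := fun x y => laverTab (n + 1) (2 ^ n + x) (2 ^ n + y) - 2 ^ n with hf
  have hupper : ∀ x y, 1 ≤ x → x ≤ 2 ^ n → 1 ≤ y → y ≤ 2 ^ n →
      2 ^ n < laverTab (n + 1) (2 ^ n + x) (2 ^ n + y) ∧
      laverTab (n + 1) (2 ^ n + x) (2 ^ n + y) ≤ 2 ^ (n + 1) := by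
    intro x y hx1 hx2 hy1 hy2
    constructor
    · rcases Nat.eq_or_lt_of_le hx2 with rfl | hlt
      · rw [laverTab_top (by omega)]; omega
      · have := laverTab_gt (n := n + 1) (x := 2 ^ n + x) (y := 2 ^ n + y)
          (by omega) (by omega) (by omega) (by omega)
        omega
    · exact laverTab_le (by omega) (by omega) (by omega) (by omega)
  -- G lemma
  have hG : ∀ x, 1 ≤ x → x < 2 ^ n → laverTab (n + 1) (2 ^ n + x) (2 ^ n) = 2 ^ (n + 1) := by
    intro x hx1 hx2
    exact laverTab_mult (by omega) (by omega) hM1 (by omega)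
      (step_pi_dvd_M hPER (2 ^ n + x) (by omega) (by omega))
  have key := laverTab_uniq (n := n) (f := f) ?_ ?_ ?_ ?_
  · intro x hx1 hx2 y hy1 hy2
    have := key x hx1 hx2 y hy1 hy2
    have hb := hupper x y hx1 hx2 hy1 hy2
    simp only [hf] at this
    omega
  · -- f x 1 = x + 1
    intro x hx1 hx2
    have e1 : laverTab (n + 1) (2 ^ n + x) (2 ^ n + 1) =
        laverTab (n + 1) (laverTab (n + 1) (2 ^ n + x) (2 ^ n)) (2 ^ n + x + 1) :=
      laverTab_succ (by omega) (by omega) hM1 (by omega)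
    simp only [hf]
    rw [e1, hG x hx1 hx2, laverTab_top (le_refl _)]
    omega
  · -- f M y = y
    intro y hy1 hy2
    simp only [hf]
    rw [laverTab_top (by omega)]
    omega
  · -- row recursion
    intro x y hx1 hx2 hy1 hy2
    simp only [hf]
    have e1 : laverTab (n + 1) (2 ^ n + x) (2 ^ n + (y + 1)) =
        laverTab (n + 1) (laverTab (n + 1) (2 ^ n + x) (2 ^ n + y)) (2 ^ n + x + 1) := by
      rw [show 2 ^ n + (y + 1) = (2 ^ n + y) + 1 by omega]
      exact laverTab_succ (by omega) (by omega) (by omega) (by omega)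
    have hb := hupper x y hx1 (by omega) hy1 (by omega)
    have e2 : 2 ^ n + (laverTab (n + 1) (2 ^ n + x) (2 ^ n + y) - 2 ^ n) =
        laverTab (n + 1) (2 ^ n + x) (2 ^ n + y) := by omega
    rw [e1, show 2 ^ n + x + 1 = 2 ^ n + (x + 1) by omega, e2]
  · -- closure and increase
    intro x y hx1 hx2 hy1 hy2
    have hb := hupper x y hx1 hx2 hy1 hy2
    simp only [hf]
    refine ⟨by omega, by omega, fun hlt => ?_⟩
    have := laverTab_gt (n := n + 1) (x := 2 ^ n + x) (y := 2 ^ n + y)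
      (by omega) (by omega) (by omega) (by omega)
    omega

theorem step_upperdesc (hPER : PerP n) : ∀ x, 1 ≤ x → x < 2 ^ n → ∀ y, 1 ≤ y → y ≤ 2 ^ (n + 1) →
    laverTab (n + 1) (2 ^ n + x) y = 2 ^ n + laverTab n x (lm y (2 ^ n)) := by
  intro x hx1 hx2 y hy1 hy2
  have hNN : 2 ^ (n + 1) = 2 * 2 ^ n := pow_succ_two n
  have hM1 : 1 ≤ 2 ^ n := Nat.one_le_two_pow
  by_cases h : y ≤ 2 ^ n
  · -- shift up by M using periodicity
    have hdvd := step_pi_dvd_M hPER (2 ^ n + x) (by omega) (by omega)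
    obtain ⟨k, hk⟩ := hdvd
    have e0 : laverTab (n + 1) (2 ^ n + x) (y + 2 ^ n) = laverTab (n + 1) (2 ^ n + x) y := by
      rw [show y + 2 ^ n = y + laverPi (n + 1) (2 ^ n + x) * k by omega]
      have : ∀ j y', 1 ≤ y' → y' + laverPi (n + 1) (2 ^ n + x) * j ≤ 2 ^ (n + 1) →
          laverTab (n + 1) (2 ^ n + x) (y' + laverPi (n + 1) (2 ^ n + x) * j) =
            laverTab (n + 1) (2 ^ n + x) y' := by
        intro j
        induction j with
        | zero => intro y' _ _; simp
        | succ j ihj =>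
          intro y' hy'1 hy'2
          have hpi1 := laverPi_pos (n + 1) (2 ^ n + x)
          have hms : laverPi (n + 1) (2 ^ n + x) * (j + 1) =
              laverPi (n + 1) (2 ^ n + x) * j + laverPi (n + 1) (2 ^ n + x) := Nat.mul_succ _ _
          rw [Nat.mul_succ, ← Nat.add_assoc]
          rw [laverTab_period (by omega) (by omega) _ (by omega) (by omega)]
          exact ihj y' hy'1 (by omega)
      exact this k y hy1 (by omega)
    rw [← e0, show y + 2 ^ n = 2 ^ n + y by omega, step_uiso hPER x hx1 (by omega) y hy1 h,
      lm_eq_self hy1 h]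
  · -- y in the upper half
    push_neg at h
    have hy' := lm_upper h (by omega : y ≤ 2 * 2 ^ n)
    have e1 : lm y (2 ^ n) = y - 2 ^ n := by omega
    rw [e1]
    have h2 := step_uiso hPER x hx1 (by omega) (y - 2 ^ n) (by omega) (by omega)
    rw [show 2 ^ n + (y - 2 ^ n) = y by omega] at h2
    exact h2

theorem step_upperpi (hPER : PerP n) : ∀ x, 1 ≤ x → x < 2 ^ n →
    laverPi (n + 1) (2 ^ n + x) = laverPi n x := by
  intro x hx1 hx2
  have hNN : 2 ^ (n + 1) = 2 * 2 ^ n := pow_succ_two n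
  have hM1 : 1 ≤ 2 ^ n := Nat.one_le_two_pow
  have hp1 := laverPi_pos n x
  have hpM := laverPi_le n x
  refine laverPi_eq (by omega) (by omega) hp1 (by omega) ?_ ?_
  · rw [step_upperdesc hPER x hx1 hx2 _ hp1 (by omega), lm_eq_self hp1 hpM,
      laverPi_spec hx1 (by omega)]
    omega
  · intro y hy1 hy2
    rw [step_upperdesc hPER x hx1 hx2 y hy1 (by omega), lm_eq_self hy1 (by omega)]
    have := laverPi_min hx1 (show x ≤ 2 ^ n by omega) hy1 hy2
    have hle := laverTab_le hx1 (show x ≤ 2 ^ n by omega) hy1 (show y ≤ 2 ^ n by omega)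
    omega

theorem step_TOPPER (hPER : PerP n) (hTOP : TopperP n) : TopperP (n + 1) := by
  intro m j h1 h2 h3
  have hNN : 2 ^ (n + 1) = 2 * 2 ^ n := pow_succ_two n
  have hM1 : 1 ≤ 2 ^ n := Nat.one_le_two_pow
  rcases Nat.lt_trichotomy m (2 ^ n) with hlt | heq | hgt
  · -- upper row: reduce level
    have e1 : 2 ^ (n + 1) - m = 2 ^ n + (2 ^ n - m) := by omega
    rw [e1, step_upperpi hPER _ (by omega) (by omega)]
    exact hTOP m j h1 hlt h3
  · -- half row
    subst heq
    rw [show 2 ^ (n + 1) - 2 ^ n = 2 ^ n by omega, step_halfpi hPER]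
    refine pow_dvd_pow 2 ?_
    by_contra hc
    push_neg at hc
    have h4 : (2:ℕ) ^ (j + 1) ≤ 2 ^ n := Nat.pow_le_pow_right (by norm_num) (by omega)
    omega
  · -- low row near the middle: use the trivial bound
    have hz1 : 1 ≤ 2 ^ (n + 1) - m := by omega
    have hzN : 2 ^ (n + 1) - m < 2 ^ (n + 1) := by omega
    have hb := laverPi_bound (n := n + 1) hz1 hzN
    refine dvd_pow2_of_lt (step_PER hPER _ hz1 (by omega)) ?_
    omega

end Step

/-! ### 2-adic valuation helpers -/

theorem lm_add_dvd {y m d : ℕ} (h1 : 1 ≤ y) (hm : 1 ≤ m) (hd : m ∣ d) :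
    lm (y + d) m = lm y m := by
  obtain ⟨k, rfl⟩ := hd
  induction k with
  | zero => simp
  | succ k ih =>
    rw [Nat.mul_succ, ← Nat.add_assoc]
    rw [show y + m * k + m = (y + m * k) + m by omega, lm_add (by omega)]
    exact ih

theorem lm_sub {A e r : ℕ} (hd : e ∣ A) (h1 : 1 ≤ r) (h2 : r < e) (h3 : r < A) :
    lm (A - r) e = e - r := by
  obtain ⟨k, rfl⟩ := hd
  have hk1 : 1 ≤ k := by
    rcases Nat.eq_zero_or_pos k with rfl | h
    · simp at h3
    · exact h
  obtain ⟨k', rfl⟩ : ∃ k', k = k' + 1 := ⟨k - 1, by omega⟩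
  simp only [lm]
  have hms : e * (k' + 1) = e * k' + e := Nat.mul_succ _ _
  rw [show e * (k' + 1) - r - 1 = (e - r - 1) + k' * e by
    rw [hms]; have : k' * e = e * k' := Nat.mul_comm _ _; omega]
  rw [Nat.add_mul_mod_self_right, Nat.mod_eq_of_lt (by omega)]
  omega

section V2

theorem v2_dvd {p : ℕ} (hp : 1 ≤ p) : 2 ^ padicValNat 2 p ∣ p := pow_padicValNat_dvd

theorem v2_le {p : ℕ} (hp : 1 ≤ p) : 2 ^ padicValNat 2 p ≤ p :=
  Nat.le_of_dvd (by omega) (v2_dvd hp)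

theorem v2_pos (p : ℕ) : 1 ≤ 2 ^ padicValNat 2 p := Nat.one_le_two_pow

theorem v2_not_dvd {p : ℕ} (hp : 1 ≤ p) : ¬ 2 ^ (padicValNat 2 p + 1) ∣ p :=
  pow_succ_padicValNat_not_dvd (by omega)

theorem v2_prime_pow (n : ℕ) : padicValNat 2 (2 ^ n) = n := by
  simpa using padicValNat.prime_pow (p := 2) n

theorem v2_shift {x n : ℕ} (hx1 : 1 ≤ x) (hx2 : x < 2 ^ n) :
    padicValNat 2 (2 ^ n + x) = padicValNat 2 x := by
  have hd := v2_dvd hx1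
  have hnd := v2_not_dvd hx1
  have hvn : padicValNat 2 x < n := by
    have h2 := v2_le hx1
    by_contra h
    push_neg at h
    have h3 : (2:ℕ) ^ n ≤ 2 ^ padicValNat 2 x := Nat.pow_le_pow_right (by norm_num) h
    omega
  have hdn : (2:ℕ) ^ padicValNat 2 x ∣ 2 ^ n := pow_dvd_pow 2 (by omega)
  have hdn1 : (2:ℕ) ^ (padicValNat 2 x + 1) ∣ 2 ^ n := pow_dvd_pow 2 (by omega)
  have h1 : 2 ^ padicValNat 2 x ∣ 2 ^ n + x := Dvd.dvd.add hdn hd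
  have h2 : ¬ 2 ^ (padicValNat 2 x + 1) ∣ 2 ^ n + x := fun h => hnd ((Nat.dvd_add_right hdn1).mp h)
  have hge : padicValNat 2 x ≤ padicValNat 2 (2 ^ n + x) :=
    (padicValNat_dvd_iff_le (p := 2) (by omega)).mp h1
  have hlt : padicValNat 2 (2 ^ n + x) < padicValNat 2 x + 1 := by
    by_contra h
    push_neg at h
    exact h2 ((padicValNat_dvd_iff_le (p := 2) (by omega)).mpr h)
  omega

end V2

section Fix

variable {n : ℕ}

/-- the level-`n` period divides the level-`n+1` period for lower rows -/
theorem step_edvd (hPER : PerP n) : ∀ p, 1 ≤ p → p < 2 ^ n →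
    laverPi n p ∣ laverPi (n + 1) p := by
  intro p hp1 hp2
  have hNN : 2 ^ (n + 1) = 2 * 2 ^ n := pow_succ_two n
  rcases step_perstep hPER p (by omega) (by omega) with ⟨h, _⟩ | ⟨h, _⟩
  · rw [h, lm_eq_self hp1 (by omega)]
  · rw [h, lm_eq_self hp1 (by omega)]
    exact dvd_mul_left _ 2

/-- `2^(v₂ p) ≤ laverPi n p` for `p < 2^n` -/
theorem step_Vle (hPER : PerP n) (hFIX : FixP n) :
    ∀ p, 1 ≤ p → p < 2 ^ n → 2 ^ padicValNat 2 p ≤ laverPi n p := by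
  intro p hp1 hp2
  by_contra hlt
  push_neg at hlt
  have he1 : 1 ≤ laverPi n p := laverPi_pos n p
  have heM : laverPi n p ≤ 2 ^ n - p := laverPi_bound hp1 hp2
  have hVp : 2 ^ padicValNat 2 p ≤ p := v2_le hp1
  have hfix : laverTab n p (2 ^ n - laverPi n p) = 2 ^ n - laverPi n p := by
    rw [hFIX p (2 ^ n - laverPi n p) hp1 hp2 (by omega) (by omega)]
    omega
  have hdvd : laverPi n p ∣ 2 ^ n - laverPi n p :=
    Nat.dvd_sub (hPER p hp1 (by omega)) (dvd_refl _)
  have := laverTab_mult hp1 (by omega) (show 1 ≤ 2 ^ n - laverPi n p by omega)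
    (by omega) hdvd
  omega

/-- THE TAIL THEOREM : the last `2^(v₂ p)` entries of the first period of a
lower row `p` at level `n+1` are `2^(n+1) - r`. -/
theorem step_TAIL (hPER : PerP n) (hTOP : TopperP n) (hFIX : FixP n) :
    ∀ p, 1 ≤ p → p < 2 ^ n → ∀ r, r < 2 ^ padicValNat 2 p →
      laverTab (n + 1) p (laverPi (n + 1) p - r) = 2 ^ (n + 1) - r := by
  intro p hp1 hp2
  have hNN : 2 ^ (n + 1) = 2 * 2 ^ n := pow_succ_two n
  have hM1 : 1 ≤ 2 ^ n := Nat.one_le_two_pow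
  have hV1 : 1 ≤ 2 ^ padicValNat 2 p := v2_pos p
  have hVe : 2 ^ padicValNat 2 p ≤ laverPi n p := step_Vle hPER hFIX p hp1 hp2
  have he1 : 1 ≤ laverPi n p := laverPi_pos n p
  have heM : laverPi n p ≤ 2 ^ n - p := laverPi_bound hp1 hp2
  have hedvd : laverPi n p ∣ 2 ^ n := hPER p hp1 (by omega)
  have hπdM : laverPi (n + 1) p ∣ 2 ^ n := step_pi_dvd_M hPER p (by omega) (by omega)
  have hπ1 : 1 ≤ laverPi (n + 1) p := laverPi_pos _ _
  have hπM : laverPi (n + 1) p ≤ 2 ^ n := Nat.le_of_dvd (by omega) hπdM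
  have heπ : laverPi n p ∣ laverPi (n + 1) p := step_edvd hPER p hp1 hp2
  have heπle : laverPi n p ≤ laverPi (n + 1) p := Nat.le_of_dvd (by omega) heπ
  -- level-n tail values
  have hLtail : ∀ r, r < 2 ^ padicValNat 2 p →
      laverTab n p (laverPi n p - r) = 2 ^ n - r := by
    intro r hr
    rcases Nat.eq_zero_or_pos r with rfl | hr1
    · simpa using laverPi_spec hp1 (le_of_lt hp2)
    · have hfix : laverTab n p (2 ^ n - r) = 2 ^ n - r := by
        rw [hFIX p (2 ^ n - r) hp1 hp2 (by omega) (by omega)]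
        omega
      have h1 : laverTab n p (2 ^ n - r) = laverTab n p (lm (2 ^ n - r) (laverPi n p)) :=
        laverTab_reduce hp1 (by omega) _ (by omega) (by omega)
      rw [h1, lm_sub hedvd hr1 (by omega) (by omega)] at hfix
      exact hfix
  intro r
  induction r with
  | zero =>
    intro _
    simpa using laverPi_spec (n := n + 1) hp1 (by omega)
  | succ r ihr =>
    intro hr
    have hprev := ihr (by omega)
    -- the value just before
    have hpos : r + 1 < laverPi (n + 1) p := by omega
    have hy1 : 1 ≤ laverPi (n + 1) p - (r + 1) := by omega
    have hcong := step_cong hPER p (by omega) (by omega) (laverPi (n + 1) p - (r + 1))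
      hy1 (by omega)
    rw [lm_eq_self hp1 (by omega), lm_eq_self hy1 (by omega)] at hcong
    have h3 : laverTab n p (laverPi (n + 1) p - (r + 1)) = 2 ^ n - (r + 1) := by
      rw [laverTab_reduce hp1 (by omega) _ hy1 (by omega),
        lm_sub heπ (by omega) (by omega) (by omega)]
      exact hLtail (r + 1) hr
    rw [h3] at hcong
    have hw1 : 1 ≤ laverTab (n + 1) p (laverPi (n + 1) p - (r + 1)) :=
      laverTab_pos (by omega) (by omega) hy1 (by omega)
    have hw2 : laverTab (n + 1) p (laverPi (n + 1) p - (r + 1)) ≤ 2 ^ (n + 1) :=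
      laverTab_le (by omega) (by omega) hy1 (by omega)
    rcases lm_cases (m := 2 ^ n) hw1 (by omega) with hcase | hcase
    · -- low value : derive a contradiction
      exfalso
      set w := laverTab (n + 1) p (laverPi (n + 1) p - (r + 1)) with hwdef
      have hwval : w = 2 ^ n - (r + 1) := by omega
      -- the successor position
      have hsucc : laverTab (n + 1) p (laverPi (n + 1) p - r) =
          laverTab (n + 1) w (p + 1) := by
        rw [show laverPi (n + 1) p - r = (laverPi (n + 1) p - (r + 1)) + 1 by omega]
        rw [laverTab_succ (by omega) (by omega) hy1 (by omega)]
      -- v ≥ 1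
      have hv1 : 1 ≤ padicValNat 2 p := by
        by_contra hv
        push_neg at hv
        have h0 : padicValNat 2 p = 0 := by omega
        rw [h0, pow_zero] at hr
        omega
      -- the period of row w divides p
      have hq' : laverPi n (2 ^ n - (r + 1)) ∣ 2 ^ (padicValNat 2 p - 1) := by
        refine hTOP (r + 1) (padicValNat 2 p - 1) (by omega) (by omega) ?_
        rw [show padicValNat 2 p - 1 + 1 = padicValNat 2 p by omega]
        exact hr
      have hw1' : 1 ≤ w := by omega
      have hwM : w < 2 ^ n := by omega
      have hπ'd : laverPi (n + 1) w ∣ 2 ^ padicValNat 2 p := by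
        have h2 : (2:ℕ) ^ (padicValNat 2 p - 1) * 2 = 2 ^ padicValNat 2 p := by
          rw [← pow_succ]
          congr 1
          omega
        rcases step_perstep hPER w (by omega) (by omega) with ⟨h, _⟩ | ⟨h, _⟩
        · rw [h, lm_eq_self hw1' (by omega), hwval]
          exact dvd_trans hq' ⟨2, by omega⟩
        · rw [h, lm_eq_self hw1' (by omega), hwval]
          obtain ⟨c, hc⟩ := hq'
          exact ⟨c, by rw [← h2, hc]; ring⟩
      have hπ'p : laverPi (n + 1) w ∣ p := dvd_trans hπ'd (v2_dvd hp1)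
      -- evaluate row w at column p+1
      have hπ'1 : 1 ≤ laverPi (n + 1) w := laverPi_pos _ _
      have hlm1 : lm (p + 1) (laverPi (n + 1) w) = 1 := by
        have hlmp : lm p (laverPi (n + 1) w) = laverPi (n + 1) w :=
          (lm_eq_iff_dvd hp1 hπ'1).mpr hπ'p
        exact lm_succ_eq hp1 hlmp
      have heval : laverTab (n + 1) w (p + 1) = w + 1 := by
        rw [laverTab_reduce hw1' (by omega) (p + 1) (by omega) (by omega), hlm1,
          laverTab_one (by omega)]
      rw [hsucc, heval] at hprev
      omega
    · -- high value : done
      omega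

/-- THE FIXED-POINT THEOREM at level `n+1` -/
theorem step_FIX (hPER : PerP n) (hTOP : TopperP n) (hFIX : FixP n) : FixP (n + 1) := by
  intro p t hp1 hp2 ht1 ht2
  have hNN : 2 ^ (n + 1) = 2 * 2 ^ n := pow_succ_two n
  have hM1 : 1 ≤ 2 ^ n := Nat.one_le_two_pow
  rcases Nat.lt_trichotomy p (2 ^ n) with hplt | hpeq | hpgt
  · -- p < 2^n
    have hV1 : 1 ≤ 2 ^ padicValNat 2 p := v2_pos p
    have hVp : 2 ^ padicValNat 2 p ≤ p := v2_le hp1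
    have hVe : 2 ^ padicValNat 2 p ≤ laverPi n p := step_Vle hPER hFIX p hp1 hplt
    have heπ : laverPi n p ∣ laverPi (n + 1) p := step_edvd hPER p hp1 hplt
    have hπ1 : 1 ≤ laverPi (n + 1) p := laverPi_pos _ _
    have hπdM : laverPi (n + 1) p ∣ 2 ^ n := step_pi_dvd_M hPER p (by omega) (by omega)
    have hπM : laverPi (n + 1) p ≤ 2 ^ n := Nat.le_of_dvd (by omega) hπdM
    have hVπ : 2 ^ padicValNat 2 p ≤ laverPi (n + 1) p :=
      le_trans hVe (Nat.le_of_dvd (by omega) heπ)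
    have hπdN : laverPi (n + 1) p ∣ 2 ^ (n + 1) := dvd_trans hπdM ⟨2, by omega⟩
    constructor
    · -- forward
      intro htt
      have hcong := step_cong hPER p (by omega) (by omega) t ht1 ht2
      rw [lm_eq_self hp1 (by omega), htt] at hcong
      have hlmt1 := lm_pos t (2 ^ n)
      have hlmtM := lm_le hM1 t
      have hfixn : 2 ^ n - 2 ^ padicValNat 2 p < lm t (2 ^ n) := by
        rw [← hFIX p (lm t (2 ^ n)) hp1 hplt hlmt1 hlmtM]
        exact hcong.symm
      set r := 2 ^ n - lm t (2 ^ n) with hrdef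
      have hrV : r < 2 ^ padicValNat 2 p := by omega
      rcases Nat.eq_zero_or_pos r with hr0 | hr1
      · -- r = 0 : lm t = 2^n, so t = 2^n or 2^(n+1)
        have hlmt : lm t (2 ^ n) = 2 ^ n := by omega
        rcases lm_cases (m := 2 ^ n) ht1 (by omega) with hc | hc
        · -- t = 2^n : but tab p 2^n = 2^(n+1) ≠ 2^n
          exfalso
          have := laverTab_mult (n := n + 1) (by omega) (by omega) (x := p) (y := t)
            (by omega) (by omega) (by rw [hc, hlmt]; exact hπdM)
          omega
        · omega
      · -- r ≥ 1
        have hred : laverTab (n + 1) p t = laverTab (n + 1) p (lm t (laverPi (n + 1) p)) :=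
          laverTab_reduce (by omega) (by omega) t ht1 (by omega)
        rcases lm_cases (m := 2 ^ n) ht1 (by omega) with hc | hc
        · -- t = 2^n - r : impossible
          exfalso
          have hlm2 : lm t (laverPi (n + 1) p) = laverPi (n + 1) p - r := by
            rw [hc, show lm t (2 ^ n) = 2 ^ n - r by omega]
            exact lm_sub hπdM hr1 (by omega) (by omega)
          rw [hlm2, step_TAIL hPER hTOP hFIX p hp1 hplt r hrV] at hred
          omega
        · -- t = 2^(n+1) - r  : the good case
          omega
    · -- backward
      intro hbig
      set r := 2 ^ (n + 1) - t with hrdef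
      have hrV : r < 2 ^ padicValNat 2 p := by omega
      rcases Nat.eq_zero_or_pos r with hr0 | hr1
      · have : t = 2 ^ (n + 1) := by omega
        rw [this]
        exact step_B' hPER p (by omega) (by omega)
      · have hred : laverTab (n + 1) p t = laverTab (n + 1) p (lm t (laverPi (n + 1) p)) :=
          laverTab_reduce (by omega) (by omega) t ht1 (by omega)
        have hlm2 : lm t (laverPi (n + 1) p) = laverPi (n + 1) p - r := by
          rw [show t = 2 ^ (n + 1) - r by omega]
          exact lm_sub hπdN hr1 (by omega) (by omega)
        rw [hlm2, step_TAIL hPER hTOP hFIX p hp1 hplt r hrV] at hred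
        omega
  · -- p = 2^n
    subst hpeq
    rw [step_rowM hPER t ht1 ht2, v2_prime_pow n]
    have hlmt1 := lm_pos t (2 ^ n)
    have hlmtM := lm_le hM1 t
    constructor
    · intro h
      omega
    · intro h
      have := lm_upper (show 2 ^ n < t by omega) (by omega)
      omega
  · -- p > 2^n
    set x := p - 2 ^ n with hxdef
    have hx1 : 1 ≤ x := by omega
    have hx2 : x < 2 ^ n := by omega
    have hpx : p = 2 ^ n + x := by omega
    have hdesc := step_upperdesc hPER x hx1 hx2 t ht1 ht2
    rw [← hpx] at hdesc
    have hv2 : padicValNat 2 p = padicValNat 2 x := by rw [hpx]; exact v2_shift hx1 hx2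
    have hVx : 2 ^ padicValNat 2 x ≤ x := v2_le hx1
    have hlmt1 := lm_pos t (2 ^ n)
    have hlmtM := lm_le hM1 t
    have htabn1 : 1 ≤ laverTab n x (lm t (2 ^ n)) := laverTab_pos hx1 (by omega) hlmt1 hlmtM
    have htabn2 : laverTab n x (lm t (2 ^ n)) ≤ 2 ^ n := laverTab_le hx1 (by omega) hlmt1 hlmtM
    rw [hdesc, hv2]
    constructor
    · intro h
      have htgt : 2 ^ n < t := by omega
      have hlmup := lm_upper htgt (by omega)
      have : laverTab n x (lm t (2 ^ n)) = lm t (2 ^ n) := by omega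
      have := (hFIX x (lm t (2 ^ n)) hx1 hx2 hlmt1 hlmtM).mp this
      omega
    · intro h
      have htgt : 2 ^ n < t := by omega
      have hlmup := lm_upper htgt (by omega)
      have : laverTab n x (lm t (2 ^ n)) = lm t (2 ^ n) :=
        (hFIX x (lm t (2 ^ n)) hx1 hx2 hlmt1 hlmtM).mpr (by omega)
      omega

/-- antisymmetry at level `n+1` -/
theorem step_AS (hPER : PerP n) (hTOP : TopperP n) (hFIX : FixP n) (hAS : AsP n) :
    AsP (n + 1) := by
  intro q r hq1 hq2 hr1 hr2 ⟨a, ha1, ha2, hav⟩ ⟨b, hb1, hb2, hbv⟩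
  have hNN : 2 ^ (n + 1) = 2 * 2 ^ n := pow_succ_two n
  have hM1 : 1 ≤ 2 ^ n := Nat.one_le_two_pow
  have hFIX' := step_FIX hPER hTOP hFIX
  by_contra hne
  -- project to level n
  have hc1 := step_cong hPER a ha1 ha2 q hq1 hq2
  have hc2 := step_cong hPER b hb1 hb2 r hr1 hr2
  rw [hav] at hc1
  rw [hbv] at hc2
  have hlmq := hAS (lm q (2 ^ n)) (lm r (2 ^ n)) (lm_pos _ _) (lm_le hM1 _)
    (lm_pos _ _) (lm_le hM1 _)
    ⟨lm a (2 ^ n), lm_pos _ _, lm_le hM1 _, hc1.symm⟩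
    ⟨lm b (2 ^ n), lm_pos _ _, lm_le hM1 _, hc2.symm⟩
  -- so q and r differ by 2^n ; get c with tab c (s + 2^n) = s
  set s := lm q (2 ^ n) with hs
  have hs1 : 1 ≤ s := lm_pos _ _
  have hsM : s ≤ 2 ^ n := lm_le hM1 _
  have hcex : ∃ c, 1 ≤ c ∧ c ≤ 2 ^ (n + 1) ∧ laverTab (n + 1) c (s + 2 ^ n) = s := by
    rcases lm_cases (m := 2 ^ n) hq1 (by omega) with hcq | hcq <;>
      rcases lm_cases (m := 2 ^ n) hr1 (by omega) with hcr | hcr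
    · exfalso; omega
    · exact ⟨b, hb1, hb2, by rw [← hlmq] at hcr; rw [show s + 2 ^ n = r by omega, hbv]; omega⟩
    · exact ⟨a, ha1, ha2, by rw [show s + 2 ^ n = q by omega, hav]; rw [← hlmq] at hcr; omega⟩
    · exfalso; rw [← hlmq] at hcr; omega
  obtain ⟨c, hc1', hc2', hcv⟩ := hcex
  have hcN : c < 2 ^ (n + 1) := by
    rcases Nat.eq_or_lt_of_le hc2' with rfl | h
    · exfalso
      rw [laverTab_top (le_refl _)] at hcv
      omega
    · exact h
  -- reduce the position s + 2^n to s
  have hπc : laverPi (n + 1) c ∣ 2 ^ n := step_pi_dvd_M hPER c hc1' hcN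
  have hred1 : laverTab (n + 1) c (s + 2 ^ n) = laverTab (n + 1) c s := by
    rw [laverTab_reduce hc1' (by omega) (s + 2 ^ n) (by omega) (by omega),
      laverTab_reduce hc1' (by omega) s hs1 (by omega),
      lm_add_dvd hs1 (laverPi_pos _ _) hπc]
  rw [hred1] at hcv
  -- now s is a fixed point of row c, so s > 2^n : contradiction
  have := (hFIX' c s hc1' hcN hs1 (by omega)).mp hcv
  have hVc : 2 ^ padicValNat 2 c ≤ 2 ^ n := by
    by_contra h
    push_neg at h
    have h2 : (2:ℕ) ^ (n + 1) ≤ 2 ^ padicValNat 2 c := by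
      refine Nat.pow_le_pow_right (by norm_num) ?_
      by_contra h3
      push_neg at h3
      have : (2:ℕ) ^ padicValNat 2 c ≤ 2 ^ n := Nat.pow_le_pow_right (by norm_num) (by omega)
      omega
    have := v2_le hc1'
    omega
  omega

end Fix

/-- the grand induction -/
theorem laver_pkg : ∀ n, PerP n ∧ TopperP n ∧ FixP n ∧ AsP n := by
  intro n
  induction n with
  | zero =>
    refine ⟨?_, ?_, ?_, ?_⟩
    · intro z hz1 hz2
      have : z = 1 := by norm_num at hz2 ⊢; omega
      subst this
      have := laverPi_topRow 0
      norm_num at this ⊢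
      omega
    · intro m j h1 h2
      norm_num at h2
      omega
    · intro p t h1 h2
      norm_num at h2
      omega
    · intro q r hq1 hq2 hr1 hr2 _ _
      norm_num at hq2 hr2
      omega
  | succ n ih =>
    obtain ⟨hPER, hTOP, hFIX, hAS⟩ := ih
    exact ⟨step_PER hPER, step_TOPPER hPER hTOP, step_FIX hPER hTOP hFIX,
      step_AS hPER hTOP hFIX hAS⟩

/-! ### full left self-distributivity -/

theorem laverTab_LD {n : ℕ} (hB : ∀ z, 1 ≤ z → z ≤ 2 ^ n → laverTab n z (2 ^ n) = 2 ^ n) :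
    ∀ a, 1 ≤ a → ∀ b, 1 ≤ b → b ≤ 2 ^ n → ∀ c, 1 ≤ c → c ≤ 2 ^ n →
      laverTab n a (laverTab n b c) =
        laverTab n (laverTab n a b) (laverTab n a c) := by
  refine downward_ind (N := 2 ^ n) ?_ ?_
  · intro a haN ha1 b hb1 hbN c hc1 hcN
    rw [laverTab_top haN, laverTab_top haN, laverTab_top haN]
  · intro a haN IHa ha1
    refine downward_ind (N := 2 ^ n) ?_ ?_
    · intro b hbN hb1 hb2 c hc1 hcN
      have hbe : b = 2 ^ n := by omega
      subst hbe
      rw [laverTab_top (le_refl _), hB a ha1 (by omega), laverTab_top (le_refl _)]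
    · intro b hbN IHb hb1 hb2 c
      induction c with
      | zero => omega
      | succ c ihc =>
        intro _ hcN
        rcases Nat.eq_zero_or_pos c with rfl | hc1
        · -- c = 1
          rw [laverTab_one hbN, laverTab_one haN,
            laverTab_succ ha1 haN hb1 (by omega)]
        · -- c + 1
          have hcN' : c < 2 ^ n := by omega
          have hu1 : 1 ≤ laverTab n b c := laverTab_pos hb1 (by omega) hc1 (by omega)
          have huN : laverTab n b c ≤ 2 ^ n := laverTab_le hb1 (by omega) hc1 (by omega)
          have hugt : b < laverTab n b c := laverTab_gt hb1 hbN hc1 (by omega)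
          have hA1 : 1 ≤ laverTab n a b := laverTab_pos ha1 (by omega) hb1 (by omega)
          have hAN : laverTab n a b ≤ 2 ^ n := laverTab_le ha1 (by omega) hb1 (by omega)
          have hAgt : a < laverTab n a b := laverTab_gt ha1 haN hb1 (by omega)
          have hC1 : 1 ≤ laverTab n a c := laverTab_pos ha1 (by omega) hc1 (by omega)
          have hCN : laverTab n a c ≤ 2 ^ n := laverTab_le ha1 (by omega) hc1 (by omega)
          have hihc := ihc hc1 (by omega)
          have hbsucc : laverTab n b (c + 1) = laverTab n (laverTab n b c) (b + 1) :=
            laverTab_succ hb1 hbN hc1 (by omega)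
          have hasucc : laverTab n a (c + 1) = laverTab n (laverTab n a c) (a + 1) :=
            laverTab_succ ha1 haN hc1 (by omega)
          have habsucc : laverTab n a (b + 1) = laverTab n (laverTab n a b) (a + 1) :=
            laverTab_succ ha1 haN hb1 (by omega)
          rcases Nat.eq_or_lt_of_le huN with hue | hult
          · -- tab b c = 2^n
            have hAC : laverTab n (laverTab n a b) (laverTab n a c) = 2 ^ n := by
              rw [← hihc, hue, hB a ha1 (by omega)]
            rw [hbsucc, hue, laverTab_top (le_refl _), habsucc, hasucc]
            rw [IHa (laverTab n a b) hAgt hA1 (laverTab n a c) hC1 hCN (a + 1)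
              (by omega) (by omega)]
            rw [hAC, laverTab_top (le_refl _)]
          · -- tab b c < 2^n
            rw [hbsucc]
            rw [IHb (laverTab n b c) hugt hu1 huN (b + 1) (by omega) (by omega)]
            rw [hihc, habsucc]
            rw [← IHa (laverTab n a b) hAgt hA1 (laverTab n a c) hC1 hCN (a + 1)
              (by omega) (by omega)]
            rw [← hasucc]

/-- left-division lemma : `a * (b * q)` is in the column of `q` -/
theorem laverTab_ldiv {n : ℕ} (hB : ∀ z, 1 ≤ z → z ≤ 2 ^ n → laverTab n z (2 ^ n) = 2 ^ n) :
    ∀ a, 1 ≤ a → ∀ b, 1 ≤ b → b ≤ 2 ^ n → ∀ q, 1 ≤ q → q ≤ 2 ^ n →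
      ∃ c, 1 ≤ c ∧ c ≤ 2 ^ n ∧ laverTab n c q = laverTab n a (laverTab n b q) := by
  refine downward_ind (N := 2 ^ n) ?_ ?_
  · intro a haN ha1 b hb1 hbN q hq1 hqN
    exact ⟨b, hb1, hbN, by rw [laverTab_top haN]⟩
  · intro a haN IHa ha1 b hb1 hbN q hq1 hqN
    have hA1 : 1 ≤ laverTab n a b := laverTab_pos ha1 (by omega) hb1 hbN
    have hAN : laverTab n a b ≤ 2 ^ n := laverTab_le ha1 (by omega) hb1 hbN
    have hAgt : a < laverTab n a b := laverTab_gt ha1 haN hb1 hbN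
    obtain ⟨c, hc1, hcN, hcv⟩ := IHa (laverTab n a b) hAgt hA1 a ha1 (by omega) q hq1 hqN
    refine ⟨c, hc1, hcN, ?_⟩
    rw [hcv, ← laverTab_LD hB a ha1 b hb1 hbN q hq1 hqN]

/-- The right-divisibility relation on the Laver table: `q ⊑_n r` iff `r` is a
left-multiple of `q`, i.e. `p *_n q = r` for some `p` in `{1, …, 2^n}`. -/
def laverBefore (n : ℕ) (op : ℕ → ℕ → ℕ) (q r : ℕ) : Prop :=
  ∃ p, 1 ≤ p ∧ p ≤ 2 ^ n ∧ op p q = r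

/-- The relation `⊑_n` is a partial ordering on `{1, …, 2^n}`, with initial
element `1` and final element `2^n`. -/
theorem laver_before_partial_order (n : ℕ) (op : ℕ → ℕ → ℕ) (h : IsLaverOp n op) :
    (∀ q, 1 ≤ q → q ≤ 2 ^ n → laverBefore n op q q) ∧
    (∀ q r, 1 ≤ q → q ≤ 2 ^ n → 1 ≤ r → r ≤ 2 ^ n →
      laverBefore n op q r → laverBefore n op r q → q = r) ∧
    (∀ q r s, 1 ≤ q → q ≤ 2 ^ n → 1 ≤ r → r ≤ 2 ^ n → 1 ≤ s → s ≤ 2 ^ n →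
      laverBefore n op q r → laverBefore n op r s → laverBefore n op q s) ∧
    (∀ p, 1 ≤ p → p ≤ 2 ^ n → laverBefore n op 1 p ∧ laverBefore n op p (2 ^ n)) := by
  obtain ⟨hmem, hone, htop1, hld⟩ := h
  obtain ⟨htop, hrec, hmem'⟩ := op_facts hmem hone htop1 hld
  have heq : ∀ x, 1 ≤ x → x ≤ 2 ^ n → ∀ y, 1 ≤ y → y ≤ 2 ^ n → op x y = laverTab n x y :=
    laverTab_uniq hone htop hrec hmem'
  obtain ⟨hPER, hTOP, hFIX, hAS⟩ := laver_pkg n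
  have hB := step_B hPER
  refine ⟨?_, ?_, ?_, ?_⟩
  · -- reflexivity
    intro q hq1 hq2
    exact ⟨2 ^ n, Nat.one_le_two_pow, le_refl _, htop q hq1 hq2⟩
  · -- antisymmetry
    intro q r hq1 hq2 hr1 hr2 hqr hrq
    obtain ⟨a, ha1, ha2, hav⟩ := hqr
    obtain ⟨b, hb1, hb2, hbv⟩ := hrq
    refine hAS q r hq1 hq2 hr1 hr2 ⟨a, ha1, ha2, ?_⟩ ⟨b, hb1, hb2, ?_⟩
    · rw [← heq a ha1 ha2 q hq1 hq2]; exact hav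
    · rw [← heq b hb1 hb2 r hr1 hr2]; exact hbv
  · -- transitivity
    intro q r s hq1 hq2 hr1 hr2 hs1 hs2 hqr hrs
    obtain ⟨a, ha1, ha2, hav⟩ := hqr
    obtain ⟨b, hb1, hb2, hbv⟩ := hrs
    have hav' : laverTab n a q = r := by rw [← heq a ha1 ha2 q hq1 hq2]; exact hav
    have hbv' : laverTab n b r = s := by rw [← heq b hb1 hb2 r hr1 hr2]; exact hbv
    obtain ⟨c, hc1, hcN, hcv⟩ := laverTab_ldiv hB b hb1 a ha1 ha2 q hq1 hq2
    refine ⟨c, hc1, hcN, ?_⟩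
    rw [heq c hc1 hcN q hq1 hq2, hcv, hav', hbv']
  · -- bottom and top
    intro p hp1 hp2
    constructor
    · rcases Nat.eq_or_lt_of_le hp1 with h1 | h1
      · refine ⟨2 ^ n, Nat.one_le_two_pow, le_refl _, ?_⟩
        rw [htop 1 (le_refl _) Nat.one_le_two_pow]
        omega
      · refine ⟨p - 1, by omega, by omega, ?_⟩
        rw [hone (p - 1) (by omega) (by omega)]
        omega
    · rcases Nat.eq_or_lt_of_le (Nat.one_le_two_pow : 1 ≤ 2 ^ n) with hN | hN
      · refine ⟨2 ^ n, Nat.one_le_two_pow, le_refl _, ?_⟩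
        rw [htop p hp1 hp2]
        omega
      · obtain ⟨m1, m2, m3⟩ := hmem' (2 ^ n - 1) p (by omega) (by omega) hp1 hp2
        have := m3 (by omega)
        exact ⟨2 ^ n - 1, by omega, by omega, by omega⟩
end

section
/- For every n ≥ 2 and every p in {1, …, 2^n − 1} with p ≠ 2^{n-1}, the relations p ⊑_n 2^n − 2^{n-2}, 2^n − 2^{n-2} ⊑_n 2^{n-1}, and 2^{n-1} ⊑_n 2^n all hold. -/
namespace LaverWork

/-- top row is the identity -/
lemma top_row {n : ℕ} {op : ℕ → ℕ → ℕ} (h : IsLaverOp n op) :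
    ∀ q, 1 ≤ q → q ≤ 2 ^ n → op (2 ^ n) q = q := by
  obtain ⟨hr, hs, ht, hl⟩ := h
  intro q
  induction q with
  | zero => omega
  | succ q ih =>
    intro h1 h2
    rcases Nat.eq_zero_or_pos q with hq | hq
    · subst hq; exact ht
    · have hq1 : op q 1 = q + 1 := hs q hq (by omega)
      have hNN : 1 ≤ 2 ^ n := Nat.one_le_two_pow
      calc op (2 ^ n) (q + 1) = op (2 ^ n) (op q 1) := by rw [hq1]
        _ = op (op (2 ^ n) q) (op (2 ^ n) 1) := hl _ _ hNN le_rfl hq (by omega)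
        _ = op q 1 := by rw [ih hq (by omega), ht]
        _ = q + 1 := hq1

/-- every value in a row is greater than the row index (for non-top rows) -/
lemma lt_op {n : ℕ} {op : ℕ → ℕ → ℕ} (h : IsLaverOp n op) :
    ∀ x, 1 ≤ x → x < 2 ^ n → ∀ q, 1 ≤ q → q ≤ 2 ^ n → x < op x q := by
  obtain ⟨hr, hs, ht, hl⟩ := h
  suffices H : ∀ k x, 2 ^ n - x ≤ k → 1 ≤ x → x < 2 ^ n → ∀ q, 1 ≤ q → q ≤ 2 ^ n → x < op x q by
    intro x hx1 hx2; exact H (2 ^ n - x) x le_rfl hx1 hx2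
  intro k
  induction k with
  | zero => intro x hk hx1 hx2; omega
  | succ k ih =>
    intro x hk hx1 hx2 q
    induction q with
    | zero => omega
    | succ q ihq =>
      intro hq1 hqN
      rcases Nat.eq_zero_or_pos q with hq | hq
      · subst hq; rw [hs x hx1 hx2]; omega
      · have hw : x < op x q := ihq hq (by omega)
        have hwr := hr x q hx1 (by omega) hq (by omega)
        have hstep : op x (q + 1) = op (op x q) (x + 1) := by
          rw [← hs q hq (by omega), hl x q hx1 (by omega) hq (by omega), hs x hx1 hx2]
        rw [hstep]
        rcases eq_or_lt_of_le hwr.2 with hweq | hwlt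
        · rw [hweq, top_row ⟨hr, hs, ht, hl⟩ (x + 1) (by omega) (by omega)]; omega
        · exact lt_trans hw (ih (op x q) (by omega) (by omega) hwlt (x + 1) (by omega) (by omega))

/-- last column is constant `2^n` -/
lemma op_last {n : ℕ} {op : ℕ → ℕ → ℕ} (h : IsLaverOp n op) :
    ∀ x, 1 ≤ x → x ≤ 2 ^ n → op x (2 ^ n) = 2 ^ n := by
  obtain ⟨hr, hs, ht, hl⟩ := h
  intro x hx1 hxN
  rcases eq_or_lt_of_le hxN with hxeq | hxlt
  · rw [hxeq]; exact top_row ⟨hr, hs, ht, hl⟩ _ Nat.one_le_two_pow le_rfl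
  · have key : op x (op (2 ^ n) 1) = op (op x (2 ^ n)) (op x 1) :=
      hl x (2 ^ n) hx1 hxN Nat.one_le_two_pow le_rfl
    rw [ht, hs x hx1 hxlt] at key
    have hw := hr x (2 ^ n) hx1 hxN Nat.one_le_two_pow le_rfl
    have hwx : x < op x (2 ^ n) := lt_op ⟨hr, hs, ht, hl⟩ x hx1 hxlt _ Nat.one_le_two_pow le_rfl
    rcases eq_or_lt_of_le hw.2 with hweq | hwlt
    · exact hweq
    · exfalso
      have : op x (2 ^ n) < op (op x (2 ^ n)) (x + 1) :=
        lt_op ⟨hr, hs, ht, hl⟩ _ hw.1 hwlt (x + 1) (by omega) (by omega)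
      omega

/-- after hitting `2^n`, the row restarts -/
lemma restart {n : ℕ} {op : ℕ → ℕ → ℕ} (h : IsLaverOp n op) :
    ∀ z, 1 ≤ z → z ≤ 2 ^ n → ∀ m, 1 ≤ m → op z m = 2 ^ n →
    ∀ k, 1 ≤ k → m + k ≤ 2 ^ n → op z (m + k) = op z k := by
  obtain ⟨hr, hs, ht, hl⟩ := h
  intro z hz1 hzN m hm1 hmhit k
  induction k with
  | zero => omega
  | succ k ih =>
    intro hk1 hmk
    rcases Nat.eq_zero_or_pos k with hk | hk
    · subst hk
      have h1 : op z (m + 1) = op (op z m) (op z 1) := by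
        rw [← hs m hm1 (by omega)]
        exact hl z m hz1 hzN hm1 (by omega)
      have hz1r := hr z 1 hz1 hzN le_rfl Nat.one_le_two_pow
      rw [h1, hmhit, top_row ⟨hr, hs, ht, hl⟩ _ hz1r.1 hz1r.2]
    · have h1 : op z (m + k + 1) = op (op z (m + k)) (op z 1) := by
        rw [← hs (m + k) (by omega) (by omega)]
        exact hl z (m + k) hz1 hzN (by omega) (by omega)
      have h2 : op z (k + 1) = op (op z k) (op z 1) := by
        rw [← hs k hk (by omega)]
        exact hl z k hz1 hzN hk (by omega)
      rw [show m + (k + 1) = m + k + 1 by ring, h1, ih hk (by omega), ← h2]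

/-- rows grow at least linearly before the first hit of `2^n` -/
lemma grow {n : ℕ} {op : ℕ → ℕ → ℕ} (h : IsLaverOp n op) :
    ∀ z, 1 ≤ z → z < 2 ^ n → ∀ q, 1 ≤ q → q ≤ 2 ^ n →
    (∀ r, 1 ≤ r → r < q → op z r ≠ 2 ^ n) → z + q ≤ op z q := by
  obtain ⟨hr, hs, ht, hl⟩ := h
  intro z hz1 hzN q
  induction q with
  | zero => omega
  | succ q ih =>
    intro hq1 hqN hnohit
    rcases Nat.eq_zero_or_pos q with hq | hq
    · subst hq; rw [hs z hz1 hzN]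
    · have hw : z + q ≤ op z q := ih hq (by omega) (fun r h1 h2 => hnohit r h1 (by omega))
      have hwr := hr z q hz1 (by omega) hq (by omega)
      have hwne : op z q ≠ 2 ^ n := hnohit q hq (by omega)
      have hstep : op z (q + 1) = op (op z q) (z + 1) := by
        rw [← hs q hq (by omega), hl z q hz1 (by omega) hq (by omega), hs z hz1 hzN]
      rw [hstep]
      have : op z q < op (op z q) (z + 1) :=
        lt_op ⟨hr, hs, ht, hl⟩ _ hwr.1 (by omega) (z + 1) (by omega) (by omega)
      omega



-- pow2 divisor helpers
lemma pow2_dvd_of_le {m k l : ℕ} (h1 : m ∣ 2 ^ k) (h2 : m ≤ 2 ^ l) : m ∣ 2 ^ l := by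
  obtain ⟨j, hj, rfl⟩ := (Nat.dvd_prime_pow Nat.prime_two).mp h1
  exact pow_dvd_pow 2 ((Nat.pow_le_pow_iff_right (by norm_num)).mp h2)

lemma pow2_two_dvd_of_lt {m k l : ℕ} (h1 : m ∣ 2 ^ k) (h2 : m < 2 ^ l) : 2 * m ∣ 2 ^ l := by
  obtain ⟨j, hj, rfl⟩ := (Nat.dvd_prime_pow Nat.prime_two).mp h1
  have : j < l := (Nat.pow_lt_pow_iff_right (by norm_num)).mp h2
  have : (2 : ℕ) * 2 ^ j = 2 ^ (j + 1) := by ring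
  rw [this]
  exact pow_dvd_pow 2 (by omega)

lemma pow2_eq_of_between {m e : ℕ} (h1 : m ∣ 2 ^ (e + 1)) (h2 : ¬ m ∣ 2 ^ e) : m = 2 ^ (e + 1) := by
  obtain ⟨j, hj, rfl⟩ := (Nat.dvd_prime_pow Nat.prime_two).mp h1
  rcases Nat.lt_or_ge j (e + 1) with hc | hc
  · exact absurd (pow_dvd_pow 2 (by omega)) h2
  · have : j = e + 1 := by omega
    rw [this]

/-- existence of 2-adic valuation decomposition -/
lemma exists_val2 : ∀ p, 1 ≤ p → ∃ e, 2 ^ e ≤ p ∧ p % 2 ^ (e + 1) = 2 ^ e := by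
  intro p
  induction p using Nat.strong_induction_on with
  | _ p ih =>
    intro hp1
    rcases Nat.even_or_odd p with he | ho
    · obtain ⟨p', rfl⟩ := he
      have hp' : 1 ≤ p' := by omega
      obtain ⟨e, h1, h2⟩ := ih p' (by omega) hp'
      refine ⟨e + 1, by rw [pow_succ]; omega, ?_⟩
      have : p' + p' = 2 * p' := by ring
      rw [this, pow_succ 2 (e+1), Nat.mul_comm (2 ^ (e+1)) 2, Nat.mul_mod_mul_left, h2, pow_succ]
      ring
    · exact ⟨0, by omega, by
        have := Nat.odd_iff.mp ho
        simpa using this⟩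


/-- period structure of a row -/
lemma period {n : ℕ} {op : ℕ → ℕ → ℕ} (h : IsLaverOp n op) :
    ∀ z, 1 ≤ z → z < 2 ^ n → ∃ m, 1 ≤ m ∧ z + m ≤ 2 ^ n ∧ m ∣ 2 ^ n ∧
      (∀ q, 1 ≤ q → q ≤ 2 ^ n → (op z q = 2 ^ n ↔ m ∣ q)) := by
  intro z hz1 hzN
  have hex : ∃ m, 1 ≤ m ∧ op z m = 2 ^ n :=
    ⟨2 ^ n, Nat.one_le_two_pow, op_last h z hz1 (by omega)⟩
  classical
  set m := Nat.find hex with hm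
  obtain ⟨hm1, hmhit⟩ := Nat.find_spec hex
  rw [← hm] at hm1 hmhit
  have hmin : ∀ r, r < m → 1 ≤ r → op z r ≠ 2 ^ n := by
    intro r hr h1 hcon
    exact Nat.find_min hex hr ⟨h1, hcon⟩
  have hmN : m ≤ 2 ^ n := Nat.find_le ⟨Nat.one_le_two_pow, op_last h z hz1 (by omega)⟩
  have hzm : z + m ≤ 2 ^ n := by
    have := grow h z hz1 hzN m hm1 hmN (fun r h1 h2 => hmin r h2 h1)
    omega
  have fwd : ∀ q, 1 ≤ q → q ≤ 2 ^ n → op z q = 2 ^ n → m ∣ q := by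
    intro q
    induction q using Nat.strong_induction_on with
    | _ q ih =>
      intro hq1 hqN hhit
      rcases lt_trichotomy q m with hc | hc | hc
      · exact absurd hhit (hmin q hc hq1)
      · rw [hc]
      · have hrw : op z (m + (q - m)) = op z (q - m) :=
          restart h z hz1 (by omega) m hm1 hmhit (q - m) (by omega) (by omega)
        rw [show m + (q - m) = q by omega] at hrw
        have hd : m ∣ q - m := ih (q - m) (by omega) (by omega) (by omega) (by rw [← hrw]; exact hhit)
        have := Nat.dvd_add hd (dvd_refl m)
        rwa [Nat.sub_add_cancel (by omega)] at this
  have bwd : ∀ q, 1 ≤ q → q ≤ 2 ^ n → m ∣ q → op z q = 2 ^ n := by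
    intro q
    induction q using Nat.strong_induction_on with
    | _ q ih =>
      intro hq1 hqN hdvd
      have hqm : m ≤ q := Nat.le_of_dvd (by omega) hdvd
      rcases eq_or_lt_of_le hqm with hc | hc
      · rw [← hc]; exact hmhit
      · have hq2m : m ≤ q - m := by
          obtain ⟨c, hc⟩ := hdvd
          have hc2 : 2 ≤ c := by
            by_contra hcon
            push_neg at hcon
            interval_cases c <;> omega
          have : m * 2 ≤ m * c := Nat.mul_le_mul_left m hc2
          omega
        have hsub : op z (q - m) = 2 ^ n := by
          apply ih (q - m) (by omega) (by omega) (by omega)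
          exact (Nat.dvd_sub hdvd dvd_rfl)
        have := restart h z hz1 (by omega) (q - m) (by omega) hsub m hm1 (by omega)
        rw [show q - m + m = q by omega] at this
        rw [this]
        exact hmhit
  refine ⟨m, hm1, hzm, fwd (2 ^ n) Nat.one_le_two_pow le_rfl (op_last h z hz1 (by omega)), ?_⟩
  intro q hq1 hqN
  exact ⟨fwd q hq1 hqN, bwd q hq1 hqN⟩

lemma two_pow_pred {n : ℕ} (hn : 1 ≤ n) : 2 ^ n = 2 * 2 ^ (n - 1) := by
  conv_lhs => rw [show n = (n - 1) + 1 by omega]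
  rw [pow_succ]
  ring

lemma two_pow_pred2 {n : ℕ} (hn : 2 ≤ n) : 2 ^ n = 4 * 2 ^ (n - 2) := by
  conv_lhs => rw [show n = (n - 2) + 2 by omega]
  rw [pow_add]
  ring

/-- rows in the upper half hit `2^n` within `2^(n-1)` steps and are `2^(n-1)`-periodic -/
lemma high_row {n : ℕ} {op : ℕ → ℕ → ℕ} (h : IsLaverOp n op) (hn : 1 ≤ n) :
    ∀ z, 2 ^ (n - 1) < z → z < 2 ^ n →
    op z (2 ^ (n - 1)) = 2 ^ n ∧
    (∀ r, 1 ≤ r → 2 ^ (n - 1) + r ≤ 2 ^ n → op z (2 ^ (n - 1) + r) = op z r) := by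
  intro z hz1 hzN
  have hH := two_pow_pred hn
  obtain ⟨m, hm1, hm2, hm3, hm4⟩ := period h z (by omega) hzN
  have hmle : m ≤ 2 ^ (n - 1) := by omega
  have hmH : m ∣ 2 ^ (n - 1) := pow2_dvd_of_le hm3 hmle
  have hhit : op z (2 ^ (n - 1)) = 2 ^ n := (hm4 _ Nat.one_le_two_pow (by omega)).mpr hmH
  exact ⟨hhit, fun r h1 h2 => restart h z (by omega) (by omega) (2 ^ (n - 1))
    Nat.one_le_two_pow hhit r h1 h2⟩

/-- the row of `2^(n-1)` is a translation on its first half -/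
lemma row_half {n : ℕ} {op : ℕ → ℕ → ℕ} (h : IsLaverOp n op) (hn : 1 ≤ n) :
    ∀ q, 1 ≤ q → q ≤ 2 ^ (n - 1) → op (2 ^ (n - 1)) q = 2 ^ (n - 1) + q := by
  have hH := two_pow_pred hn
  obtain ⟨hr, hs, ht, hl⟩ := h
  intro q
  induction q with
  | zero => omega
  | succ q ih =>
    intro hq1 hqH
    have hHpos : 1 ≤ 2 ^ (n - 1) := Nat.one_le_two_pow
    rcases Nat.eq_zero_or_pos q with hq | hq
    · subst hq; exact hs _ hHpos (by omega)
    · have hw : op (2 ^ (n - 1)) q = 2 ^ (n - 1) + q := ih hq (by omega)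
      have hstep : op (2 ^ (n - 1)) (q + 1) = op (2 ^ (n - 1) + q) (2 ^ (n - 1) + 1) := by
        rw [← hs q hq (by omega), hl _ q hHpos (by omega) hq (by omega), hw,
          hs _ hHpos (by omega)]
      have hz1 : 2 ^ (n - 1) < 2 ^ (n - 1) + q := by omega
      have hz2 : 2 ^ (n - 1) + q < 2 ^ n := by omega
      have hshift := (high_row ⟨hr, hs, ht, hl⟩ hn (2 ^ (n - 1) + q) hz1 hz2).2 1 le_rfl (by omega)
      rw [hstep, hshift, hs _ (by omega) hz2]
      omega

/-- reduction mod `2^(n-1)` on `{1, …, 2^n}` -/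
def lpi (half v : ℕ) : ℕ := if v ≤ half then v else v - half

lemma lpi_low {half v : ℕ} (hv : v ≤ half) : lpi half v = v := if_pos hv
lemma lpi_high {half v : ℕ} (hv : half < v) : lpi half v = v - half := if_neg (by omega)
lemma lpi_range {half v : ℕ} (h1 : 1 ≤ v) (h2 : v ≤ 2 * half) :
    1 ≤ lpi half v ∧ lpi half v ≤ half := by
  unfold lpi; split <;> omega
lemma lpi_eq_half {half v : ℕ} (h1 : 1 ≤ half) (h2 : v ≤ 2 * half)
    (h3 : lpi half v = half) : v = half ∨ v = 2 * half := by
  unfold lpi at h3; split at h3 <;> omega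

/-- the derived operation on `{1, …, 2^(n-1)}` -/
def opD (half : ℕ) (op : ℕ → ℕ → ℕ) (x y : ℕ) : ℕ := lpi half (op (half + x) y)

/-- the derived operation satisfies the Laver laws one level down -/
lemma derived_isLaver {n : ℕ} {op : ℕ → ℕ → ℕ} (h : IsLaverOp n op) (hn : 1 ≤ n) :
    IsLaverOp (n - 1) (opD (2 ^ (n - 1)) op) := by
  have hH := two_pow_pred hn
  have hHpos : 1 ≤ 2 ^ (n - 1) := Nat.one_le_two_pow
  obtain ⟨hr, hs, ht, hl⟩ := h
  have h' : IsLaverOp n op := ⟨hr, hs, ht, hl⟩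
  have hsucc : ∀ x, 1 ≤ x → x < 2 ^ (n - 1) → opD (2 ^ (n - 1)) op x 1 = x + 1 := by
    intro x hx1 hxH
    unfold opD
    rw [hs (2 ^ (n - 1) + x) (by omega) (by omega), lpi_high (by omega)]
    omega
  have htop : ∀ y, 1 ≤ y → y ≤ 2 ^ (n - 1) → opD (2 ^ (n - 1)) op (2 ^ (n - 1)) y = y := by
    intro y hy1 hyH
    unfold opD
    rw [show 2 ^ (n - 1) + 2 ^ (n - 1) = 2 ^ n by omega,
      top_row h' y hy1 (by omega), lpi_low hyH]
  refine ⟨?_, ?_, ?_, ?_⟩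
  · intro x y hx1 hxH hy1 hyH
    have := hr (2 ^ (n - 1) + x) y (by omega) (by omega) hy1 (by omega)
    exact lpi_range this.1 (by omega)
  · exact hsucc
  · exact htop 1 le_rfl hHpos
  · intro x y hx1 hxH hy1 hyH
    have hD1 : ∀ w, 1 ≤ w → w ≤ 2 ^ (n - 1) → 1 ≤ opD (2 ^ (n - 1)) op w 1 ∧
        opD (2 ^ (n - 1)) op w 1 ≤ 2 ^ (n - 1) := by
      intro w h1 h2
      exact lpi_range (hr (2 ^ (n - 1) + w) 1 (by omega) (by omega) le_rfl (by omega)).1 (by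
        have := hr (2 ^ (n - 1) + w) 1 (by omega) (by omega) le_rfl (by omega); omega)
    rcases eq_or_lt_of_le hxH with hxeq | hxlt
    · -- x = 2^(n-1)
      subst hxeq
      have hDy := hD1 y hy1 hyH
      rw [htop _ hDy.1 hDy.2, htop y hy1 hyH,
        show opD (2 ^ (n - 1)) op (2 ^ (n - 1)) 1 = 1 from htop 1 le_rfl hHpos]
    · -- x < 2^(n-1)
      have hx1D : opD (2 ^ (n - 1)) op x 1 = x + 1 := hsucc x hx1 hxlt
      rcases eq_or_lt_of_le hyH with hyeq | hylt
      · -- y = 2^(n-1)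
        subst hyeq
        rw [show opD (2 ^ (n - 1)) op (2 ^ (n - 1)) 1 = 1 from htop 1 le_rfl hHpos, hx1D]
        have hzH : 2 ^ (n - 1) < 2 ^ (n - 1) + x := by omega
        have hzN : 2 ^ (n - 1) + x < 2 ^ n := by omega
        have hhit : op (2 ^ (n - 1) + x) (2 ^ (n - 1)) = 2 ^ n := (high_row h' hn _ hzH hzN).1
        have hxy : opD (2 ^ (n - 1)) op x (2 ^ (n - 1)) = 2 ^ (n - 1) := by
          unfold opD
          rw [hhit, lpi_high (by omega)]
          omega
        rw [hxy, htop (x + 1) (by omega) (by omega)]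
      · -- y < 2^(n-1)
        have hyD : opD (2 ^ (n - 1)) op y 1 = y + 1 := hsucc y hy1 hylt
        rw [hyD, hx1D]
        have hzN : 2 ^ (n - 1) + x < 2 ^ n := by omega
        have hstep : op (2 ^ (n - 1) + x) (y + 1) =
            op (op (2 ^ (n - 1) + x) y) (2 ^ (n - 1) + x + 1) := by
          rw [← hs y hy1 (by omega), hl _ y (by omega) (by omega) hy1 (by omega),
            hs _ (by omega) hzN]
        have hWr := hr (2 ^ (n - 1) + x) y (by omega) (by omega) hy1 (by omega)
        have hWgt : 2 ^ (n - 1) + x < op (2 ^ (n - 1) + x) y :=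
          lt_op h' _ (by omega) hzN y hy1 (by omega)
        rcases eq_or_lt_of_le hWr.2 with hWeq | hWlt
        · -- op z y = 2^n
          have hL : opD (2 ^ (n - 1)) op x (y + 1) = x + 1 := by
            unfold opD
            rw [hstep, hWeq, top_row h' _ (by omega) (by omega), lpi_high (by omega)]
            omega
          have hxy : opD (2 ^ (n - 1)) op x y = 2 ^ (n - 1) := by
            unfold opD
            rw [hWeq, lpi_high (by omega)]
            omega
          rw [hL, hxy, htop (x + 1) (by omega) (by omega)]
        · -- op z y < 2^n
          have hu1 : 1 ≤ op (2 ^ (n - 1) + x) y - 2 ^ (n - 1) := by omega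
          have hshift := (high_row h' hn (op (2 ^ (n - 1) + x) y) (by omega) hWlt).2
            (x + 1) (by omega) (by omega)
          have hL : opD (2 ^ (n - 1)) op x (y + 1) =
              lpi (2 ^ (n - 1)) (op (op (2 ^ (n - 1) + x) y) (x + 1)) := by
            unfold opD
            rw [hstep, show 2 ^ (n - 1) + x + 1 = 2 ^ (n - 1) + (x + 1) by omega, hshift]
          have hxy : opD (2 ^ (n - 1)) op x y =
              op (2 ^ (n - 1) + x) y - 2 ^ (n - 1) := by
            unfold opD
            rw [lpi_high (by omega)]
          rw [hL, hxy]
          unfold opD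
          rw [show 2 ^ (n - 1) + (op (2 ^ (n - 1) + x) y - 2 ^ (n - 1)) =
            op (2 ^ (n - 1) + x) y by omega]

/-- successor is compatible with projection -/
lemma hom_one {n : ℕ} {op : ℕ → ℕ → ℕ} (h : IsLaverOp n op) (hn : 1 ≤ n) :
    ∀ v, 1 ≤ v → v < 2 ^ n →
    lpi (2 ^ (n - 1)) (v + 1) = opD (2 ^ (n - 1)) op (lpi (2 ^ (n - 1)) v) 1 := by
  have hH := two_pow_pred hn
  have hHpos : 1 ≤ 2 ^ (n - 1) := Nat.one_le_two_pow
  obtain ⟨hr, hs, ht, hl⟩ := h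
  intro v hv1 hvN
  rcases Nat.lt_trichotomy v (2 ^ (n - 1)) with hc | hc | hc
  · rw [lpi_low (by omega : v ≤ 2 ^ (n - 1)), lpi_low (by omega : v + 1 ≤ 2 ^ (n - 1))]
    unfold opD
    rw [hs _ (by omega) (by omega), lpi_high (by omega)]
    omega
  · subst hc
    rw [lpi_low le_rfl, lpi_high (by omega)]
    unfold opD
    rw [show 2 ^ (n - 1) + 2 ^ (n - 1) = 2 ^ n by omega, ht, lpi_low hHpos]
    omega
  · rw [lpi_high hc, lpi_high (by omega : 2 ^ (n - 1) < v + 1)]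
    unfold opD
    rw [show 2 ^ (n - 1) + (v - 2 ^ (n - 1)) = v by omega, hs _ hv1 hvN,
      lpi_high (by omega)]

/-- the projection is a homomorphism -/
lemma hom {n : ℕ} {op : ℕ → ℕ → ℕ} (h : IsLaverOp n op) (hn : 1 ≤ n) :
    ∀ x, 1 ≤ x → x ≤ 2 ^ n → ∀ q, 1 ≤ q → q ≤ 2 ^ n →
    lpi (2 ^ (n - 1)) (op x q) =
      opD (2 ^ (n - 1)) op (lpi (2 ^ (n - 1)) x) (lpi (2 ^ (n - 1)) q) := by
  have hH := two_pow_pred hn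
  have hHpos : 1 ≤ 2 ^ (n - 1) := Nat.one_le_two_pow
  have hD := derived_isLaver h hn
  obtain ⟨hr', hs', ht', hl'⟩ := hD
  obtain ⟨hr, hs, ht, hl⟩ := h
  have h' : IsLaverOp n op := ⟨hr, hs, ht, hl⟩
  have topcase : ∀ q, 1 ≤ q → q ≤ 2 ^ n → lpi (2 ^ (n - 1)) (op (2 ^ n) q) =
      opD (2 ^ (n - 1)) op (lpi (2 ^ (n - 1)) (2 ^ n)) (lpi (2 ^ (n - 1)) q) := by
    intro q hq1 hqN
    have hq' := lpi_range hq1 (by omega : q ≤ 2 * 2 ^ (n - 1))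
    rw [top_row h' q hq1 hqN, lpi_high (by omega : 2 ^ (n - 1) < 2 ^ n),
      show 2 ^ n - 2 ^ (n - 1) = 2 ^ (n - 1) by omega]
    unfold opD
    rw [show 2 ^ (n - 1) + 2 ^ (n - 1) = 2 ^ n by omega, top_row h' _ hq'.1 (by omega),
      lpi_low hq'.2]
  suffices main : ∀ k x, 2 ^ n - x ≤ k → 1 ≤ x → x ≤ 2 ^ n → ∀ q, 1 ≤ q → q ≤ 2 ^ n →
      lpi (2 ^ (n - 1)) (op x q) =
      opD (2 ^ (n - 1)) op (lpi (2 ^ (n - 1)) x) (lpi (2 ^ (n - 1)) q) by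
    intro x hx1 hxN; exact main (2 ^ n - x) x le_rfl hx1 hxN
  intro k
  induction k with
  | zero =>
    intro x hk hx1 hxN q hq1 hqN
    have : x = 2 ^ n := by omega
    subst this
    exact topcase q hq1 hqN
  | succ k ih =>
    intro x hk hx1 hxN
    rcases eq_or_lt_of_le hxN with hxeq | hxlt
    · subst hxeq; exact topcase
    · intro q
      induction q with
      | zero => omega
      | succ q ihq =>
        intro hq1 hqN
        rcases Nat.eq_zero_or_pos q with hq | hq
        · subst hq
          rw [hs x hx1 hxlt, lpi_low (by omega : (1:ℕ) ≤ 2 ^ (n - 1))]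
          exact hom_one h' hn x hx1 hxlt
        · have hWr := hr x q hx1 (by omega) hq (by omega)
          have hWgt : x < op x q := lt_op h' x hx1 hxlt q hq (by omega)
          have hstep : op x (q + 1) = op (op x q) (x + 1) := by
            rw [← hs q hq (by omega), hl x q hx1 (by omega) hq (by omega), hs x hx1 hxlt]
          have houter : lpi (2 ^ (n - 1)) (op (op x q) (x + 1)) =
              opD (2 ^ (n - 1)) op (lpi (2 ^ (n - 1)) (op x q)) (lpi (2 ^ (n - 1)) (x + 1)) := by
            rcases eq_or_lt_of_le hWr.2 with hWeq | hWlt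
            · rw [hWeq]; exact topcase (x + 1) (by omega) (by omega)
            · exact ih (op x q) (by omega) hWr.1 (by omega) (x + 1) (by omega) (by omega)
          have hinner : lpi (2 ^ (n - 1)) (op x q) =
              opD (2 ^ (n - 1)) op (lpi (2 ^ (n - 1)) x) (lpi (2 ^ (n - 1)) q) :=
            ihq hq (by omega)
          have honex : lpi (2 ^ (n - 1)) (x + 1) = opD (2 ^ (n - 1)) op (lpi (2 ^ (n - 1)) x) 1 :=
            hom_one h' hn x hx1 hxlt
          have honeq : lpi (2 ^ (n - 1)) (q + 1) = opD (2 ^ (n - 1)) op (lpi (2 ^ (n - 1)) q) 1 :=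
            hom_one h' hn q hq (by omega)
          have hxr := lpi_range hx1 (by omega : x ≤ 2 * 2 ^ (n - 1))
          have hqr := lpi_range hq (by omega : q ≤ 2 * 2 ^ (n - 1))
          rw [hstep, houter, hinner, honex, honeq,
            ← hl' (lpi (2 ^ (n - 1)) x) (lpi (2 ^ (n - 1)) q) hxr.1 hxr.2 hqr.1 hqr.2]

/-- period doubling: the period one level up divides twice the period below -/
lemma double {n : ℕ} {op : ℕ → ℕ → ℕ} (h : IsLaverOp n op) (hn : 1 ≤ n) :
    ∀ z, 1 ≤ z → z < 2 ^ (n - 1) →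
    ∀ m, 1 ≤ m → (∀ q, 1 ≤ q → q ≤ 2 ^ n → (op z q = 2 ^ n ↔ m ∣ q)) →
    ∀ m', 1 ≤ m' → z + m' ≤ 2 ^ (n - 1) →
    (∀ q, 1 ≤ q → q ≤ 2 ^ (n - 1) →
      (opD (2 ^ (n - 1)) op z q = 2 ^ (n - 1) ↔ m' ∣ q)) →
    m ∣ 2 * m' := by
  have hH := two_pow_pred hn
  have hHpos : 1 ≤ 2 ^ (n - 1) := Nat.one_le_two_pow
  intro z hz1 hzH m hm1 hmiff m' hm'1 hm'H hm'iff
  obtain ⟨hr', hs', ht', hl'⟩ := derived_isLaver h hn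
  obtain ⟨hr, hs, ht, hl⟩ := h
  have h' : IsLaverOp n op := ⟨hr, hs, ht, hl⟩
  have hπ := hom h' hn z (by omega) (by omega) m' hm'1 (by omega)
  rw [lpi_low (by omega : z ≤ 2 ^ (n - 1)), lpi_low (by omega : m' ≤ 2 ^ (n - 1))] at hπ
  have hDhit : opD (2 ^ (n - 1)) op z m' = 2 ^ (n - 1) :=
    (hm'iff m' hm'1 (by omega)).mpr dvd_rfl
  rw [hDhit] at hπ
  have hzr := hr z m' (by omega) (by omega) hm'1 (by omega)
  rcases lpi_eq_half hHpos (by omega) hπ with hcase | hcase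
  case inr =>
    -- op z m' = 2^n: no doubling
    have : m ∣ m' := (hmiff m' hm'1 (by omega)).mp (by omega)
    exact this.mul_left 2
  case inl =>
    -- op z m' = 2^(n-1): doubling
    have hcase' : op z m' = 2 ^ (n - 1) := by omega
    have claim : ∀ k, 1 ≤ k → k ≤ m' →
        op z (m' + k) = 2 ^ (n - 1) + opD (2 ^ (n - 1)) op z k := by
      intro k
      induction k with
      | zero => omega
      | succ k ihk =>
        intro hk1 hkm
        rcases Nat.eq_zero_or_pos k with hk | hk
        · subst hk
          have e1 : op z (m' + 1) = op (op z m') (op z 1) := by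
            rw [← hs m' hm'1 (by omega), hl z m' (by omega) (by omega) hm'1 (by omega)]
          rw [e1, hcase', hs z (by omega) (by omega),
            row_half h' hn (z + 1) (by omega) (by omega),
            hs' z (by omega) (by omega)]
        · have hu := hr' z k (by omega) (by omega) hk (by omega)
          have huH : opD (2 ^ (n - 1)) op z k < 2 ^ (n - 1) := by
            rcases eq_or_lt_of_le hu.2 with he | hl2
            · exfalso
              have : m' ∣ k := (hm'iff k hk (by omega)).mp he
              have := Nat.le_of_dvd hk this
              omega
            · exact hl2
          have e1 : op z (m' + k + 1) = op (op z (m' + k)) (op z 1) := by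
            rw [← hs (m' + k) (by omega) (by omega),
              hl z (m' + k) (by omega) (by omega) (by omega) (by omega)]
          have e2 := ihk hk (by omega)
          have hzk1 : op z 1 = z + 1 := hs z (by omega) (by omega)
          rw [show m' + (k + 1) = m' + k + 1 by omega, e1, e2, hzk1]
          -- now: op (H + u) (z+1) = H + opD z (k+1)
          have hVgt : 2 ^ (n - 1) + opD (2 ^ (n - 1)) op z k <
              op (2 ^ (n - 1) + opD (2 ^ (n - 1)) op z k) (z + 1) :=
            lt_op h' _ (by omega) (by omega) (z + 1) (by omega) (by omega)
          have hVr := hr (2 ^ (n - 1) + opD (2 ^ (n - 1)) op z k) (z + 1)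
            (by omega) (by omega) (by omega) (by omega)
          have hVpi : opD (2 ^ (n - 1)) op (opD (2 ^ (n - 1)) op z k) (z + 1) =
              op (2 ^ (n - 1) + opD (2 ^ (n - 1)) op z k) (z + 1) - 2 ^ (n - 1) := by
            have hdef : opD (2 ^ (n - 1)) op (opD (2 ^ (n - 1)) op z k) (z + 1) =
                lpi (2 ^ (n - 1)) (op (2 ^ (n - 1) + opD (2 ^ (n - 1)) op z k) (z + 1)) := rfl
            rw [hdef, lpi_high (by omega)]
          have hlaw : opD (2 ^ (n - 1)) op z (k + 1) =
              opD (2 ^ (n - 1)) op (opD (2 ^ (n - 1)) op z k) (z + 1) := by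
            rw [← hs' k hk (by omega : k < 2 ^ (n - 1)),
              hl' z k (by omega) (by omega) hk (by omega),
              hs' z (by omega) (by omega)]
          rw [hlaw, hVpi]
          omega
    have hfin := claim m' hm'1 le_rfl
    rw [hDhit] at hfin
    have : op z (m' + m') = 2 ^ n := by omega
    have := (hmiff (m' + m') (by omega) (by omega)).mp this
    rwa [show 2 * m' = m' + m' by ring]

/-- rows just below `2^(n-1)` hit `2^n` at the column `2^(n-1) - 2^e` -/
lemma near_half_hits {n : ℕ} {op : ℕ → ℕ → ℕ} (h : IsLaverOp n op) (hn : 2 ≤ n)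
    {e : ℕ} (he : e ≤ n - 2) :
    ∀ w, 2 ^ (n - 1) - 2 ^ e < w → w < 2 ^ (n - 1) →
    op w (2 ^ (n - 1) - 2 ^ e) = 2 ^ n ∧ op w (2 ^ (n - 1) - 2 ^ e + 1) = w + 1 := by
  have hn1 : 1 ≤ n := by omega
  have hH := two_pow_pred hn1
  have hQ := two_pow_pred2 hn
  have he2 : (2 : ℕ) ^ e ≤ 2 ^ (n - 2) := Nat.pow_le_pow_right (by norm_num) (by omega)
  have heH : (2 : ℕ) ^ e ∣ 2 ^ (n - 1) := pow_dvd_pow 2 (by omega)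
  have hepos : (1 : ℕ) ≤ 2 ^ e := Nat.one_le_two_pow
  intro w hw1 hw2
  obtain ⟨m, hm1, hm2, hm3, hm4⟩ := period h w (by omega) (by omega)
  obtain ⟨m', hm'1, hm'2, hm'3, hm'4⟩ :=
    period (derived_isLaver h hn1) w (by omega) (by omega)
  have hm'lt : m' < 2 ^ e := by omega
  have h2m' : 2 * m' ∣ 2 ^ e := pow2_two_dvd_of_lt hm'3 hm'lt
  have hmd : m ∣ 2 * m' := double h hn1 w (by omega) (by omega) m hm1 hm4 m' hm'1 hm'2 hm'4
  have hmz : m ∣ 2 ^ (n - 1) - 2 ^ e :=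
    dvd_trans (dvd_trans hmd h2m') (Nat.dvd_sub heH dvd_rfl)
  have hhit : op w (2 ^ (n - 1) - 2 ^ e) = 2 ^ n :=
    (hm4 _ (by omega) (by omega)).mpr hmz
  refine ⟨hhit, ?_⟩
  obtain ⟨hr, hs, ht, hl⟩ := h
  have := restart ⟨hr, hs, ht, hl⟩ w (by omega) (by omega) (2 ^ (n - 1) - 2 ^ e)
    (by omega) hhit 1 le_rfl (by omega)
  rw [this, hs w (by omega) (by omega)]

/-- the row `2^(n-1) - 2^e` starts as a translation -/
lemma ze_row {n : ℕ} {op : ℕ → ℕ → ℕ} (h : IsLaverOp n op) (hn : 2 ≤ n)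
    {e : ℕ} (he : e ≤ n - 2) :
    ∀ q, 1 ≤ q → q ≤ 2 ^ e → op (2 ^ (n - 1) - 2 ^ e) q = 2 ^ (n - 1) - 2 ^ e + q := by
  have hn1 : 1 ≤ n := by omega
  have hH := two_pow_pred hn1
  have hQ := two_pow_pred2 hn
  have he2 : (2 : ℕ) ^ e ≤ 2 ^ (n - 2) := Nat.pow_le_pow_right (by norm_num) (by omega)
  have hepos : (1 : ℕ) ≤ 2 ^ e := Nat.one_le_two_pow
  have h' := h
  obtain ⟨hr, hs, ht, hl⟩ := h'
  intro q
  induction q with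
  | zero => omega
  | succ q ih =>
    intro hq1 hqe
    rcases Nat.eq_zero_or_pos q with hq | hq
    · subst hq; exact hs _ (by omega) (by omega)
    · have hw := ih hq (by omega)
      have hstep : op (2 ^ (n - 1) - 2 ^ e) (q + 1) =
          op (op (2 ^ (n - 1) - 2 ^ e) q) (2 ^ (n - 1) - 2 ^ e + 1) := by
        rw [← hs q hq (by omega), hl _ q (by omega) (by omega) hq (by omega),
          hs _ (by omega) (by omega)]
      have hnh := (near_half_hits h hn he (2 ^ (n - 1) - 2 ^ e + q)
        (by omega) (by omega)).2
      rw [hstep, hw, hnh]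
      omega

/-- the row `2^(n-1) - 2^e` takes the value `2^(n-1)` at all columns `≡ 2^e (mod 2^(e+1))` -/
lemma ze_full {n : ℕ} {op : ℕ → ℕ → ℕ} (h : IsLaverOp n op) (hn : 2 ≤ n)
    {e : ℕ} (he : e ≤ n - 2) :
    ∀ p, 1 ≤ p → p ≤ 2 ^ n → p % 2 ^ (e + 1) = 2 ^ e →
    op (2 ^ (n - 1) - 2 ^ e) p = 2 ^ (n - 1) := by
  have hn1 : 1 ≤ n := by omega
  have hH := two_pow_pred hn1
  have hQ := two_pow_pred2 hn
  have he2 : (2 : ℕ) ^ e ≤ 2 ^ (n - 2) := Nat.pow_le_pow_right (by norm_num) (by omega)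
  have hepos : (1 : ℕ) ≤ 2 ^ e := Nat.one_le_two_pow
  intro p hp1 hpN hpmod
  have hrow : op (2 ^ (n - 1) - 2 ^ e) (2 ^ e) = 2 ^ (n - 1) := by
    rw [ze_row h hn he (2 ^ e) hepos le_rfl]
    omega
  obtain ⟨m, hm1, hm2, hm3, hm4⟩ := period h (2 ^ (n - 1) - 2 ^ e) (by omega) (by omega)
  obtain ⟨m', hm'1, hm'2, hm'3, hm'4⟩ :=
    period (derived_isLaver h hn1) (2 ^ (n - 1) - 2 ^ e) (by omega) (by omega)
  have hmnot : ¬ m ∣ 2 ^ e := by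
    intro hcon
    have := (hm4 (2 ^ e) hepos (by omega)).mpr hcon
    omega
  have hDrow : opD (2 ^ (n - 1)) op (2 ^ (n - 1) - 2 ^ e) (2 ^ e) = 2 ^ (n - 1) := by
    have := hom h hn1 (2 ^ (n - 1) - 2 ^ e) (by omega) (by omega) (2 ^ e) hepos (by omega)
    rw [lpi_low (by omega : 2 ^ (n - 1) - 2 ^ e ≤ 2 ^ (n - 1)),
      lpi_low (by omega : 2 ^ e ≤ 2 ^ (n - 1)), hrow,
      lpi_low (le_refl (2 ^ (n - 1)))] at this
    omega
  have hm'd : m' ∣ 2 ^ e := (hm'4 (2 ^ e) hepos (by omega)).mp hDrow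
  have hmd : m ∣ 2 * m' := double h hn1 (2 ^ (n - 1) - 2 ^ e) (by omega) (by omega)
    m hm1 hm4 m' hm'1 hm'2 hm'4
  have hmd2 : m ∣ 2 ^ (e + 1) := by
    refine dvd_trans hmd ?_
    rw [pow_succ, Nat.mul_comm (2 ^ e) 2]
    exact Nat.mul_dvd_mul_left 2 hm'd
  have hmeq : m = 2 ^ (e + 1) := pow2_eq_of_between hmd2 hmnot
  -- decompose p
  have hdm := Nat.div_add_mod p (2 ^ (e + 1))
  rw [hpmod] at hdm
  rcases Nat.eq_zero_or_pos (p / 2 ^ (e + 1)) with hj | hj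
  · rw [hj, Nat.mul_zero, Nat.zero_add] at hdm
    rw [← hdm]
    exact hrow
  · have hc1 : 1 ≤ 2 ^ (e + 1) * (p / 2 ^ (e + 1)) := by
      have : 1 ≤ 2 ^ (e + 1) := Nat.one_le_two_pow
      exact Nat.mul_le_mul this hj
    have hchit : op (2 ^ (n - 1) - 2 ^ e) (2 ^ (e + 1) * (p / 2 ^ (e + 1))) = 2 ^ n := by
      apply (hm4 _ hc1 (by omega)).mpr
      rw [hmeq]
      exact Dvd.intro _ rfl
    have := restart h (2 ^ (n - 1) - 2 ^ e) (by omega) (by omega)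
      (2 ^ (e + 1) * (p / 2 ^ (e + 1))) hc1 hchit (2 ^ e) hepos (by omega)
    rw [hdm] at this
    rw [this]
    exact hrow

/-- the row `2^n - 1` is constantly `2^n` -/
lemma last_row {n : ℕ} {op : ℕ → ℕ → ℕ} (h : IsLaverOp n op) (hn : 1 ≤ n) :
    ∀ q, 1 ≤ q → q ≤ 2 ^ n → op (2 ^ n - 1) q = 2 ^ n := by
  have hN : (2 : ℕ) ≤ 2 ^ n := by
    calc (2 : ℕ) = 2 ^ 1 := by norm_num
      _ ≤ 2 ^ n := Nat.pow_le_pow_right (by norm_num) hn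
  obtain ⟨hr, hs, ht, hl⟩ := h
  have h' : IsLaverOp n op := ⟨hr, hs, ht, hl⟩
  have hone : op (2 ^ n - 1) 1 = 2 ^ n := by
    rw [hs _ (by omega) (by omega)]
    omega
  intro q
  induction q with
  | zero => omega
  | succ q ih =>
    intro hq1 hqN
    rcases Nat.eq_zero_or_pos q with hq | hq
    · subst hq; exact hone
    · rw [← hs q hq (by omega), hl _ q (by omega) (by omega) hq (by omega),
        ih hq (by omega), hone, top_row h' _ Nat.one_le_two_pow le_rfl]

/-- every non-`2^(n-1)` element reaches `2^(n-1)` in one step -/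
lemma reach_half {n : ℕ} {op : ℕ → ℕ → ℕ} (h : IsLaverOp n op) (hn : 2 ≤ n) :
    ∀ p, 1 ≤ p → p < 2 ^ n → p ≠ 2 ^ (n - 1) →
    ∃ a, 1 ≤ a ∧ a < 2 ^ n ∧ op a p = 2 ^ (n - 1) := by
  have hn1 : 1 ≤ n := by omega
  have hH := two_pow_pred hn1
  have hQ := two_pow_pred2 hn
  intro p hp1 hpN hpH
  obtain ⟨e, he1, he2⟩ := exists_val2 p hp1
  have helt : e < n := by
    by_contra hcon
    push_neg at hcon
    have : (2 : ℕ) ^ n ≤ 2 ^ e := Nat.pow_le_pow_right (by norm_num) hcon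
    omega
  have hene : e ≠ n - 1 := by
    intro hcon
    rw [hcon, show n - 1 + 1 = n by omega, Nat.mod_eq_of_lt hpN] at he2
    exact hpH he2
  have he : e ≤ n - 2 := by omega
  have he2' : (2 : ℕ) ^ e ≤ 2 ^ (n - 2) := Nat.pow_le_pow_right (by norm_num) (by omega)
  refine ⟨2 ^ (n - 1) - 2 ^ e, by omega, by omega, ?_⟩
  exact ze_full h hn he p hp1 (by omega) he2

end LaverWork

open LaverWork

/-- For `n ≥ 2` and `p < 2^n` with `p ≠ 2^(n-1)`, one has
`p ⊑_n 2^n − 2^(n-2) ⊑_n 2^(n-1) ⊑_n 2^n`. -/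
theorem laver_before_tail (n : ℕ) (hn : 2 ≤ n) (op : ℕ → ℕ → ℕ) (h : IsLaverOp n op)
    (p : ℕ) (hp1 : 1 ≤ p) (hp2 : p ≤ 2 ^ n - 1) (hp3 : p ≠ 2 ^ (n - 1)) :
    laverBefore n op p (2 ^ n - 2 ^ (n - 2)) ∧
    laverBefore n op (2 ^ n - 2 ^ (n - 2)) (2 ^ (n - 1)) ∧
    laverBefore n op (2 ^ (n - 1)) (2 ^ n) := by
  have hn1 : 1 ≤ n := by omega
  have hH := two_pow_pred hn1
  have hQ := two_pow_pred2 hn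
  have hQpos : (1 : ℕ) ≤ 2 ^ (n - 2) := Nat.one_le_two_pow
  obtain ⟨hr, hs, ht, hl⟩ := h
  have h' : IsLaverOp n op := ⟨hr, hs, ht, hl⟩
  refine ⟨?_, ?_, ?_⟩
  · -- p ⊑ 2^n - 2^(n-2)
    obtain ⟨e, he1, he2⟩ := exists_val2 p hp1
    have helt : e < n := by
      by_contra hcon
      push_neg at hcon
      have : (2 : ℕ) ^ n ≤ 2 ^ e := Nat.pow_le_pow_right (by norm_num) hcon
      omega
    have hene : e ≠ n - 1 := by
      intro hcon
      rw [hcon, show n - 1 + 1 = n by omega, Nat.mod_eq_of_lt (by omega)] at he2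
      exact hp3 he2
    have he : e ≤ n - 2 := by omega
    have he2' : (2 : ℕ) ^ e ≤ 2 ^ (n - 2) := Nat.pow_le_pow_right (by norm_num) (by omega)
    -- reduce p modulo 2^(n-1)
    have hmod : p % 2 ^ (n - 1) % 2 ^ (e + 1) = 2 ^ e := by
      rw [Nat.mod_mod_of_dvd p (pow_dvd_pow 2 (by omega : e + 1 ≤ n - 1))]
      exact he2
    have hub : p % 2 ^ (n - 1) ≤ p := Nat.mod_le _ _
    have hmodlt : p % 2 ^ (n - 1) < 2 ^ (n - 1) := Nat.mod_lt _ (by omega)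
    have hmodge : 2 ^ e ≤ p % 2 ^ (n - 1) := by
      have := Nat.mod_le (p % 2 ^ (n - 1)) (2 ^ (e + 1))
      omega
    have hp0 : p % 2 ^ (n - 1) = p ∨ p % 2 ^ (n - 1) = p - 2 ^ (n - 1) := by
      rcases Nat.lt_or_ge p (2 ^ (n - 1)) with hc | hc
      · exact Or.inl (Nat.mod_eq_of_lt hc)
      · right
        rw [Nat.mod_eq_sub_mod hc]
        exact Nat.mod_eq_of_lt (by omega)
    rcases eq_or_lt_of_le he with heq | hlt
    · -- e = n - 2 : p ≡ 2^(n-2) mod 2^(n-1), witness 2^(n-1)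
      have hmod' : p % 2 ^ (n - 1) = 2 ^ (n - 2) := by
        rw [show n - 1 = e + 1 by omega, he2, heq]
      have hcases : p = 2 ^ (n - 2) ∨ p = 2 ^ (n - 1) + 2 ^ (n - 2) := by omega
      refine ⟨2 ^ (n - 1), Nat.one_le_two_pow, by omega, ?_⟩
      have hrowQ : op (2 ^ (n - 1)) (2 ^ (n - 2)) = 2 ^ (n - 1) + 2 ^ (n - 2) :=
        row_half h' hn1 (2 ^ (n - 2)) hQpos (by omega)
      rcases hcases with hc | hc
      · rw [hc, hrowQ]; omega
      · have hrowH : op (2 ^ (n - 1)) (2 ^ (n - 1)) = 2 ^ n := by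
          rw [row_half h' hn1 (2 ^ (n - 1)) Nat.one_le_two_pow le_rfl]; omega
        have := restart h' (2 ^ (n - 1)) Nat.one_le_two_pow (by omega) (2 ^ (n - 1))
          Nat.one_le_two_pow hrowH (2 ^ (n - 2)) hQpos (by omega)
        rw [hc, this, hrowQ]
        omega
    · -- e < n - 2, so n ≥ 3; use the derived table
      have hn3 : 3 ≤ n := by omega
      have hn' : 2 ≤ n - 1 := by omega
      have hQ' : (2:ℕ) ^ (n - 1) = 2 * 2 ^ (n - 2) := by omega
      have hp0ne : p % 2 ^ (n - 1) ≠ 2 ^ (n - 1 - 1) := by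
        rw [show n - 1 - 1 = n - 2 by omega]
        intro hcon
        have h0 : (2:ℕ) ^ (n - 2) % 2 ^ (e + 1) = 0 := by
          have hd : (2:ℕ) ^ (e + 1) ∣ 2 ^ (n - 2) := pow_dvd_pow 2 (by omega : e + 1 ≤ n - 2)
          omega
        rw [hcon, h0] at hmod
        have : (1:ℕ) ≤ 2 ^ e := Nat.one_le_two_pow
        omega
      obtain ⟨b, hb1, hb2, hb3⟩ := reach_half (derived_isLaver h' hn1) hn'
        (p % 2 ^ (n - 1)) (by omega) hmodlt hp0ne
      have hb3' : opD (2 ^ (n - 1)) op b (p % 2 ^ (n - 1)) = 2 ^ (n - 2) := by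
        rw [hb3, show n - 1 - 1 = n - 2 by omega]
      have hWgt : 2 ^ (n - 1) + b < op (2 ^ (n - 1) + b) (p % 2 ^ (n - 1)) :=
        lt_op h' _ (by omega) (by omega) _ (by omega) (by omega)
      have hWr := hr (2 ^ (n - 1) + b) (p % 2 ^ (n - 1)) (by omega) (by omega)
        (by omega) (by omega)
      have hval : lpi (2 ^ (n - 1)) (op (2 ^ (n - 1) + b) (p % 2 ^ (n - 1))) = 2 ^ (n - 2) := by
        rw [← hb3']
        rfl
      rw [lpi_high (by omega)] at hval
      have hfinal : op (2 ^ (n - 1) + b) (p % 2 ^ (n - 1)) = 2 ^ n - 2 ^ (n - 2) := by omega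
      rcases hp0 with hc | hc
      · refine ⟨2 ^ (n - 1) + b, by omega, by omega, ?_⟩
        rw [hc] at hfinal
        exact hfinal
      · have hpge : 2 ^ (n - 1) + 1 ≤ p := by omega
        have hshift := (high_row h' hn1 (2 ^ (n - 1) + b) (by omega) (by omega)).2
          (p % 2 ^ (n - 1)) (by omega) (by omega)
        refine ⟨2 ^ (n - 1) + b, by omega, by omega, ?_⟩
        rw [show p = 2 ^ (n - 1) + p % 2 ^ (n - 1) by omega, hshift]
        exact hfinal
  · -- 2^n - 2^(n-2) ⊑ 2^(n-1)
    refine ⟨2 ^ (n - 2), hQpos, by omega, ?_⟩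
    have := ze_full h' hn (le_refl (n - 2)) (2 ^ n - 2 ^ (n - 2)) (by omega) (by omega) ?_
    · rw [show 2 ^ (n - 1) - 2 ^ (n - 2) = 2 ^ (n - 2) by omega] at this
      exact this
    · rw [show n - 2 + 1 = n - 1 by omega,
        show 2 ^ n - 2 ^ (n - 2) = 2 ^ (n - 1) + 2 ^ (n - 2) by omega,
        Nat.add_mod_left, Nat.mod_eq_of_lt (by omega)]
  · -- 2^(n-1) ⊑ 2^n
    refine ⟨2 ^ n - 1, by omega, by omega, ?_⟩
    exact last_row h' hn1 (2 ^ (n - 1)) Nat.one_le_two_pow (by omega)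
end
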